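/- arXiv:1110.1986 — 10 statements merged into one kernel-verified Lean document; each statement's English description precedes it below -/
import Mathlib

section
/- Let G and G' be two regression graphs on the same finite node set N having the same skeleton (i.e., the same set of unordered node pairs joined by an edge, irrespective of edge type). Then G and G' are Markov equivalent — that is, for all disjoint subsets a, b, c of N, G has no active path between a and b given c exactly when G' has none — if and only if G and G' have identical sets of collision V-configurations. -/
/-- A regression graph on node set `N`: the nodes are partitioned into ordered
connected components (indexed by `comp`), response components coming before
(i.e. having smaller index than) context components; dashed lines join distinct
response nodes in a common component, full lines join distinct context nodes in
a common component, and an arrow `i ⟵ k` (recorded as `arrow i k`) points from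
a node `k` in a strictly later component to a response node `i`. -/
structure RegressionGraph (N : Type) where
  /-- index of the connected component of a node (smaller = earlier) -/
  comp : N → ℕ
  /-- whether a node is a context node -/
  isContext : N → Prop
  /-- dashed lines (joint responses) -/
  dashed : N → N → Prop
  /-- full lines (context variables) -/
  full : N → N → Prop
  /-- `arrow i k` : an arrow `i ⟵ k` pointing from `k` to the response node `i` -/
  arrow : N → N → Prop
  dashed_symm : ∀ i k, dashed i k → dashed k i
  full_symm : ∀ i k, full i k → full k i
  dashed_ne : ∀ i k, dashed i k → i ≠ k
  full_ne : ∀ i k, full i k → i ≠ k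
  dashed_resp : ∀ i k, dashed i k → ¬ isContext i ∧ ¬ isContext k ∧ comp i = comp k
  full_ctx : ∀ i k, full i k → isContext i ∧ isContext k ∧ comp i = comp k
  arrow_resp : ∀ i k, arrow i k → ¬ isContext i ∧ comp i < comp k
  context_last : ∀ i k, ¬ isContext i → isContext k → comp i < comp k

namespace RegressionGraph

variable {N : Type} (G : RegressionGraph N)

/-- Two nodes are adjacent (coupled) if they are joined by one of the three types of edge. -/
def Adj (i k : N) : Prop :=
  G.dashed i k ∨ G.full i k ∨ G.arrow i k ∨ G.arrow k i

/-- The edge between `x` and `o` has an arrowhead at `o`: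
it is an arrow pointing to `o` or a dashed line with endpoint `o`. -/
def ArrowheadAt (x o : N) : Prop := G.arrow o x ∨ G.dashed x o

/-- `q` is anterior to `i`: there is a direction-preserving sequence of arrows
`i ⟵ ... ⟵ p` followed by a sequence of full lines `p — ... — q`
(either part possibly empty). -/
def Anterior (i q : N) : Prop :=
  ∃ p, Relation.ReflTransGen G.arrow i p ∧ Relation.ReflTransGen G.full p q

/-- `ant c`: the nodes outside `c` that are anterior to some node of `c`. -/
def antSet (c : Set N) : Set N := {q | q ∉ c ∧ ∃ i ∈ c, G.Anterior i q}

/-- The inner node `f t` of a path `f 0, f 1, ..., f m` is a collision node: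
both adjacent edges have an arrowhead at it. -/
def IsCollisionAt (f : ℕ → N) (t : ℕ) : Prop :=
  G.ArrowheadAt (f (t - 1)) (f t) ∧ G.ArrowheadAt (f (t + 1)) (f t)

/-- `f 0, f 1, ..., f m` is an active path between `a` and `b` given `c`:
it is a path (distinct nodes, consecutive nodes coupled) with one endpoint in `a`,
the other in `b`, every inner collision node in `c ∪ ant c` and every inner
transmitting node outside `c`. -/
def IsActivePath (a b c : Set N) (f : ℕ → N) (m : ℕ) : Prop :=
  1 ≤ m ∧
  (∀ s ≤ m, ∀ t ≤ m, f s = f t → s = t) ∧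
  (∀ t < m, G.Adj (f t) (f (t + 1))) ∧
  f 0 ∈ a ∧ f m ∈ b ∧
  (∀ t, 0 < t → t < m →
    (G.IsCollisionAt f t → f t ∈ c ∪ G.antSet c) ∧
    (¬ G.IsCollisionAt f t → f t ∉ c))

/-- There is no active path between `a` and `b` given `c`. -/
def ActivePathFree (a b c : Set N) : Prop :=
  ¬ ∃ (f : ℕ → N) (m : ℕ), G.IsActivePath a b c f m

/-- `(i, o, k)` is a collision V-configuration: a three-node path whose endpoints
are uncoupled and whose two edges both have an arrowhead at the inner node `o`. -/
def IsCollisionV (i o k : N) : Prop :=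
  G.Adj i o ∧ G.Adj o k ∧ i ≠ k ∧ ¬ G.Adj i k ∧
    G.ArrowheadAt i o ∧ G.ArrowheadAt k o

/-- `(i, o, k)` is a transmitting V-configuration: a three-node path whose endpoints
are uncoupled which is not a collision V. -/
def IsTransmittingV (i o k : N) : Prop :=
  G.Adj i o ∧ G.Adj o k ∧ i ≠ k ∧ ¬ G.Adj i k ∧
    ¬ (G.ArrowheadAt i o ∧ G.ArrowheadAt k o)

end RegressionGraph
namespace RegressionGraph

variable {N : Type} {G : RegressionGraph N}

lemma arrow_adj {i k : N} (h : G.arrow i k) : G.Adj i k := Or.inr (Or.inr (Or.inl h))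

lemma adj_symm {i k : N} (h : G.Adj i k) : G.Adj k i := by
  rcases h with h | h | h | h
  · exact Or.inl (G.dashed_symm _ _ h)
  · exact Or.inr (Or.inl (G.full_symm _ _ h))
  · exact Or.inr (Or.inr (Or.inr h))
  · exact Or.inr (Or.inr (Or.inl h))

lemma adj_ne {i k : N} (h : G.Adj i k) : i ≠ k := by
  rcases h with h | h | h | h
  · exact G.dashed_ne _ _ h
  · exact G.full_ne _ _ h
  · exact fun e => absurd ((G.arrow_resp _ _ h).2) (by rw [e]; omega)
  · exact fun e => absurd ((G.arrow_resp _ _ h).2) (by rw [e]; omega)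

lemma head_resp {x o : N} (h : G.ArrowheadAt x o) : ¬ G.isContext o := by
  rcases h with h | h
  · exact (G.arrow_resp _ _ h).1
  · exact (G.dashed_resp _ _ h).2.1

lemma head_le {x o : N} (h : G.ArrowheadAt x o) : G.comp o ≤ G.comp x := by
  rcases h with h | h
  · exact le_of_lt (G.arrow_resp _ _ h).2
  · exact le_of_eq (G.dashed_resp _ _ h).2.2.symm

lemma head_adj {x o : N} (h : G.ArrowheadAt x o) : G.Adj x o := by
  rcases h with h | h
  · exact Or.inr (Or.inr (Or.inr h))
  · exact Or.inl h

/-- key: a response node with smaller comp adjacent to `x` receives an arrow from `x`. -/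
lemma arrow_of {x o : N} (hadj : G.Adj x o) (ho : ¬ G.isContext o)
    (hlt : G.comp o < G.comp x) : G.arrow o x := by
  rcases hadj with h | h | h | h
  · exact absurd (G.dashed_resp _ _ h).2.2 (by omega)
  · exact absurd (G.full_ctx _ _ h).2.1 ho
  · exact absurd (G.arrow_resp _ _ h).2 (by omega)
  · exact h

/-- a node adjacent to a response node of larger comp is itself a response node. -/
lemma resp_of_edge_lt {x o : N} (hadj : G.Adj x o) (ho : ¬ G.isContext o)
    (hlt : G.comp x < G.comp o) : ¬ G.isContext x := by
  intro hx
  exact absurd (G.context_last o x ho hx) (by omega)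

/-- characterization of arrowheads along an edge. -/
lemma head_iff {x o : N} (hadj : G.Adj x o) :
    G.ArrowheadAt x o ↔ (¬ G.isContext o ∧ G.comp o ≤ G.comp x) := by
  constructor
  · intro h; exact ⟨head_resp h, head_le h⟩
  · rintro ⟨ho, hle⟩
    rcases hadj with h | h | h | h
    · exact Or.inr h
    · exact absurd (G.full_ctx _ _ h).2.1 ho
    · exact absurd (G.arrow_resp _ _ h).2 (by omega)
    · exact Or.inl h

lemma head_of {x o : N} (hadj : G.Adj x o) (ho : ¬ G.isContext o)
    (hle : G.comp o ≤ G.comp x) : G.ArrowheadAt x o := (head_iff hadj).2 ⟨ho, hle⟩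

lemma not_head_of_lt {x o : N} (hlt : G.comp x < G.comp o) : ¬ G.ArrowheadAt x o := by
  intro h; exact absurd (head_le h) (by omega)

/-- on an edge with no arrowhead at `z`, with `z` a response node: the edge is an
arrow out of `z` into `n`, and `n` is a response node of smaller comp. -/
lemma arrow_out_of_not_head {n z : N} (hadj : G.Adj n z) (hz : ¬ G.isContext z)
    (hnh : ¬ G.ArrowheadAt n z) :
    G.arrow n z ∧ ¬ G.isContext n ∧ G.comp n < G.comp z := by
  have hlt : G.comp z ≤ G.comp n → False := fun hle => hnh (head_of hadj hz hle)
  have hlt' : G.comp n < G.comp z := by by_contra h; exact hlt (by omega)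
  have hn : ¬ G.isContext n := resp_of_edge_lt hadj hz hlt'
  exact ⟨arrow_of (adj_symm hadj) hn hlt', hn, hlt'⟩

/-! ### anterior machinery -/

/-- single anterior step -/
def Astep (G : RegressionGraph N) (x y : N) : Prop := G.arrow x y ∨ G.full x y

lemma astep_adj {x y : N} (h : G.Astep x y) : G.Adj x y := by
  rcases h with h | h
  · exact Or.inr (Or.inr (Or.inl h))
  · exact Or.inr (Or.inl h)

lemma astep_comp_le {x y : N} (h : G.Astep x y) : G.comp x ≤ G.comp y := by
  rcases h with h | h
  · exact le_of_lt (G.arrow_resp _ _ h).2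
  · exact le_of_eq (G.full_ctx _ _ h).2.2

lemma rtg_full_of_resp {p q : N} (h : Relation.ReflTransGen G.full p q)
    (hq : ¬ G.isContext q) : p = q := by
  rcases Relation.ReflTransGen.cases_tail h with h | ⟨y, _, hy⟩
  · exact h.symm ▸ rfl
  · exact absurd (G.full_ctx _ _ hy).2.1 hq

lemma anterior_iff_rtg {i q : N} :
    G.Anterior i q ↔ Relation.ReflTransGen G.Astep i q := by
  constructor
  · rintro ⟨p, h1, h2⟩
    exact Relation.ReflTransGen.trans
      (Relation.ReflTransGen.mono (fun a b h => Or.inl h) _ _ h1)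
      (Relation.ReflTransGen.mono (fun a b h => Or.inr h) _ _ h2)
  · intro h
    induction h with
    | refl => exact ⟨i, Relation.ReflTransGen.refl, Relation.ReflTransGen.refl⟩
    | tail hs hstep ih =>
      rename_i y q
      rcases ih with ⟨p, h1, h2⟩
      rcases hstep with hstep | hstep
      · have : ¬ G.isContext y := (G.arrow_resp _ _ hstep).1
        have hp : p = y := rtg_full_of_resp h2 this
        exact ⟨q, (hp ▸ h1).tail hstep, Relation.ReflTransGen.refl⟩
      · exact ⟨p, h1, h2.tail hstep⟩

lemma anterior_trans {i q r : N} (h1 : G.Anterior i q) (h2 : G.Anterior q r) :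
    G.Anterior i r := by
  rw [anterior_iff_rtg] at *
  exact h1.trans h2

lemma anterior_of_arrow_rtg {i q : N} (h : Relation.ReflTransGen G.arrow i q) :
    G.Anterior i q := ⟨q, h, Relation.ReflTransGen.refl⟩

lemma anterior_comp_le {i q : N} (h : G.Anterior i q) : G.comp i ≤ G.comp q := by
  rw [anterior_iff_rtg] at h
  induction h with
  | refl => exact le_refl _
  | tail _ hstep ih => exact le_trans ih (astep_comp_le hstep)

/-- anterior chain into a response node consists purely of arrows -/
lemma anterior_resp_arrows {i q : N} (h : G.Anterior i q) (hq : ¬ G.isContext q) :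
    Relation.ReflTransGen G.arrow i q := by
  rcases h with ⟨p, h1, h2⟩
  rwa [rtg_full_of_resp h2 hq] at h1

lemma rtg_arrow_comp_lt {i q : N} (h : Relation.ReflTransGen G.arrow i q) :
    i = q ∨ G.comp i < G.comp q := by
  induction h with
  | refl => exact Or.inl rfl
  | tail _ hstep ih =>
    right
    rcases ih with rfl | ih
    · exact (G.arrow_resp _ _ hstep).2
    · exact lt_trans ih (G.arrow_resp _ _ hstep).2

lemma anterior_comp_lt {i q : N} (h : G.Anterior i q) (hq : ¬ G.isContext q)
    (hne : i ≠ q) : G.comp i < G.comp q := by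
  rcases rtg_arrow_comp_lt (anterior_resp_arrows h hq) with rfl | h
  · exact absurd rfl hne
  · exact h

lemma mem_antSet {c : Set N} {q : N} (hq : q ∉ c) {i : N} (hi : i ∈ c)
    (h : G.Anterior i q) : q ∈ G.antSet c := ⟨hq, i, hi, h⟩

/-- if `z` lies in `c ∪ ant c` and there is an arrow chain from `z` to `o`, then
`o ∈ c ∪ ant c`; in particular `o ∈ ant c` when `o ∉ c`. -/
lemma ant_of_chain {c : Set N} {z o : N} (hz : z ∈ c ∪ G.antSet c)
    (hchain : Relation.ReflTransGen G.arrow z o) (ho : o ∉ c) : o ∈ G.antSet c := by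
  rcases hz with hz | ⟨hz, i, hi, hanto⟩
  · exact mem_antSet ho hz (anterior_of_arrow_rtg hchain)
  · rcases Relation.ReflTransGen.cases_head hchain with rfl | ⟨w, hstep, _⟩
    · exact ⟨ho, i, hi, hanto⟩
    · have hzresp : ¬ G.isContext z := (G.arrow_resp _ _ hstep).1
      have : Relation.ReflTransGen G.arrow i z := anterior_resp_arrows hanto hzresp
      exact mem_antSet ho hi (anterior_of_arrow_rtg (this.trans hchain))

end RegressionGraph

namespace RegressionGraph

variable {N : Type} {G : RegressionGraph N}

/-- collision status of the middle node of a consecutive triple -/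
def Coll (G : RegressionGraph N) (x o y : N) : Prop :=
  G.ArrowheadAt x o ∧ G.ArrowheadAt y o

/-- the activeness condition at an inner node with neighbours `x`, `y` -/
def Ok (G : RegressionGraph N) (c : Set N) (x o y : N) : Prop :=
  (G.Coll x o y → o ∈ c ∪ G.antSet c) ∧ (¬ G.Coll x o y → o ∉ c)

/-- a loose walk: like an active path but without requiring distinct nodes -/
def IsLooseWalk (G : RegressionGraph N) (a b c : Set N) (f : ℕ → N) (m : ℕ) : Prop :=
  1 ≤ m ∧ (∀ t < m, G.Adj (f t) (f (t + 1))) ∧ f 0 ∈ a ∧ f m ∈ b ∧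
  ∀ t, 0 < t → t < m → G.Ok c (f (t - 1)) (f t) (f (t + 1))

/-- measure for walks -/
def mu (G : RegressionGraph N) (f : ℕ → N) (m : ℕ) : ℕ :=
  ∑ t ∈ Finset.range (m + 1), (G.comp (f t) + 1)

lemma coll_symm {x o y : N} (h : G.Coll x o y) : G.Coll y o x := ⟨h.2, h.1⟩

lemma ok_symm {c : Set N} {x o y : N} (h : G.Ok c x o y) : G.Ok c y o x :=
  ⟨fun hc => h.1 ⟨hc.2, hc.1⟩, fun hc => h.2 (fun hc' => hc ⟨hc'.2, hc'.1⟩)⟩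

lemma isActivePath_iff {a b c : Set N} {f : ℕ → N} {m : ℕ} :
    G.IsActivePath a b c f m ↔
      (∀ s ≤ m, ∀ t ≤ m, f s = f t → s = t) ∧ G.IsLooseWalk a b c f m := by
  constructor
  · rintro ⟨h1, h2, h3, h4, h5, h6⟩
    exact ⟨h2, h1, h3, h4, h5, fun t ht1 ht2 => (h6 t ht1 ht2 : _)⟩
  · rintro ⟨hinj, h1, h2, h3, h4, h5⟩
    exact ⟨h1, hinj, h2, h3, h4, fun t ht1 ht2 => h5 t ht1 ht2⟩

private lemma sum_cut_split {F : ℕ → ℕ} {p q m m' d : ℕ}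
    (h1 : p + 1 ≤ q) (h2 : q ≤ m) (hd : p + 1 + d = q) (hm' : m' + d = m) :
    ∑ u ∈ Finset.range (m' + 1), F (if u ≤ p then u else u + d)
      + ∑ u ∈ Finset.Ico (p + 1) q, F u
    = ∑ u ∈ Finset.range (m + 1), F u := by
  have e1 : ∑ u ∈ Finset.range (m' + 1), F (if u ≤ p then u else u + d)
      = ∑ u ∈ Finset.Ico 0 (p+1), F u + ∑ u ∈ Finset.Ico q (m+1), F u := by
    rw [Finset.range_eq_Ico,
      ← Finset.sum_Ico_consecutive _ (Nat.zero_le (p+1)) (show p+1 ≤ m'+1 by omega)]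
    congr 1
    · exact Finset.sum_congr rfl (fun u hu => by
        rw [Finset.mem_Ico] at hu
        rw [if_pos (by omega)])
    · rw [Finset.sum_Ico_eq_sum_range, Finset.sum_Ico_eq_sum_range]
      have hn : m' + 1 - (p+1) = m + 1 - q := by omega
      rw [hn]
      exact Finset.sum_congr rfl (fun i _ => by
        rw [if_neg (by omega)]
        congr 1
        omega)
  rw [e1, Finset.range_eq_Ico,
    ← Finset.sum_Ico_consecutive F (Nat.zero_le (p+1)) (show p+1 ≤ m+1 by omega),
    ← Finset.sum_Ico_consecutive F (show p+1 ≤ q by omega) (show q ≤ m+1 by omega)]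
  ring

lemma mu_apply_ite {f : ℕ → N} {m' p d : ℕ} :
    G.mu (fun u => if u ≤ p then f u else f (u + d)) m'
      = ∑ u ∈ Finset.range (m' + 1), (fun u => G.comp (f u) + 1) (if u ≤ p then u else u + d) := by
  unfold mu
  exact Finset.sum_congr rfl (fun u _ => by by_cases h : u ≤ p <;> simp [h])

/-- Splice a walk: cut out the nodes strictly between positions `p` and `q`, using
an edge from `f p` to `f q`. -/
lemma spliceCut {a b c : Set N} {f : ℕ → N} {m : ℕ}
    (hw : G.IsLooseWalk a b c f m) {p q : ℕ}
    (hpq : p + 2 ≤ q) (hqm : q ≤ m)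
    (hadj : G.Adj (f p) (f q))
    (hokp : 0 < p → G.Ok c (f (p - 1)) (f p) (f q))
    (hokq : q < m → G.Ok c (f p) (f q) (f (q + 1))) :
    ∃ g m', G.IsLooseWalk a b c g m' ∧ G.mu g m' < G.mu f m := by
  obtain ⟨hm, hadjw, ha, hb, hok⟩ := hw
  set d := q - p - 1 with hd
  set m' := m - d with hm'
  refine ⟨fun u => if u ≤ p then f u else f (u + d), m', ?_, ?_⟩
  · set g : ℕ → N := fun u => if u ≤ p then f u else f (u + d) with hg
    have hglow : ∀ u, u ≤ p → g u = f u := fun u hu => by simp only [hg, if_pos hu]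
    have hghigh : ∀ u, p < u → g u = f (u + d) := fun u hu => by
      simp only [hg, if_neg (by omega : ¬ u ≤ p)]
    have hgq : g (p + 1) = f q := by rw [hghigh _ (by omega)]; congr 1; omega
    refine ⟨by omega, ?_, ?_, ?_, ?_⟩
    · intro t ht
      rcases lt_trichotomy t p with h | rfl | h
      · rw [hglow _ (by omega), hglow _ (by omega)]
        exact hadjw t (by omega)
      · rw [hglow _ (le_refl _), hgq]; exact hadj
      · rw [hghigh _ h, hghigh _ (by omega)]
        have e : t + 1 + d = t + d + 1 := by omega
        rw [e]
        exact hadjw _ (by omega)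
    · rw [hglow _ (by omega)]; exact ha
    · rw [hghigh _ (by omega)]
      have e : m' + d = m := by omega
      rw [e]; exact hb
    · intro t ht1 ht2
      rcases lt_trichotomy t p with h | rfl | h
      · rw [hglow _ (by omega), hglow _ (by omega), hglow _ (by omega)]
        exact hok t ht1 (by omega)
      · rw [hglow _ (by omega), hglow _ (le_refl _), hgq]
        exact hokp ht1
      · rcases eq_or_lt_of_le (Nat.succ_le_of_lt h) with h' | h'
        · rw [← h', hgq, hglow _ (by omega), hghigh _ (by omega)]
          have e1 : p + 1 - 1 = p := by omega
          have e2 : p + 1 + 1 + d = q + 1 := by omega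
          rw [e1, e2]
          exact hokq (by omega)
        · rw [hghigh _ (by omega), hghigh _ (by omega), hghigh _ (by omega)]
          have e1 : t - 1 + d = t + d - 1 := by omega
          have e2 : t + 1 + d = t + d + 1 := by omega
          rw [e1, e2]
          exact hok (t + d) (by omega) (by omega)
  · rw [mu_apply_ite]
    have key : (∑ u ∈ Finset.range (m' + 1),
          (fun u => G.comp (f u) + 1) (if u ≤ p then u else u + d))
          + ∑ u ∈ Finset.Ico (p + 1) q, (G.comp (f u) + 1) = G.mu f m :=
      sum_cut_split (F := fun u => G.comp (f u) + 1)
        (p := p) (q := q) (m := m) (m' := m') (d := d)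
        (by omega) hqm (by omega) (by omega)
    have hpos : 0 < ∑ u ∈ Finset.Ico (p + 1) q, (G.comp (f u) + 1) :=
      Finset.sum_pos (fun i _ => by omega) (by rw [Finset.nonempty_Ico]; omega)
    omega

private lemma sum_ins_split {F : ℕ → ℕ} {w : ℕ} {p q m m' d : ℕ}
    (h1 : p + 2 ≤ q) (h2 : q ≤ m) (hd : p + 2 + d = q) (hm' : m' + d = m) :
    ∑ u ∈ Finset.range (m' + 1), (if u ≤ p then F u else if u = p + 1 then w else F (u + d))
      + ∑ u ∈ Finset.Ico (p + 1) q, F u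
    = ∑ u ∈ Finset.range (m + 1), F u + w := by
  have e1 : ∑ u ∈ Finset.range (m' + 1),
        (if u ≤ p then F u else if u = p + 1 then w else F (u + d))
      = (∑ u ∈ Finset.Ico 0 (p+1), F u + w) + ∑ u ∈ Finset.Ico q (m+1), F u := by
    rw [Finset.range_eq_Ico,
      ← Finset.sum_Ico_consecutive _ (Nat.zero_le (p+2)) (show p+2 ≤ m'+1 by omega)]
    congr 1
    · rw [show p + 2 = (p+1) + 1 by omega, Finset.sum_Ico_succ_top (by omega)]
      congr 1
      · exact Finset.sum_congr rfl (fun u hu => by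
          rw [Finset.mem_Ico] at hu
          rw [if_pos (by omega)])
      · rw [if_neg (by omega), if_pos rfl]
    · rw [Finset.sum_Ico_eq_sum_range, Finset.sum_Ico_eq_sum_range]
      have hn : m' + 1 - (p+2) = m + 1 - q := by omega
      rw [hn]
      exact Finset.sum_congr rfl (fun i _ => by
        rw [if_neg (by omega), if_neg (by omega)]
        congr 1
        omega)
  rw [e1, Finset.range_eq_Ico,
    ← Finset.sum_Ico_consecutive F (Nat.zero_le (p+1)) (show p+1 ≤ m+1 by omega),
    ← Finset.sum_Ico_consecutive F (show p+1 ≤ q by omega) (show q ≤ m+1 by omega)]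
  ring

/-- Splice a walk: replace the nodes strictly between positions `p` and `q` by the
single node `v`. -/
lemma spliceIns {a b c : Set N} {f : ℕ → N} {m : ℕ}
    (hw : G.IsLooseWalk a b c f m) {p q : ℕ} (v : N)
    (hpq : p + 2 ≤ q) (hqm : q ≤ m)
    (hadj1 : G.Adj (f p) v) (hadj2 : G.Adj v (f q))
    (hokp : 0 < p → G.Ok c (f (p - 1)) (f p) v)
    (hokv : G.Ok c (f p) v (f q))
    (hokq : q < m → G.Ok c v (f q) (f (q + 1)))
    (hmu : ∃ j, p < j ∧ j < q ∧ G.comp v < G.comp (f j)) :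
    ∃ g m', G.IsLooseWalk a b c g m' ∧ G.mu g m' < G.mu f m := by
  obtain ⟨hm, hadjw, ha, hb, hok⟩ := hw
  set d := q - p - 2 with hd
  set m' := m - d with hm'
  refine ⟨fun u => if u ≤ p then f u else if u = p + 1 then v else f (u + d), m', ?_, ?_⟩
  · set g : ℕ → N := fun u => if u ≤ p then f u else if u = p + 1 then v else f (u + d)
      with hg
    have hglow : ∀ u, u ≤ p → g u = f u := fun u hu => by simp only [hg, if_pos hu]
    have hgv : g (p + 1) = v := by
      simp only [hg]
      rw [if_neg (by omega : ¬ p + 1 ≤ p)]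
      simp
    have hghigh : ∀ u, p + 1 < u → g u = f (u + d) := fun u hu => by
      simp only [hg, if_neg (by omega : ¬ u ≤ p), if_neg (by omega : ¬ u = p + 1)]
    have hgq : g (p + 2) = f q := by rw [hghigh _ (by omega)]; congr 1; omega
    refine ⟨by omega, ?_, ?_, ?_, ?_⟩
    · intro t ht
      rcases lt_trichotomy t p with h | rfl | h
      · rw [hglow _ (by omega), hglow _ (by omega)]
        exact hadjw t (by omega)
      · rw [hglow _ (le_refl _), hgv]; exact hadj1
      · rcases eq_or_lt_of_le (Nat.succ_le_of_lt h) with h' | h'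
        · rw [← h', hgv, show p + 1 + 1 = p + 2 from rfl, hgq]; exact hadj2
        · rw [hghigh _ (by omega), hghigh _ (by omega)]
          have e : t + 1 + d = t + d + 1 := by omega
          rw [e]
          exact hadjw _ (by omega)
    · rw [hglow _ (by omega)]; exact ha
    · rw [hghigh _ (by omega)]
      have e : m' + d = m := by omega
      rw [e]; exact hb
    · intro t ht1 ht2
      rcases lt_trichotomy t p with h | rfl | h
      · rw [hglow _ (by omega), hglow _ (by omega), hglow _ (by omega)]
        exact hok t ht1 (by omega)
      · rw [hglow _ (by omega), hglow _ (le_refl _), hgv]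
        exact hokp ht1
      · rcases eq_or_lt_of_le (Nat.succ_le_of_lt h) with h' | h'
        · rw [← h', hgv, hglow _ (by omega), show p + 1 + 1 = p + 2 from rfl, hgq,
            show p + 1 - 1 = p by omega]
          exact hokv
        · rcases eq_or_lt_of_le (Nat.succ_le_of_lt h') with h'' | h''
          · rw [← h'', hgq, show p + 2 - 1 = p + 1 by omega, hgv, hghigh _ (by omega)]
            have e2 : p + 2 + 1 + d = q + 1 := by omega
            rw [e2]
            exact hokq (by omega)
          · rw [hghigh _ (by omega), hghigh _ (by omega), hghigh _ (by omega)]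
            have e1 : t - 1 + d = t + d - 1 := by omega
            have e2 : t + 1 + d = t + d + 1 := by omega
            rw [e1, e2]
            exact hok (t + d) (by omega) (by omega)
  · have emu : G.mu (fun u => if u ≤ p then f u else if u = p + 1 then v else f (u + d)) m'
        = ∑ u ∈ Finset.range (m' + 1),
          (if u ≤ p then G.comp (f u) + 1 else if u = p + 1 then G.comp v + 1
            else G.comp (f (u + d)) + 1) := by
      unfold mu
      exact Finset.sum_congr rfl (fun u _ => by
        by_cases h1 : u ≤ p
        · simp [h1]
        · by_cases h2 : u = p + 1 <;> simp [h1, h2])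
    rw [emu]
    have key : (∑ u ∈ Finset.range (m' + 1),
          (if u ≤ p then G.comp (f u) + 1 else if u = p + 1 then G.comp v + 1
            else G.comp (f (u + d)) + 1))
          + ∑ u ∈ Finset.Ico (p + 1) q, (G.comp (f u) + 1)
          = G.mu f m + (G.comp v + 1) :=
      sum_ins_split (F := fun u => G.comp (f u) + 1) (w := G.comp v + 1)
        (p := p) (q := q) (m := m) (m' := m') (d := d)
        hpq hqm (by omega) (by omega)
    obtain ⟨j, hj1, hj2, hj3⟩ := hmu
    have hjs : G.comp (f j) + 1 ≤ ∑ u ∈ Finset.Ico (p + 1) q, (G.comp (f u) + 1) :=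
      Finset.single_le_sum (f := fun u => G.comp (f u) + 1) (fun i _ => by omega)
        (by rw [Finset.mem_Ico]; omega)
    omega

end RegressionGraph

namespace RegressionGraph

variable {N : Type} {G : RegressionGraph N}

/-- scanning forward along tails from a would-be collision node: either we hit `c` or a
collision node (giving `o ∈ ant c`), or we would reach position `e` carrying `o` itself,
which is impossible as comps strictly decrease. -/
lemma ant_forward_scan {a b c : Set N} {f : ℕ → N} {m : ℕ}
    (hw : G.IsLooseWalk a b c f m) {o : N} {e : ℕ}
    (he : e ≤ m) (hfe : f e = o) (ho : o ∉ c) :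
    ∀ k j, e ≤ j + k → 0 < j → j < e →
      ¬ G.isContext (f j) → G.comp (f j) < G.comp o →
      Relation.ReflTransGen G.arrow (f j) o →
      G.ArrowheadAt (f (j - 1)) (f j) →
      o ∈ G.antSet c := by
  intro k
  induction k with
  | zero => intro j hjk _ hje; omega
  | succ k ih =>
    intro j hjk hj0 hje hresp hcomp hchain hhead
    by_cases hjc : f j ∈ c
    · exact ant_of_chain (Or.inl hjc) hchain ho
    · have hok := hw.2.2.2.2 j hj0 (by omega : j < m)
      by_cases hcol : G.Coll (f (j - 1)) (f j) (f (j + 1))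
      · exact ant_of_chain (hok.1 hcol) hchain ho
      · have hnh : ¬ G.ArrowheadAt (f (j + 1)) (f j) := fun h => hcol ⟨hhead, h⟩
        have hadj : G.Adj (f (j + 1)) (f j) := adj_symm (hw.2.1 j (by omega))
        obtain ⟨harr, hresp', hlt⟩ := arrow_out_of_not_head hadj hresp hnh
        rcases eq_or_lt_of_le (show j + 1 ≤ e by omega) with h | h
        · rw [h, hfe] at hlt
          omega
        · have hh : G.ArrowheadAt (f (j + 1 - 1)) (f (j + 1)) :=
            head_of (hw.2.1 j (by omega)) hresp' (le_of_lt hlt)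
          exact ih (j + 1) (by omega) (by omega) h hresp'
            (lt_trans hlt hcomp) (Relation.ReflTransGen.head harr hchain) hh

/-- cutting a loose walk at a repeated node yields a smaller loose walk. -/
lemma cut_repeat {a b c : Set N} {f : ℕ → N} {m : ℕ}
    (hw : G.IsLooseWalk a b c f m) (hne : f 0 ≠ f m)
    {s t : ℕ} (hst : s < t) (htm : t ≤ m) (heq : f s = f t) :
    ∃ g m', G.IsLooseWalk a b c g m' ∧ G.mu g m' < G.mu f m := by
  obtain ⟨hm, hadjw, ha, hb, hok⟩ := hw
  rcases Nat.eq_zero_or_pos s with rfl | hs0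
  · -- drop the prefix before t
    have htltm : t < m := by
      rcases eq_or_lt_of_le htm with rfl | h
      · exact absurd heq hne
      · exact h
    refine ⟨fun u => f (u + t), m - t, ⟨by omega, ?_, ?_, ?_, ?_⟩, ?_⟩
    · intro u hu
      show G.Adj (f (u + t)) (f (u + 1 + t))
      have e : u + 1 + t = u + t + 1 := by omega
      rw [e]
      exact hadjw (u + t) (by omega)
    · show f (0 + t) ∈ a
      rw [show (0:ℕ) + t = t from by omega, ← heq]
      exact ha
    · show f (m - t + t) ∈ b
      rw [show m - t + t = m from by omega]
      exact hb
    · intro u hu1 hu2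
      show G.Ok c (f (u - 1 + t)) (f (u + t)) (f (u + 1 + t))
      have e1 : u - 1 + t = u + t - 1 := by omega
      have e2 : u + 1 + t = u + t + 1 := by omega
      rw [e1, e2]
      exact hok (u + t) (by omega) (by omega)
    · have e1 : G.mu (fun u => f (u + t)) (m - t)
          = ∑ u ∈ Finset.Ico t (m + 1), (G.comp (f u) + 1) := by
        rw [Finset.sum_Ico_eq_sum_range, show m + 1 - t = m - t + 1 from by omega]
        exact Finset.sum_congr rfl (fun i _ => by
          show G.comp (f (i + t)) + 1 = G.comp (f (t + i)) + 1
          rw [Nat.add_comm i t])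
      have e2 : G.mu f m = ∑ u ∈ Finset.Ico 0 t, (G.comp (f u) + 1)
          + ∑ u ∈ Finset.Ico t (m + 1), (G.comp (f u) + 1) := by
        unfold mu
        rw [Finset.range_eq_Ico,
          ← Finset.sum_Ico_consecutive _ (Nat.zero_le t) (show t ≤ m + 1 from by omega)]
      have hpos : 0 < ∑ u ∈ Finset.Ico 0 t, (G.comp (f u) + 1) :=
        Finset.sum_pos (fun i _ => by omega) (by rw [Finset.nonempty_Ico]; omega)
      omega
  · rcases eq_or_lt_of_le htm with rfl | htm'
    · -- t = m : keep the prefix up to s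
      refine ⟨f, s, ⟨by omega, fun u hu => hadjw u (by omega), ha, by rw [heq]; exact hb,
        fun u hu1 hu2 => hok u hu1 (by omega)⟩, ?_⟩
      unfold mu
      have h1 : Finset.range (s+1) ⊆ Finset.range (t+1) := by
        intro x hx; rw [Finset.mem_range] at *; omega
      have h2 : t ∈ Finset.range (t+1) := by rw [Finset.mem_range]; omega
      have h3 : t ∉ Finset.range (s+1) := by rw [Finset.mem_range]; omega
      calc ∑ u ∈ Finset.range (s+1), (G.comp (f u) + 1)
          < ∑ u ∈ Finset.range (s+1), (G.comp (f u) + 1) + (G.comp (f t) + 1) := by omega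
        _ ≤ ∑ u ∈ Finset.range (t+1), (G.comp (f u) + 1) := by
            rw [Nat.add_comm, ← Finset.sum_insert (f := fun u => G.comp (f u) + 1) h3]
            exact Finset.sum_le_sum_of_subset (Finset.insert_subset h2 h1)
    · -- 0 < s, t < m : splice
      have hw' : G.IsLooseWalk a b c f m := ⟨hm, hadjw, ha, hb, hok⟩
      apply spliceCut hw' (p := s) (q := t + 1) (by omega) (by omega)
      · rw [heq]; exact hadjw t (by omega)
      · intro hs
        constructor
        · intro hcol
          by_cases hsc : f s ∈ c
          · exact Or.inl hsc
          · by_cases hcols : G.Coll (f (s - 1)) (f s) (f (s + 1))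
            · exact (hok s hs0 (by omega)).1 hcols
            · right
              have hnh : ¬ G.ArrowheadAt (f (s + 1)) (f s) := fun h => hcols ⟨hcol.1, h⟩
              have hresps : ¬ G.isContext (f s) := head_resp hcol.1
              have hadj : G.Adj (f (s + 1)) (f s) := adj_symm (hadjw s (by omega))
              obtain ⟨harr, hresp', hlt⟩ := arrow_out_of_not_head hadj hresps hnh
              rcases eq_or_lt_of_le (show s + 1 ≤ t by omega) with h | h
              · rw [h, ← heq] at hlt; omega
              · exact ant_forward_scan hw' (le_of_lt htm') heq.symm hsc
                  (t - s) (s + 1) (by omega) (by omega) h hresp' hlt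
                  (Relation.ReflTransGen.single harr)
                  (head_of (hadjw s (by omega)) hresp' (le_of_lt hlt))
        · intro hcol hsc
          have hcols : G.Coll (f (s - 1)) (f s) (f (s + 1)) := by
            by_contra h
            exact (hok s hs0 (by omega)).2 h hsc
          have hcolt : G.Coll (f (t - 1)) (f t) (f (t + 1)) := by
            by_contra h
            exact (hok t (by omega) (by omega)).2 h (heq ▸ hsc)
          exact hcol ⟨hcols.1, heq ▸ hcolt.2⟩
      · intro h
        have := hok (t + 1) (by omega) (by omega)
        simpa [heq, show t + 1 - 1 = t from rfl] using this

end RegressionGraph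

namespace RegressionGraph

variable {N : Type} {G : RegressionGraph N}

lemma exists_active_of_loose {a b c : Set N} (hab : Disjoint a b)
    (h : ∃ f m, G.IsLooseWalk a b c f m) : ∃ f m, G.IsActivePath a b c f m := by
  obtain ⟨f, m, hw⟩ := h
  suffices H : ∀ n (f : ℕ → N) (m : ℕ), G.mu f m ≤ n → G.IsLooseWalk a b c f m →
      ∃ f m, G.IsActivePath a b c f m from H (G.mu f m) f m (le_refl _) hw
  intro n
  induction n using Nat.strong_induction_on with
  | _ n ih =>
    intro f m hmu hw
    by_cases hrep : ∃ s t, s < t ∧ t ≤ m ∧ f s = f t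
    · obtain ⟨s, t, hst, ht, heq⟩ := hrep
      have hne : f 0 ≠ f m := fun h =>
        (Set.disjoint_left.mp hab hw.2.2.1) (by rw [h]; exact hw.2.2.2.1)
      obtain ⟨g, m', hw', hlt⟩ := cut_repeat hw hne hst ht heq
      exact ih (G.mu g m') (by omega) g m' (le_refl _) hw'
    · push_neg at hrep
      refine ⟨f, m, isActivePath_iff.2 ⟨?_, hw⟩⟩
      intro s hs t ht heq
      by_contra hne
      rcases lt_or_gt_of_ne hne with h | h
      · exact hrep s t h ht heq
      · exact hrep t s h hs heq.symm

lemma exists_loose_iff_active {a b c : Set N} (hab : Disjoint a b) :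
    (∃ f m, G.IsLooseWalk a b c f m) ↔ (∃ f m, G.IsActivePath a b c f m) :=
  ⟨exists_active_of_loose hab, fun ⟨f, m, h⟩ => ⟨f, m, (isActivePath_iff.1 h).2⟩⟩

lemma loose_reverse {a b c : Set N} {f : ℕ → N} {m : ℕ}
    (hw : G.IsLooseWalk a b c f m) : G.IsLooseWalk b a c (fun u => f (m - u)) m := by
  obtain ⟨hm, hadjw, ha, hb, hok⟩ := hw
  refine ⟨hm, ?_, ?_, ?_, ?_⟩
  · intro t ht
    show G.Adj (f (m - t)) (f (m - (t + 1)))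
    have e1 : m - t = (m - (t + 1)) + 1 := by omega
    rw [e1]
    exact adj_symm (hadjw (m - (t + 1)) (by omega))
  · show f (m - 0) ∈ b
    rw [Nat.sub_zero]; exact hb
  · show f (m - m) ∈ a
    rw [Nat.sub_self]; exact ha
  · intro t ht1 ht2
    show G.Ok c (f (m - (t - 1))) (f (m - t)) (f (m - (t + 1)))
    have e1 : m - (t - 1) = (m - t) + 1 := by omega
    have e2 : m - (t + 1) = (m - t) - 1 := by omega
    rw [e1, e2]
    exact ok_symm (hok (m - t) (by omega) (by omega))

lemma mu_reverse {f : ℕ → N} {m : ℕ} : G.mu (fun u => f (m - u)) m = G.mu f m := by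
  have h := Finset.sum_range_reflect (fun t => G.comp (f t) + 1) (m + 1)
  unfold mu
  rw [← h]
  exact Finset.sum_congr rfl (fun j hj =>
    congrArg (fun x => G.comp (f x) + 1) (by omega : m - j = m + 1 - 1 - j))

end RegressionGraph

namespace RegressionGraph

variable {N : Type} {G : RegressionGraph N}

lemma step_of_not_head {n z : N} (hadj : G.Adj n z) (hnh : ¬ G.ArrowheadAt n z) :
    G.Astep n z := by
  rcases hadj with h | h | h | h
  · exact absurd (Or.inr h) hnh
  · exact Or.inr h
  · exact Or.inl h
  · exact absurd (Or.inl h) hnh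

lemma anterior_of_astep {x y : N} (h : G.Astep x y) : G.Anterior x y :=
  anterior_iff_rtg.2 (Relation.ReflTransGen.single h)

lemma astep_asym {x y : N} (h1 : G.Astep x y) (h2 : G.Astep y x) : G.isContext x := by
  rcases h1 with h1 | h1
  · rcases h2 with h2 | h2
    · exact absurd ((G.arrow_resp _ _ h1).2) (by
        have := (G.arrow_resp _ _ h2).2; omega)
    · exact (G.full_ctx _ _ h2).2.1
  · exact (G.full_ctx _ _ h1).1

lemma antSet_antSet {S : Set N} : G.antSet (G.antSet S) ⊆ S := by
  rintro q ⟨hq, z, ⟨hz, e, he, hez⟩, hzq⟩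
  by_contra hqS
  exact hq ⟨hqS, e, he, anterior_trans hez hzq⟩

lemma collV_not_mem_antSet {i o k : N} (h1 : G.ArrowheadAt i o) (h2 : G.ArrowheadAt k o) :
    o ∉ G.antSet {i, k} := by
  rintro ⟨honc, e, he, heo⟩
  have hresp : ¬ G.isContext o := head_resp h1
  rcases he with rfl | rfl
  · have hne : e ≠ o := adj_ne (head_adj h1)
    have := anterior_comp_lt heo hresp hne
    have := head_le h1
    omega
  · have hne : e ≠ o := adj_ne (head_adj h2)
    have := anterior_comp_lt heo hresp hne
    have := head_le h2
    omega

theorem separator {i k : N} (hik : i ≠ k) (hnadj : ¬ G.Adj i k) :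
    G.ActivePathFree {i} {k} (G.antSet {i, k}) := by
  rintro ⟨f, m, hap⟩
  obtain ⟨hinj, hw⟩ := isActivePath_iff.1 hap
  obtain ⟨hm, hadjw, ha, hb, hok⟩ := hw
  have hfi : f 0 = i := Set.mem_singleton_iff.1 ha
  have hfk : f m = k := Set.mem_singleton_iff.1 hb
  have hm2 : 2 ≤ m := by
    rcases eq_or_lt_of_le hm with h | h
    · exfalso
      have := hadjw 0 (by omega)
      rw [hfi, show (0:ℕ)+1 = m from by omega, hfk] at this
      exact hnadj this
    · omega
  have hinner_ne : ∀ t, 0 < t → t < m → f t ∉ ({i, k} : Set N) := by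
    intro t ht0 htm h
    rcases h with h | h
    · rw [← hfi] at h
      have := hinj t (by omega) 0 (by omega) h
      omega
    · rw [← hfk] at h
      have := hinj t (by omega) m (by omega) h
      omega
  -- left-directed lemma
  have left : ∀ t, 0 < t → t ≤ m → ¬ G.ArrowheadAt (f (t - 1)) (f t) →
      ∃ e ∈ ({i, k} : Set N), G.Anterior e (f t) := by
    intro t
    induction t using Nat.strong_induction_on with
    | _ t ih =>
      intro ht0 htm hnh
      have hadj1 : G.Adj (f (t - 1)) (f t) := by
        have := hadjw (t - 1) (by omega)
        rwa [show t - 1 + 1 = t from by omega] at this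
      have hstep : G.Astep (f (t - 1)) (f t) := step_of_not_head hadj1 hnh
      rcases Nat.eq_or_lt_of_le (show 1 ≤ t from ht0) with h1 | h1
      · refine ⟨i, Or.inl rfl, ?_⟩
        rw [← hfi, show (0:ℕ) = t - 1 from by omega]
        exact anterior_of_astep hstep
      · -- t - 1 is inner
        have hokin := hok (t - 1) (by omega) (by omega)
        rw [show t - 1 - 1 = t - 2 from by omega, show t - 1 + 1 = t from by omega] at hokin
        by_cases hcol : G.Coll (f (t - 2)) (f (t - 1)) (f t)
        · rcases hokin.1 hcol with hc | hc
          · obtain ⟨_, e, he, hant⟩ := hc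
            exact ⟨e, he, anterior_trans hant (anterior_of_astep hstep)⟩
          · exact absurd (antSet_antSet hc) (hinner_ne (t - 1) (by omega) (by omega))
        · by_cases hl : G.ArrowheadAt (f (t - 2)) (f (t - 1))
          · exfalso
            have hnh2 : ¬ G.ArrowheadAt (f t) (f (t - 1)) := fun h => hcol ⟨hl, h⟩
            have hstep2 : G.Astep (f t) (f (t - 1)) :=
              step_of_not_head (adj_symm hadj1) hnh2
            exact head_resp hl (astep_asym hstep hstep2)
          · obtain ⟨e, he, hant⟩ := by
              refine ih (t - 1) (by omega) (by omega) (by omega) ?_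
              rwa [show t - 1 - 1 = t - 2 from by omega]
            exact ⟨e, he, anterior_trans hant (anterior_of_astep hstep)⟩
  -- right-directed lemma
  have right : ∀ d t, m ≤ t + d → t < m → ¬ G.ArrowheadAt (f (t + 1)) (f t) →
      ∃ e ∈ ({i, k} : Set N), G.Anterior e (f t) := by
    intro d
    induction d with
    | zero => intro t h1 h2; omega
    | succ d ih =>
      intro t htd htm hnh
      have hadj1 : G.Adj (f (t + 1)) (f t) := adj_symm (hadjw t htm)
      have hstep : G.Astep (f (t + 1)) (f t) := step_of_not_head hadj1 hnh
      rcases Nat.eq_or_lt_of_le (show t + 1 ≤ m from htm) with h1 | h1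
      · refine ⟨k, Or.inr rfl, ?_⟩
        rw [← hfk, ← h1]
        exact anterior_of_astep hstep
      · have hokin := hok (t + 1) (by omega) (by omega)
        rw [show t + 1 - 1 = t from by omega] at hokin
        by_cases hcol : G.Coll (f t) (f (t + 1)) (f (t + 1 + 1))
        · rcases hokin.1 hcol with hc | hc
          · obtain ⟨_, e, he, hant⟩ := hc
            exact ⟨e, he, anterior_trans hant (anterior_of_astep hstep)⟩
          · exact absurd (antSet_antSet hc) (hinner_ne (t + 1) (by omega) (by omega))
        · by_cases hr : G.ArrowheadAt (f (t + 1 + 1)) (f (t + 1))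
          · exfalso
            have hnh2 : ¬ G.ArrowheadAt (f t) (f (t + 1)) := fun h => hcol ⟨h, hr⟩
            have hstep2 : G.Astep (f t) (f (t + 1)) :=
              step_of_not_head (adj_symm hadj1) hnh2
            exact head_resp hr (astep_asym hstep hstep2)
          · obtain ⟨e, he, hant⟩ := ih (t + 1) (by omega) h1 hr
            exact ⟨e, he, anterior_trans hant (anterior_of_astep hstep)⟩
  -- every inner node is a collision node
  have hcoll : ∀ t, 0 < t → t < m → G.Coll (f (t - 1)) (f t) (f (t + 1)) := by
    intro t ht0 htm
    by_contra hcol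
    have hmem : f t ∈ G.antSet {i, k} := by
      rcases (show ¬ G.ArrowheadAt (f (t - 1)) (f t) ∨ ¬ G.ArrowheadAt (f (t + 1)) (f t)
        from by by_contra h; push_neg at h; exact hcol ⟨h.1, h.2⟩) with h | h
      · obtain ⟨e, he, hant⟩ := left t ht0 (by omega) h
        exact mem_antSet (hinner_ne t ht0 htm) he hant
      · obtain ⟨e, he, hant⟩ := right (m - t) t (by omega) htm h
        exact mem_antSet (hinner_ne t ht0 htm) he hant
    exact (hok t ht0 htm).2 hcol hmem
  -- endpoints comp contradiction
  have hin : ∀ t, 0 < t → t < m → f t ∈ G.antSet {i, k} := by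
    intro t ht0 htm
    rcases (hok t ht0 htm).1 (hcoll t ht0 htm) with h | h
    · exact h
    · exact absurd (antSet_antSet h) (hinner_ne t ht0 htm)
  obtain ⟨_, e1, he1, hant1⟩ := hin 1 (by omega) (by omega)
  obtain ⟨_, e2, he2, hant2⟩ := hin (m - 1) (by omega) (by omega)
  have hhead1 : G.ArrowheadAt (f 0) (f 1) := by
    have := (hcoll 1 (by omega) (by omega)).1
    simpa using this
  have hhead2 : G.ArrowheadAt (f m) (f (m - 1)) := by
    have := (hcoll (m - 1) (by omega) (by omega)).2
    rwa [show m - 1 + 1 = m from by omega] at this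
  have hr1 : ¬ G.isContext (f 1) := head_resp hhead1
  have hr2 : ¬ G.isContext (f (m - 1)) := head_resp hhead2
  have hle1 : G.comp (f 1) ≤ G.comp i := by rw [← hfi]; exact head_le hhead1
  have hle2 : G.comp (f (m - 1)) ≤ G.comp k := by rw [← hfk]; exact head_le hhead2
  have hne1 : e1 ≠ f 1 := by
    intro h; exact hinner_ne 1 (by omega) (by omega) (h ▸ he1)
  have hne2 : e2 ≠ f (m - 1) := by
    intro h; exact hinner_ne (m - 1) (by omega) (by omega) (h ▸ he2)
  have hlt1 := anterior_comp_lt hant1 hr1 hne1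
  have hlt2 := anterior_comp_lt hant2 hr2 hne2
  rcases he1 with rfl | rfl
  · omega
  · rcases he2 with rfl | rfl
    · omega
    · omega

end RegressionGraph

namespace RegressionGraph

variable {N : Type}

lemma collV_transfer_of_markov {G G' : RegressionGraph N}
    (hskel : ∀ i k, G.Adj i k ↔ G'.Adj i k)
    (hME : ∀ a b c : Set N, Disjoint a b → Disjoint a c → Disjoint b c →
      (G.ActivePathFree a b c ↔ G'.ActivePathFree a b c))
    {i o k : N} (hV : G.IsCollisionV i o k) : G'.IsCollisionV i o k := by
  obtain ⟨hio, hok, hik, hnadj, h1, h2⟩ := hV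
  have hio' : G'.Adj i o := (hskel _ _).1 hio
  have hok' : G'.Adj o k := (hskel _ _).1 hok
  have hnadj' : ¬ G'.Adj i k := fun h => hnadj ((hskel _ _).2 h)
  by_contra hnot
  have htrans : ¬ (G'.ArrowheadAt i o ∧ G'.ArrowheadAt k o) :=
    fun h => hnot ⟨hio', hok', hik, hnadj', h.1, h.2⟩
  have honc : o ∉ G.antSet {i, k} := collV_not_mem_antSet h1 h2
  have hfree : G.ActivePathFree {i} {k} (G.antSet {i, k}) := separator hik hnadj
  have d1 : Disjoint ({i} : Set N) {k} := by
    rw [Set.disjoint_singleton_left]; simpa using hik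
  have d2 : Disjoint ({i} : Set N) (G.antSet {i, k}) := by
    rw [Set.disjoint_singleton_left]; exact fun h => h.1 (Or.inl rfl)
  have d3 : Disjoint ({k} : Set N) (G.antSet {i, k}) := by
    rw [Set.disjoint_singleton_left]; exact fun h => h.1 (Or.inr rfl)
  have hfree' := (hME _ _ _ d1 d2 d3).1 hfree
  apply hfree'
  have ne1 : i ≠ o := adj_ne hio
  have ne2 : o ≠ k := adj_ne hok
  refine ⟨fun t => if t = 0 then i else if t = 1 then o else k, 2, ?_, ?_, ?_, ?_, ?_, ?_⟩
  · omega
  · intro s hs t ht heq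
    interval_cases s <;> interval_cases t <;> simp_all
  · intro t ht
    interval_cases t
    · simpa using hio'
    · simpa using hok'
  · simp
  · simp [ne2.symm]
  · intro t ht0 ht2
    have ht1 : t = 1 := by omega
    subst ht1
    constructor
    · intro hcol
      exfalso
      apply htrans
      simpa [IsCollisionAt] using hcol
    · intro _
      simpa using honc

end RegressionGraph

namespace RegressionGraph

variable {N : Type} {G G' : RegressionGraph N}

lemma coll_transfer (hV : ∀ i o k, G.IsCollisionV i o k ↔ G'.IsCollisionV i o k)
    {i o k : N} (hio : G.Adj i o) (hok : G.Adj o k)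
    (hik : i ≠ k) (hnadj : ¬ G.Adj i k) (hc : G.Coll i o k) : G'.Coll i o k := by
  have h := (hV i o k).1 ⟨hio, hok, hik, hnadj, hc.1, hc.2⟩
  exact ⟨h.2.2.2.2.1, h.2.2.2.2.2⟩

lemma trans_transfer (hskel : ∀ i k, G.Adj i k ↔ G'.Adj i k)
    (hV : ∀ i o k, G.IsCollisionV i o k ↔ G'.IsCollisionV i o k)
    {i o k : N} (hio : G.Adj i o) (hok : G.Adj o k)
    (hik : i ≠ k) (hnadj : ¬ G.Adj i k) (hc : ¬ G.Coll i o k) : ¬ G'.Coll i o k := by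
  intro h
  have h2 := (hV i o k).2
    ⟨(hskel _ _).1 hio, (hskel _ _).1 hok, hik,
      fun hh => hnadj ((hskel _ _).2 hh), h.1, h.2⟩
  exact hc ⟨h2.2.2.2.2.1, h2.2.2.2.2.2⟩

/-- a minimal descending arrow chain witnessing `o ∈ ant c` -/
def IsChain (G : RegressionGraph N) (c : Set N) (o : N) (d : ℕ → N) (r : ℕ) : Prop :=
  d 0 = o ∧ 1 ≤ r ∧ d r ∈ c ∧ (∀ j < r, G.arrow (d (j + 1)) (d j)) ∧
  (∀ j < r, d j ∉ c) ∧ (∀ j ≤ r, ¬ G.isContext (d j)) ∧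
  (∀ a b, a < b → b ≤ r → G.comp (d b) < G.comp (d a)) ∧
  (∀ a b, a + 2 ≤ b → b ≤ r → ¬ G.Adj (d a) (d b))

lemma rtg_rev_chain {R : N → N → Prop} {x y : N} (h : Relation.ReflTransGen R x y) :
    ∃ (n : ℕ) (d : ℕ → N), d 0 = y ∧ d n = x ∧ ∀ j < n, R (d (j + 1)) (d j) := by
  induction h with
  | refl => exact ⟨0, fun _ => x, rfl, rfl, fun j hj => absurd hj (by omega)⟩
  | @tail b c' hxy hstep ih =>
    obtain ⟨n, d, h0, hn, hsteps⟩ := ih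
    refine ⟨n + 1, fun j => if j = 0 then c' else d (j - 1), by simp, ?_, ?_⟩
    · simp only [if_neg (by omega : ¬ n + 1 = 0)]
      simpa using hn
    · intro j hj
      rcases Nat.eq_zero_or_pos j with rfl | hj0
      · simp only [if_pos rfl, if_neg (by omega : ¬ (0:ℕ) + 1 = 0)]
        simpa [h0] using hstep
      · simp only [if_neg (by omega : ¬ j + 1 = 0), if_neg (by omega : ¬ j = 0)]
        have e : j + 1 - 1 = j - 1 + 1 := by omega
        rw [e]
        exact hsteps (j - 1) (by omega)

lemma rtg_of_chain_steps {R : N → N → Prop} {d : ℕ → N} {r : ℕ}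
    (h : ∀ j < r, R (d (j + 1)) (d j)) :
    ∀ k, k ≤ r → Relation.ReflTransGen R (d r) (d (r - k)) := by
  intro k
  induction k with
  | zero => intro _; rw [Nat.sub_zero]
  | succ k ih =>
    intro hk
    have e : r - k = (r - (k + 1)) + 1 := by omega
    refine (ih (by omega)).tail ?_
    rw [e] at *
    exact h (r - (k + 1)) (by omega)

lemma chain_mem_ant {c : Set N} {o : N} {d : ℕ → N} {r : ℕ}
    (hch : G.IsChain c o d r) : ∀ j ≤ r, d j ∈ c ∪ G.antSet c := by
  intro j hj
  by_cases hc : d j ∈ c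
  · exact Or.inl hc
  · right
    have := rtg_of_chain_steps hch.2.2.2.1 (r - j) (by omega)
    rw [show r - (r - j) = j from by omega] at this
    exact mem_antSet hc hch.2.2.1 (anterior_of_arrow_rtg this)

lemma exists_chain {c : Set N} {o : N} (ho : o ∈ G.antSet c) (hresp : ¬ G.isContext o) :
    ∃ d r, G.IsChain c o d r := by
  classical
  obtain ⟨hoc, i, hic, hant⟩ := ho
  set P : ℕ → Prop := fun n => ∃ d : ℕ → N,
    d 0 = o ∧ d n ∈ c ∧ ∀ j < n, G.arrow (d (j + 1)) (d j) with hP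
  have hS : ∃ n, P n := by
    obtain ⟨n, d, h0, hn, hsteps⟩ := rtg_rev_chain (anterior_resp_arrows hant hresp)
    exact ⟨n, d, h0, hn ▸ hic, hsteps⟩
  obtain ⟨d, hd0, hdr, hsteps⟩ := Nat.find_spec hS
  set r := Nat.find hS with hr
  have hmin : ∀ n < r, ¬ P n := fun n hn => Nat.find_min hS hn
  have hr1 : 1 ≤ r := by
    rcases Nat.eq_zero_or_pos r with h | h
    · exfalso
      rw [h] at hdr
      rw [hd0] at hdr
      exact hoc hdr
    · exact h
  have hnc : ∀ j < r, d j ∉ c := by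
    intro j hj hjc
    exact hmin j hj ⟨d, hd0, hjc, fun l hl => hsteps l (by omega)⟩
  have hrsp : ∀ j ≤ r, ¬ G.isContext (d j) := by
    intro j hj
    rcases Nat.eq_zero_or_pos j with rfl | hj0
    · rw [hd0]; exact hresp
    · have := hsteps (j - 1) (by omega)
      rw [show j - 1 + 1 = j from by omega] at this
      exact (G.arrow_resp _ _ this).1
  have hstep_lt : ∀ j < r, G.comp (d (j + 1)) < G.comp (d j) :=
    fun j hj => (G.arrow_resp _ _ (hsteps j hj)).2
  have hmono : ∀ k a, a + k ≤ r → G.comp (d (a + k)) ≤ G.comp (d a) := by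
    intro k
    induction k with
    | zero => intro a _; exact le_refl _
    | succ k ih =>
      intro a h
      have h1 := hstep_lt (a + k) (by omega)
      have h2 := ih a (by omega)
      have e : a + (k + 1) = a + k + 1 := by omega
      rw [e]
      omega
  have hstrict : ∀ a b, a < b → b ≤ r → G.comp (d b) < G.comp (d a) := by
    intro a b hab hbr
    have h1 := hstep_lt a (by omega)
    have h2 := hmono (b - (a + 1)) (a + 1) (by omega)
    rw [show a + 1 + (b - (a + 1)) = b from by omega] at h2
    omega
  refine ⟨d, r, hd0, hr1, hdr, hsteps, hnc, hrsp, hstrict, ?_⟩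
  intro a b hab hbr hadj
  have hlt := hstrict a b (by omega) hbr
  have harr : G.arrow (d b) (d a) := arrow_of hadj (hrsp b hbr) hlt
  set e := b - a - 1 with he
  apply hmin (r - e) (by omega)
  refine ⟨fun j => if j ≤ a then d j else d (j + e), by simp [hd0], ?_, ?_⟩
  · simp only [if_neg (show ¬ r - e ≤ a from by omega)]
    rw [show r - e + e = r from by omega]
    exact hdr
  · intro j hj
    rcases lt_trichotomy j a with h | heq | h
    · simp only [if_pos (show j ≤ a from by omega), if_pos (show j + 1 ≤ a from by omega)]
      exact hsteps j (by omega)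
    · simp only [if_pos (show j ≤ a from by omega), if_neg (show ¬ j + 1 ≤ a from by omega)]
      rw [show j + 1 + e = b from by omega, heq]
      exact harr
    · simp only [if_neg (show ¬ j ≤ a from by omega),
        if_neg (show ¬ j + 1 ≤ a from by omega)]
      rw [show j + 1 + e = j + e + 1 from by omega]
      exact hsteps (j + e) (by omega)

/-- transferring a chain to `G'` once its first arrow is known to transfer. -/
lemma chain_transfer (hskel : ∀ i k, G.Adj i k ↔ G'.Adj i k)
    (hV : ∀ i o k, G.IsCollisionV i o k ↔ G'.IsCollisionV i o k)
    {c : Set N} {o : N} {d : ℕ → N} {r : ℕ} (hch : G.IsChain c o d r)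
    (harr1 : G'.arrow (d 1) (d 0)) : o ∈ G'.antSet c ∪ c := by
  obtain ⟨hd0, hr1, hdr, hsteps, hnc, hrsp, hstrict, hnadj⟩ := hch
  by_cases hoc : o ∈ c
  · exact Or.inr hoc
  have hsteps' : ∀ j < r, G'.arrow (d (j + 1)) (d j) := by
    intro j
    induction j using Nat.strong_induction_on with
    | _ j ih =>
      intro hj
      rcases Nat.eq_zero_or_pos j with rfl | hj0
      · exact harr1
      · have hprev : G'.arrow (d j) (d (j - 1)) := by
          have := ih (j - 1) (by omega) (by omega)
          rwa [show j - 1 + 1 = j from by omega] at this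
        have hadj1 : G.Adj (d (j - 1)) (d j) := by
          have := hsteps (j - 1) (by omega)
          rw [show j - 1 + 1 = j from by omega] at this
          exact adj_symm (arrow_adj this)
        have hadj2 : G.Adj (d j) (d (j + 1)) := adj_symm (arrow_adj (hsteps j hj))
        have hne : d (j - 1) ≠ d (j + 1) := by
          intro h
          have := hstrict (j - 1) (j + 1) (by omega) (by omega)
          rw [h] at this
          omega
        have hnadj2 : ¬ G.Adj (d (j - 1)) (d (j + 1)) := by
          have := hnadj (j - 1) (j + 1) (by omega) (by omega)
          exact this
        have hGtrans : ¬ G.Coll (d (j - 1)) (d j) (d (j + 1)) := by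
          intro hc
          exact not_head_of_lt (hstrict j (j + 1) (by omega) (by omega)) hc.2
        have hG't := trans_transfer hskel hV hadj1 hadj2 hne hnadj2 hGtrans
        have hhead' : G'.ArrowheadAt (d (j - 1)) (d j) := Or.inl hprev
        have hnh' : ¬ G'.ArrowheadAt (d (j + 1)) (d j) := fun h => hG't ⟨hhead', h⟩
        have hresp' : ¬ G'.isContext (d j) := (G'.arrow_resp _ _ hprev).1
        have hadj2' : G'.Adj (d (j + 1)) (d j) := (hskel _ _).1 (adj_symm hadj2)
        exact (arrow_out_of_not_head hadj2' hresp' hnh').1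
  left
  have hrtg := rtg_of_chain_steps hsteps' r (le_refl r)
  rw [Nat.sub_self] at hrtg
  rw [← hd0]
  exact mem_antSet (hd0 ▸ hoc) hdr (anterior_of_arrow_rtg hrtg)

end RegressionGraph

namespace RegressionGraph

variable {N : Type} {G G' : RegressionGraph N}

lemma ok_of_not_coll {c : Set N} {x o y : N} (h : ¬ G.Coll x o y) (ho : o ∉ c) :
    G.Ok c x o y := ⟨fun hc => absurd hc h, fun _ => ho⟩

lemma ok_of_coll {c : Set N} {x o y : N} (h : G.Coll x o y) (ho : o ∈ c ∪ G.antSet c) :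
    G.Ok c x o y := ⟨fun _ => ho, fun hnc => absurd h hnc⟩

lemma coll_of_mem {a b c : Set N} {f : ℕ → N} {m : ℕ} (hw : G.IsLooseWalk a b c f m) :
    ∀ j, 0 < j → j < m → f j ∈ c → G.Coll (f (j - 1)) (f j) (f (j + 1)) := by
  intro j h1 h2 hj
  by_contra h
  exact (hw.2.2.2.2 j h1 h2).2 h hj

/-- The left-directed spiral for a type-(II) violation. -/
lemma loopII (hskel : ∀ i k, G.Adj i k ↔ G'.Adj i k)
    (hV : ∀ i o k, G.IsCollisionV i o k ↔ G'.IsCollisionV i o k)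
    {a b c : Set N} {f : ℕ → N} {m : ℕ}
    (hw : G.IsLooseWalk a b c f m)
    (hinj : ∀ s ≤ m, ∀ u ≤ m, f s = f u → s = u)
    {t : ℕ} (ht0 : 0 < t) (htm : t < m)
    (hGtrans : ¬ G.Coll (f (t - 1)) (f t) (f (t + 1)))
    (hcoll' : G'.Coll (f (t - 1)) (f t) (f (t + 1)))
    (hnotc : f t ∉ c)
    (hLo : G.comp (f (t - 1)) ≤ G.comp (f t))
    (hcy : G.comp (f (t + 1)) < G.comp (f (t - 1)))
    (hrespy : ¬ G.isContext (f (t + 1)))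
    (hyOk : t + 1 < m → ∀ z, G.ArrowheadAt z (f (t + 1)) →
      G.Ok c z (f (t + 1)) (f (t + 2))) :
    ∀ p, 0 < p → p ≤ t - 1 →
      (∀ j, p ≤ j → j ≤ t - 1 → f j ∈ c ∧ G.comp (f j) = G.comp (f (t - 1))) →
      G.Adj (f p) (f (t + 1)) →
      G'.comp (f (p + 1)) ≤ G'.comp (f t) →
      ∃ g m', G.IsLooseWalk a b c g m' ∧ G.mu g m' < G.mu f m := by
  intro p
  induction p using Nat.strong_induction_on with
  | _ p ih =>
    intro hp0 hpt hrange hchord hINV'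
    have hadjw := hw.2.1
    have hok := hw.2.2.2.2
    have hpc : f p ∈ c := (hrange p (le_refl p) hpt).1
    have hpL : G.comp (f p) = G.comp (f (t - 1)) := (hrange p (le_refl p) hpt).2
    have hpm : p < m := by omega
    have hcolp : G.Coll (f (p - 1)) (f p) (f (p + 1)) := coll_of_mem hw p hp0 hpm hpc
    have hrespp : ¬ G.isContext (f p) := head_resp hcolp.1
    have hp1L : G.comp (f p) ≤ G.comp (f (p - 1)) := head_le hcolp.1
    have hp1L' : G.comp (f p) ≤ G.comp (f (p + 1)) := head_le hcolp.2
    -- comp of f (p+1) : either in c-range or t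
    have hcomp_p1 : G.comp (f (t - 1)) ≤ G.comp (f (p + 1)) := by
      rcases eq_or_lt_of_le (show p + 1 ≤ t from by omega) with h | h
      · rw [h]; exact hLo
      · exact le_of_eq ((hrange (p + 1) (by omega) (by omega)).2).symm
    -- the pivot y has a head from f p
    have hheadpy : G.ArrowheadAt (f p) (f (t + 1)) :=
      head_of hchord hrespy (by omega)
    by_cases hi : G.Adj (f (p - 1)) (f (p + 1))
    · -- branch (i) : remove f p from the original walk
      apply spliceCut hw (p := p - 1) (q := p + 1) (by omega) (by omega) hi
      · -- junction at p - 1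
        intro hp1
        by_cases hcolX : G.Coll (f (p - 1 - 1)) (f (p - 1)) (f (p + 1))
        · refine ok_of_coll hcolX ?_
          by_cases horig : G.Coll (f (p - 1 - 1)) (f (p - 1)) (f (p - 1 + 1))
          · exact (hok (p - 1) hp1 (by omega)).1 horig
          · -- f (p-1) gets an arrow from f p, which is in c
            have hnh : ¬ G.ArrowheadAt (f (p - 1 + 1)) (f (p - 1)) :=
              fun h => horig ⟨hcolX.1, h⟩
            rw [show p - 1 + 1 = p from by omega] at hnh
            have hrx : ¬ G.isContext (f (p - 1)) := head_resp hcolX.2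
            have hltx : G.comp (f p) < G.comp (f (p - 1)) := by
              by_contra h
              exact hnh (head_of (adj_symm (by
                have := hadjw (p - 1) (by omega)
                rwa [show p - 1 + 1 = p from by omega] at this)) hrx (by omega))
            have harr : G.arrow (f p) (f (p - 1)) := by
              refine arrow_of ?_ hrespp hltx
              have := hadjw (p - 1) (by omega)
              rwa [show p - 1 + 1 = p from by omega] at this
            have hnotc1 : f (p - 1) ∉ c := by
              intro hmem
              exact horig (by
                have := coll_of_mem hw (p - 1) hp1 (by omega) hmem
                exact this)
            right
            exact mem_antSet hnotc1 hpc
              (anterior_of_arrow_rtg (Relation.ReflTransGen.single harr))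
        · refine ok_of_not_coll hcolX ?_
          intro hmem
          have horig := coll_of_mem hw (p - 1) hp1 (by omega) hmem
          rw [show p - 1 + 1 = p from by omega] at horig
          have hnh : ¬ G.ArrowheadAt (f (p + 1)) (f (p - 1)) :=
            fun h => hcolX ⟨horig.1, h⟩
          have hrx : ¬ G.isContext (f (p - 1)) := head_resp horig.1
          have hltx : G.comp (f (p + 1)) < G.comp (f (p - 1)) := by
            by_contra h
            exact hnh (head_of (adj_symm hi) hrx (by omega))
          have : G.comp (f (p - 1)) ≤ G.comp (f p) := head_le horig.2
          omega
      · -- junction at p + 1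
        intro hq1
        rcases eq_or_lt_of_le (show p + 1 ≤ t from by omega) with h | h
        · -- p + 1 = t : the middle node is o, and Ahd y o is false
          refine ok_of_not_coll ?_ (by rw [h]; exact hnotc)
          intro hcoln
          have := head_le hcoln.2
          rw [h] at this
          rw [show t + 1 = t + 1 from rfl] at this
          omega
        · -- p + 1 ≤ t - 1 : a c-collision node
          have hmem : f (p + 1) ∈ c := (hrange (p + 1) (by omega) (by omega)).1
          have horig := coll_of_mem hw (p + 1) (by omega) (by omega) hmem
          rw [show p + 1 - 1 = p from by omega] at horig
          refine ok_of_coll ⟨?_, horig.2⟩ (Or.inl hmem)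
          exact head_of hi (head_resp horig.1) (by
            have := (hrange (p + 1) (by omega) (by omega)).2
            omega)
    · by_cases hii : G.Adj (f (p - 1)) (f (t + 1))
      · -- branch (iii) : move the junction left
        rcases Nat.eq_zero_or_pos (p - 1) with hp1 | hp1
        · -- the new junction is the left endpoint : splice and finish
          apply spliceCut hw (p := p - 1) (q := t + 1) (by omega) (by omega) hii
          · intro h; omega
          · intro hq
            refine hyOk hq (f (p - 1)) (head_of hii hrespy (by omega))
        · by_cases hmem : f (p - 1) ∈ c
          · -- recurse
            have horig := coll_of_mem hw (p - 1) hp1 (by omega) hmem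
            rw [show p - 1 + 1 = p from by omega] at horig
            have hLe : G.comp (f (p - 1)) ≤ G.comp (f p) := head_le horig.2
            -- INV' via the V-configuration (f (p-1), f p, f (p+1))
            have hcolG' : G'.Coll (f (p - 1)) (f p) (f (p + 1)) := by
              refine coll_transfer hV ?_ (hadjw p hpm) ?_ hi hcolp
              · have := hadjw (p - 1) (by omega)
                rwa [show p - 1 + 1 = p from by omega] at this
              · intro h
                have := hinj (p - 1) (by omega) (p + 1) (by omega) h
                omega
            refine ih (p - 1) (by omega) hp1 (by omega) ?_ hii ?_
            · intro j hj1 hj2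
              rcases eq_or_lt_of_le hj1 with rfl | hj
              · exact ⟨hmem, by omega⟩
              · exact hrange j (by omega) hj2
            · calc G'.comp (f (p - 1 + 1)) = G'.comp (f p) := by
                    rw [show p - 1 + 1 = p from by omega]
                _ ≤ G'.comp (f (p + 1)) := head_le hcolG'.2
                _ ≤ G'.comp (f t) := hINV'
          · -- exit : splice at p - 1
            apply spliceCut hw (p := p - 1) (q := t + 1) (by omega) (by omega) hii
            · intro hp2
              by_cases hcolX : G.Coll (f (p - 1 - 1)) (f (p - 1)) (f (t + 1))
              · -- impossible or fine via the original status
                refine ok_of_coll hcolX ?_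
                by_cases horig : G.Coll (f (p - 1 - 1)) (f (p - 1)) (f (p - 1 + 1))
                · exact (hok (p - 1) (by omega) (by omega)).1 horig
                · exfalso
                  have hnh : ¬ G.ArrowheadAt (f (p - 1 + 1)) (f (p - 1)) :=
                    fun h => horig ⟨hcolX.1, h⟩
                  rw [show p - 1 + 1 = p from by omega] at hnh
                  have hrx : ¬ G.isContext (f (p - 1)) := head_resp hcolX.2
                  have hlty : G.comp (f (p - 1)) ≤ G.comp (f (t + 1)) :=
                    head_le hcolX.2
                  have hltx : G.comp (f p) < G.comp (f (p - 1)) := by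
                    by_contra h
                    exact hnh (head_of (adj_symm (by
                      have := hadjw (p - 1) (by omega)
                      rwa [show p - 1 + 1 = p from by omega] at this)) hrx (by omega))
                  omega
              · exact ok_of_not_coll hcolX hmem
            · intro hq
              refine hyOk hq (f (p - 1)) (head_of hii hrespy ?_)
              have hLe' : G.comp (f p) ≤ G.comp (f (p - 1)) := hp1L
              omega
      · -- branch (ii) : contradiction via V-configurations
        exfalso
        have hadjp : G.Adj (f (p - 1)) (f p) := by
          have := hadjw (p - 1) (by omega)
          rwa [show p - 1 + 1 = p from by omega] at this
        have hcolG' : G'.Coll (f (p - 1)) (f p) (f (p + 1)) := by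
          refine coll_transfer hV hadjp (hadjw p hpm) ?_ hi hcolp
          intro h
          have := hinj (p - 1) (by omega) (p + 1) (by omega) h
          omega
        have hGtrans2 : ¬ G.Coll (f (p - 1)) (f p) (f (t + 1)) := by
          intro h
          have := head_le h.2
          omega
        have hne2 : f (p - 1) ≠ f (t + 1) := by
          intro h
          have := hinj (p - 1) (by omega) (t + 1) (by omega) h
          omega
        have htr' := trans_transfer hskel hV hadjp hchord hne2 hii hGtrans2
        have hnh' : ¬ G'.ArrowheadAt (f (t + 1)) (f p) := fun h => htr' ⟨hcolG'.1, h⟩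
        have hresp' : ¬ G'.isContext (f p) := head_resp hcolG'.2
        have h1 : G'.comp (f p) ≤ G'.comp (f (p + 1)) := head_le hcolG'.2
        have h2 : G'.comp (f t) ≤ G'.comp (f (t + 1)) := head_le hcoll'.2
        have h3 : G.Adj (f (t + 1)) (f p) → True := fun _ => trivial
        have h4 : G'.comp (f (t + 1)) < G'.comp (f p) := by
          by_contra h
          exact hnh' (head_of ((hskel _ _).1 (adj_symm hchord)) hresp' (by omega))
        omega

end RegressionGraph

namespace RegressionGraph

variable {N : Type} {G G' : RegressionGraph N}

/-- The right-directed settling loop for a type-(III) violation. -/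
lemma loopIII_right (hskel : ∀ i k, G.Adj i k ↔ G'.Adj i k)
    (hV : ∀ i o k, G.IsCollisionV i o k ↔ G'.IsCollisionV i o k)
    {a b c : Set N} {f : ℕ → N} {m : ℕ}
    (hw : G.IsLooseWalk a b c f m)
    (hinj : ∀ s ≤ m, ∀ u ≤ m, f s = f u → s = u)
    {t : ℕ} (ht0 : 0 < t) (htm : t < m)
    (hGcoll : G.Coll (f (t - 1)) (f t) (f (t + 1)))
    (ho_antG : f t ∈ G.antSet c)
    {dd : ℕ → N} {r : ℕ} (hch : G.IsChain c (f t) dd r)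
    (hGF' : G'.comp (f t) ≤ G'.comp (dd 1)) :
    ∀ k q, m < q + k → t + 1 ≤ q → q ≤ m →
      (∀ j, t + 1 ≤ j → j ≤ q - 1 → f j ∈ c ∧ G.comp (f j) = G.comp (f t)) →
      G.Adj (dd 1) (f q) →
      G'.comp (f (q - 1)) ≤ G'.comp (f t) →
      ((∃ g m', G.IsLooseWalk a b c g m' ∧ G.mu g m' < G.mu f m) ∨
        (∃ q', t + 1 ≤ q' ∧ q' ≤ m ∧ G.Adj (dd 1) (f q') ∧
          G.ArrowheadAt (f q') (dd 1) ∧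
          (q' < m → G.Ok c (dd 1) (f q') (f (q' + 1))))) := by
  obtain ⟨hd0, hr1, hdrc, hdsteps, hdnc, hdrsp, hdstrict, hdnadj⟩ := id hch
  have hrsp1 : ¬ G.isContext (dd 1) := hdrsp 1 hr1
  have hlt1 : G.comp (dd 1) < G.comp (f t) := by
    have := hdstrict 0 1 (by omega) hr1
    rwa [hd0] at this
  intro k
  induction k with
  | zero => intro q hk hq1 hqm; exact absurd hqm (by omega)
  | succ k ih =>
    intro q hk hq1 hqm hrange hchord hINV'
    have hadjw := hw.2.1
    have hok := hw.2.2.2.2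
    have hnotct : f t ∉ c := ho_antG.1
    -- head at f q from the left, giving comp (f q) ≥ L
    have hheadq : G.ArrowheadAt (f q) (f (q - 1)) := by
      rcases eq_or_lt_of_le hq1 with h | h
      · rw [← h]
        exact hGcoll.2
      · have hmem : f (q - 1) ∈ c := (hrange (q - 1) (by omega) (by omega)).1
        have h2 := (coll_of_mem hw (q - 1) (by omega) (by omega) hmem).2
        rwa [show q - 1 + 1 = q from by omega] at h2
    have hcompq : G.comp (f t) ≤ G.comp (f q) := by
      have h1 := head_le hheadq
      rcases eq_or_lt_of_le hq1 with h | h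
      · rw [show q - 1 = t from by omega] at h1
        omega
      · have := (hrange (q - 1) (by omega) (by omega)).2
        omega
    have hheadqd : G.ArrowheadAt (f q) (dd 1) :=
      head_of (adj_symm hchord) hrsp1 (by omega)
    by_cases hstop : q = m ∨ f q ∉ c
    · -- exit
      right
      refine ⟨q, hq1, hqm, hchord, hheadqd, ?_⟩
      intro hqm'
      have hqc : f q ∉ c := by
        rcases hstop with h | h
        · omega
        · exact h
      refine ok_of_not_coll ?_ hqc
      intro hcol
      have := head_le hcol.1
      omega
    · push_neg at hstop
      obtain ⟨hqm', hqc⟩ := hstop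
      have hqm2 : q < m := by omega
      have horigq := coll_of_mem hw q (by omega) hqm2 hqc
      have hcompqL : G.comp (f q) = G.comp (f t) := by
        have := head_le horigq.1
        rcases eq_or_lt_of_le hq1 with h | h
        · rw [show q - 1 = t from by omega] at this
          omega
        · have := (hrange (q - 1) (by omega) (by omega)).2
          have h2 := head_le horigq.1
          omega
      have hcompq1 : G.comp (f t) ≤ G.comp (f (q + 1)) := by
        have := head_le horigq.2
        omega
      by_cases ha' : G.Adj (f (q - 1)) (f (q + 1))
      · -- branch (a) : remove f q
        left
        apply spliceCut hw (p := q - 1) (q := q + 1) (by omega) (by omega) ha'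
        · intro hp1
          by_cases hcolA : G.Coll (f (q - 1 - 1)) (f (q - 1)) (f (q + 1))
          · refine ok_of_coll hcolA ?_
            have horig : G.Coll (f (q - 1 - 1)) (f (q - 1)) (f (q - 1 + 1)) := by
              rcases eq_or_lt_of_le hq1 with h | h
              · have := hGcoll
                rw [show q - 1 = t from by omega]
                rwa [show t - 1 = t - 1 from rfl, show t + 1 = t + 1 from rfl] at this
              · exact coll_of_mem hw (q - 1) (by omega) (by omega)
                  (hrange (q - 1) (by omega) (by omega)).1
            exact (hok (q - 1) (by omega) (by omega)).1 horig
          · refine ok_of_not_coll hcolA ?_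
            rcases eq_or_lt_of_le hq1 with h | h
            · rw [show q - 1 = t from by omega]
              exact hnotct
            · exfalso
              have hmem : f (q - 1) ∈ c := (hrange (q - 1) (by omega) (by omega)).1
              have horig := coll_of_mem hw (q - 1) (by omega) (by omega) hmem
              rw [show q - 1 + 1 = q from by omega] at horig
              have hnh : ¬ G.ArrowheadAt (f (q + 1)) (f (q - 1)) :=
                fun hh => hcolA ⟨horig.1, hh⟩
              have hrx : ¬ G.isContext (f (q - 1)) := head_resp horig.1
              have hltx : G.comp (f (q + 1)) < G.comp (f (q - 1)) := by
                by_contra hh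
                exact hnh (head_of (adj_symm ha') hrx (by omega))
              have := (hrange (q - 1) (by omega) (by omega)).2
              omega
        · intro hq2
          by_cases hcolB : G.Coll (f (q - 1)) (f (q + 1)) (f (q + 1 + 1))
          · refine ok_of_coll hcolB ?_
            by_cases horig : G.Coll (f (q + 1 - 1)) (f (q + 1)) (f (q + 1 + 1))
            · exact (hok (q + 1) (by omega) (by omega)).1 horig
            · rw [show q + 1 - 1 = q from by omega] at horig
              have hnh : ¬ G.ArrowheadAt (f q) (f (q + 1)) :=
                fun hh => horig ⟨hh, hcolB.2⟩
              have hry : ¬ G.isContext (f (q + 1)) := head_resp hcolB.2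
              have hlty : G.comp (f q) < G.comp (f (q + 1)) := by
                by_contra hh
                exact hnh (head_of (hadjw q hqm2) hry (by omega))
              have hrq : ¬ G.isContext (f q) := head_resp horigq.1
              have harr : G.arrow (f q) (f (q + 1)) :=
                arrow_of (adj_symm (hadjw q hqm2)) hrq hlty
              have hnc1 : f (q + 1) ∉ c := by
                intro hmem
                exact horig (coll_of_mem hw (q + 1) (by omega) (by omega) hmem |>.imp
                  (fun hh => by rwa [show q + 1 - 1 = q from by omega] at hh) id)
              right
              exact mem_antSet hnc1 hqc
                (anterior_of_arrow_rtg (Relation.ReflTransGen.single harr))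
          · refine ok_of_not_coll hcolB ?_
            intro hmem
            have horig := coll_of_mem hw (q + 1) (by omega) (by omega) hmem
            rw [show q + 1 - 1 = q from by omega] at horig
            have hnh : ¬ G.ArrowheadAt (f (q - 1)) (f (q + 1)) :=
              fun hh => hcolB ⟨hh, horig.2⟩
            have hry : ¬ G.isContext (f (q + 1)) := head_resp horig.1
            have hlty : G.comp (f (q - 1)) < G.comp (f (q + 1)) := by
              by_contra hh
              exact hnh (head_of ha' hry (by omega))
            have h5 := head_le horig.1
            have h6 : G.comp (f (q - 1)) = G.comp (f t) := by
              rcases eq_or_lt_of_le hq1 with h | h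
              · rw [show q - 1 = t from by omega]
              · exact (hrange (q - 1) (by omega) (by omega)).2
            omega
      · by_cases hb' : G.Adj (dd 1) (f (q + 1))
        · -- branch (c) : recurse
          have hcolG' : G'.Coll (f (q - 1)) (f q) (f (q + 1)) := by
            refine coll_transfer hV ?_ (hadjw q hqm2) ?_ ha' ?_
            · have := hadjw (q - 1) (by omega)
              rwa [show q - 1 + 1 = q from by omega] at this
            · intro hh
              have := hinj (q - 1) (by omega) (q + 1) (by omega) hh
              omega
            · have := horigq
              rwa [show q - 1 = q - 1 from rfl] at this
          refine ih (q + 1) (by omega) (by omega) (by omega) ?_ hb' ?_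
          · intro j hj1 hj2
            rcases eq_or_lt_of_le (show j ≤ q from by omega) with rfl | hj
            · exact ⟨hqc, hcompqL⟩
            · exact hrange j hj1 (by omega)
          · rw [show q + 1 - 1 = q from by omega]
            calc G'.comp (f q) ≤ G'.comp (f (q - 1)) := head_le hcolG'.1
              _ ≤ G'.comp (f t) := hINV'
        · -- branch (b) : contradiction
          exfalso
          have hadjq : G.Adj (f (q - 1)) (f q) := by
            have := hadjw (q - 1) (by omega)
            rwa [show q - 1 + 1 = q from by omega] at this
          have hcolG' : G'.Coll (f (q - 1)) (f q) (f (q + 1)) := by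
            refine coll_transfer hV hadjq (hadjw q hqm2) ?_ ha' horigq
            intro hh
            have := hinj (q - 1) (by omega) (q + 1) (by omega) hh
            omega
          have hGtrans2 : ¬ G.Coll (dd 1) (f q) (f (q + 1)) := by
            intro hh
            have := head_le hh.1
            omega
          have hne2 : dd 1 ≠ f (q + 1) := by
            intro hh
            have h7 : G.comp (dd 1) < G.comp (f (q + 1)) := by omega
            rw [hh] at h7
            omega
          have htr' := trans_transfer hskel hV hchord
            (hadjw q hqm2) hne2 hb' hGtrans2
          have hnh' : ¬ G'.ArrowheadAt (dd 1) (f q) := fun hh => htr' ⟨hh, hcolG'.2⟩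
          have hresp' : ¬ G'.isContext (f q) := head_resp hcolG'.1
          have h8 : G'.comp (f q) ≤ G'.comp (f (q - 1)) := head_le hcolG'.1
          have h9 : G'.comp (dd 1) < G'.comp (f q) := by
            by_contra hh
            exact hnh' (head_of ((hskel _ _).1 hchord) hresp' (by omega))
          omega

end RegressionGraph

namespace RegressionGraph

variable {N : Type} {G G' : RegressionGraph N}

/-- The left-directed spiral for a type-(III) violation, with a settled right side. -/
lemma loopIII_left (hskel : ∀ i k, G.Adj i k ↔ G'.Adj i k)
    (hV : ∀ i o k, G.IsCollisionV i o k ↔ G'.IsCollisionV i o k)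
    {a b c : Set N} {f : ℕ → N} {m : ℕ}
    (hw : G.IsLooseWalk a b c f m)
    (hinj : ∀ s ≤ m, ∀ u ≤ m, f s = f u → s = u)
    {t : ℕ} (ht0 : 0 < t) (htm : t < m)
    (hGcoll : G.Coll (f (t - 1)) (f t) (f (t + 1)))
    (ho_antG : f t ∈ G.antSet c)
    {dd : ℕ → N} {r : ℕ} (hch : G.IsChain c (f t) dd r)
    (hGF' : G'.comp (f t) ≤ G'.comp (dd 1))
    {q' : ℕ} (hq1 : t + 1 ≤ q') (hq2 : q' ≤ m)
    (hchq : G.Adj (dd 1) (f q'))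
    (hheadq : G.ArrowheadAt (f q') (dd 1))
    (hOkq : q' < m → G.Ok c (dd 1) (f q') (f (q' + 1))) :
    ∀ p, 0 < p → p ≤ t - 1 →
      (∀ j, p ≤ j → j ≤ t - 1 → f j ∈ c ∧ G.comp (f j) = G.comp (f t)) →
      G.Adj (f p) (dd 1) →
      G'.comp (f (p + 1)) ≤ G'.comp (f t) →
      ∃ g m', G.IsLooseWalk a b c g m' ∧ G.mu g m' < G.mu f m := by
  obtain ⟨hd0, hr1, hdrc, hdsteps, hdnc, hdrsp, hdstrict, hdnadj⟩ := id hch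
  have hrsp1 : ¬ G.isContext (dd 1) := hdrsp 1 hr1
  have hlt1 : G.comp (dd 1) < G.comp (f t) := by
    have := hdstrict 0 1 (by omega) hr1
    rwa [hd0] at this
  have hd1mem : dd 1 ∈ c ∪ G.antSet c := chain_mem_ant hch 1 hr1
  intro p
  induction p using Nat.strong_induction_on with
  | _ p ih =>
    intro hp0 hpt hrange hchord hINV'
    have hadjw := hw.2.1
    have hok := hw.2.2.2.2
    have hpc : f p ∈ c := (hrange p (le_refl p) hpt).1
    have hpL : G.comp (f p) = G.comp (f t) := (hrange p (le_refl p) hpt).2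
    have hpm : p < m := by omega
    have hcolp : G.Coll (f (p - 1)) (f p) (f (p + 1)) := coll_of_mem hw p hp0 hpm hpc
    have hrespp : ¬ G.isContext (f p) := head_resp hcolp.1
    have hp1L : G.comp (f p) ≤ G.comp (f (p - 1)) := head_le hcolp.1
    have hcomp_p1 : G.comp (f t) ≤ G.comp (f (p + 1)) := by
      rcases eq_or_lt_of_le (show p + 1 ≤ t from by omega) with h | h
      · rw [h]
      · exact le_of_eq ((hrange (p + 1) (by omega) (by omega)).2).symm
    have hheadpd : G.ArrowheadAt (f p) (dd 1) :=
      head_of hchord hrsp1 (by omega)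
    by_cases hi : G.Adj (f (p - 1)) (f (p + 1))
    · -- branch (i) : remove f p from the original walk
      apply spliceCut hw (p := p - 1) (q := p + 1) (by omega) (by omega) hi
      · intro hp1
        by_cases hcolX : G.Coll (f (p - 1 - 1)) (f (p - 1)) (f (p + 1))
        · refine ok_of_coll hcolX ?_
          by_cases horig : G.Coll (f (p - 1 - 1)) (f (p - 1)) (f (p - 1 + 1))
          · exact (hok (p - 1) hp1 (by omega)).1 horig
          · have hnh : ¬ G.ArrowheadAt (f (p - 1 + 1)) (f (p - 1)) :=
              fun h => horig ⟨hcolX.1, h⟩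
            rw [show p - 1 + 1 = p from by omega] at hnh
            have hrx : ¬ G.isContext (f (p - 1)) := head_resp hcolX.2
            have hltx : G.comp (f p) < G.comp (f (p - 1)) := by
              by_contra h
              exact hnh (head_of (adj_symm (by
                have := hadjw (p - 1) (by omega)
                rwa [show p - 1 + 1 = p from by omega] at this)) hrx (by omega))
            have harr : G.arrow (f p) (f (p - 1)) := by
              refine arrow_of ?_ hrespp hltx
              have := hadjw (p - 1) (by omega)
              rwa [show p - 1 + 1 = p from by omega] at this
            have hnotc1 : f (p - 1) ∉ c := by
              intro hmem
              exact horig (coll_of_mem hw (p - 1) hp1 (by omega) hmem)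
            right
            exact mem_antSet hnotc1 hpc
              (anterior_of_arrow_rtg (Relation.ReflTransGen.single harr))
        · refine ok_of_not_coll hcolX ?_
          intro hmem
          have horig := coll_of_mem hw (p - 1) hp1 (by omega) hmem
          rw [show p - 1 + 1 = p from by omega] at horig
          have hnh : ¬ G.ArrowheadAt (f (p + 1)) (f (p - 1)) :=
            fun h => hcolX ⟨horig.1, h⟩
          have hrx : ¬ G.isContext (f (p - 1)) := head_resp horig.1
          have hltx : G.comp (f (p + 1)) < G.comp (f (p - 1)) := by
            by_contra h
            exact hnh (head_of (adj_symm hi) hrx (by omega))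
          have : G.comp (f (p - 1)) ≤ G.comp (f p) := head_le horig.2
          omega
      · intro hq1'
        rcases eq_or_lt_of_le (show p + 1 ≤ t from by omega) with h | h
        · -- p + 1 = t : middle node is o, a collision node in ant c
          rw [h]
          refine ok_of_coll ⟨?_, ?_⟩ (Or.inr ho_antG)
          · refine head_of ?_ (head_resp hGcoll.1) (by omega)
            have := hi
            rwa [h] at this
          · exact hGcoll.2
        · have hmem : f (p + 1) ∈ c := (hrange (p + 1) (by omega) (by omega)).1
          have horig := coll_of_mem hw (p + 1) (by omega) (by omega) hmem
          rw [show p + 1 - 1 = p from by omega] at horig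
          refine ok_of_coll ⟨?_, horig.2⟩ (Or.inl hmem)
          exact head_of hi (head_resp horig.1) (by
            have := (hrange (p + 1) (by omega) (by omega)).2
            omega)
    · by_cases hii : G.Adj (f (p - 1)) (dd 1)
      · -- branch (iii)
        rcases Nat.eq_zero_or_pos (p - 1) with hp1 | hp1
        · -- left endpoint reached : final splice
          apply spliceIns hw (dd 1) (show p - 1 + 2 ≤ q' from by omega) hq2 hii hchq
          · intro h; omega
          · refine ok_of_coll ⟨?_, hheadq⟩ hd1mem
            exact head_of hii hrsp1 (by omega)
          · exact hOkq
          · exact ⟨t, by omega, by omega, hlt1⟩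
        · by_cases hmem : f (p - 1) ∈ c
          · -- recurse
            have horig := coll_of_mem hw (p - 1) hp1 (by omega) hmem
            rw [show p - 1 + 1 = p from by omega] at horig
            have hLe : G.comp (f (p - 1)) ≤ G.comp (f p) := head_le horig.2
            have hcolG' : G'.Coll (f (p - 1)) (f p) (f (p + 1)) := by
              refine coll_transfer hV ?_ (hadjw p hpm) ?_ hi hcolp
              · have := hadjw (p - 1) (by omega)
                rwa [show p - 1 + 1 = p from by omega] at this
              · intro h
                have := hinj (p - 1) (by omega) (p + 1) (by omega) h
                omega
            refine ih (p - 1) (by omega) hp1 (by omega) ?_ hii ?_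
            · intro j hj1 hj2
              rcases eq_or_lt_of_le hj1 with rfl | hj
              · exact ⟨hmem, by omega⟩
              · exact hrange j (by omega) hj2
            · calc G'.comp (f (p - 1 + 1)) = G'.comp (f p) := by
                    rw [show p - 1 + 1 = p from by omega]
                _ ≤ G'.comp (f (p + 1)) := head_le hcolG'.2
                _ ≤ G'.comp (f t) := hINV'
          · -- exit : final splice at p - 1
            apply spliceIns hw (dd 1) (show p - 1 + 2 ≤ q' from by omega) hq2 hii hchq
            · intro hp2
              refine ok_of_not_coll ?_ hmem
              intro hcol
              have := head_le hcol.2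
              omega
            · refine ok_of_coll ⟨?_, hheadq⟩ hd1mem
              exact head_of hii hrsp1 (by omega)
            · exact hOkq
            · exact ⟨t, by omega, by omega, hlt1⟩
      · -- branch (ii) : contradiction
        exfalso
        have hadjp : G.Adj (f (p - 1)) (f p) := by
          have := hadjw (p - 1) (by omega)
          rwa [show p - 1 + 1 = p from by omega] at this
        have hcolG' : G'.Coll (f (p - 1)) (f p) (f (p + 1)) := by
          refine coll_transfer hV hadjp (hadjw p hpm) ?_ hi hcolp
          intro h
          have := hinj (p - 1) (by omega) (p + 1) (by omega) h
          omega
        have hGtrans2 : ¬ G.Coll (f (p - 1)) (f p) (dd 1) := by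
          intro h
          have := head_le h.2
          omega
        have hne2 : f (p - 1) ≠ dd 1 := by
          intro h
          have h7 : G.comp (dd 1) < G.comp (f (p - 1)) := by omega
          rw [h] at h7
          omega
        have htr' := trans_transfer hskel hV hadjp hchord hne2 hii hGtrans2
        have hnh' : ¬ G'.ArrowheadAt (dd 1) (f p) := fun h => htr' ⟨hcolG'.1, h⟩
        have hresp' : ¬ G'.isContext (f p) := head_resp hcolG'.2
        have h1 : G'.comp (f p) ≤ G'.comp (f (p + 1)) := head_le hcolG'.2
        have h4 : G'.comp (dd 1) < G'.comp (f p) := by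
          by_contra h
          exact hnh' (head_of ((hskel _ _).1 (adj_symm hchord)) hresp' (by omega))
        omega

end RegressionGraph

namespace RegressionGraph

variable {N : Type} {G G' : RegressionGraph N}

/-- Entry into the left spiral for a type-(II) violation with left-side failure. -/
lemma violII_entry (hskel : ∀ i k, G.Adj i k ↔ G'.Adj i k)
    (hV : ∀ i o k, G.IsCollisionV i o k ↔ G'.IsCollisionV i o k)
    {a b c : Set N} {f : ℕ → N} {m : ℕ}
    (hw : G.IsLooseWalk a b c f m)
    (hinj : ∀ s ≤ m, ∀ u ≤ m, f s = f u → s = u)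
    {t : ℕ} (ht0 : 0 < t) (htm : t < m)
    (hGtrans : ¬ G.Coll (f (t - 1)) (f t) (f (t + 1)))
    (hcoll' : G'.Coll (f (t - 1)) (f t) (f (t + 1)))
    (hnotc : f t ∉ c)
    (hadjxy : G.Adj (f (t - 1)) (f (t + 1)))
    (hX : ¬ (0 < t - 1 → G.Ok c (f (t - 1 - 1)) (f (t - 1)) (f (t + 1)))) :
    ∃ g m', G.IsLooseWalk a b c g m' ∧ G.mu g m' < G.mu f m := by
  have hadjw := hw.2.1
  have hok := hw.2.2.2.2
  have ht1 : 0 < t - 1 := by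
    by_contra h
    exact hX (fun hh => absurd hh h)
  have hnok : ¬ G.Ok c (f (t - 1 - 1)) (f (t - 1)) (f (t + 1)) := fun h => hX (fun _ => h)
  have hadjxo : G.Adj (f (t - 1)) (f t) := by
    have := hadjw (t - 1) (by omega)
    rwa [show t - 1 + 1 = t from by omega] at this
  -- derive the failure facts
  have hfail : f (t - 1) ∈ c ∧ ¬ G.ArrowheadAt (f (t + 1)) (f (t - 1)) := by
    rcases Classical.em (G.Coll (f (t - 1 - 1)) (f (t - 1)) (f (t + 1))) with hcolX | hcolX
    · exfalso
      apply hnok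
      refine ok_of_coll hcolX ?_
      by_cases horig : G.Coll (f (t - 1 - 1)) (f (t - 1)) (f (t - 1 + 1))
      · exact (hok (t - 1) ht1 (by omega)).1 horig
      · exfalso
        have hnh : ¬ G.ArrowheadAt (f (t - 1 + 1)) (f (t - 1)) := fun h => horig ⟨hcolX.1, h⟩
        rw [show t - 1 + 1 = t from by omega] at hnh
        have hrx : ¬ G.isContext (f (t - 1)) := head_resp hcolX.2
        have hlt : G.comp (f t) < G.comp (f (t - 1)) := by
          by_contra h
          exact hnh (head_of (adj_symm hadjxo) hrx (by omega))
        have hro : ¬ G.isContext (f t) := resp_of_edge_lt (adj_symm hadjxo) hrx hlt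
        have harr : G.arrow (f t) (f (t - 1)) := arrow_of hadjxo hro hlt
        have h1 : G.ArrowheadAt (f (t - 1)) (f t) := Or.inl harr
        have h2 : G.ArrowheadAt (f (t + 1)) (f t) := by
          refine head_of (adj_symm (hadjw t htm)) hro ?_
          have := head_le hcolX.2
          omega
        exact hGtrans ⟨h1, h2⟩
    · have hxc : f (t - 1) ∈ c := by
        by_contra h
        exact hnok (ok_of_not_coll hcolX h)
      have horig := coll_of_mem hw (t - 1) ht1 (by omega) hxc
      exact ⟨hxc, fun h => hcolX ⟨horig.1, h⟩⟩
  obtain ⟨hxc, hnhyx⟩ := hfail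
  have horigx := coll_of_mem hw (t - 1) ht1 (by omega) hxc
  rw [show t - 1 + 1 = t from by omega] at horigx
  have hrespx : ¬ G.isContext (f (t - 1)) := head_resp horigx.1
  have hLo : G.comp (f (t - 1)) ≤ G.comp (f t) := head_le horigx.2
  have hcy : G.comp (f (t + 1)) < G.comp (f (t - 1)) := by
    by_contra h
    exact hnhyx (head_of (adj_symm hadjxy) hrespx (by omega))
  have hrespy : ¬ G.isContext (f (t + 1)) := resp_of_edge_lt (adj_symm hadjxy) hrespx hcy
  have hyOk : t + 1 < m → ∀ z, G.ArrowheadAt z (f (t + 1)) →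
      G.Ok c z (f (t + 1)) (f (t + 2)) := by
    intro hq z hz
    have horigy := hok (t + 1) (by omega) hq
    rw [show t + 1 - 1 = t from by omega] at horigy
    have hheadoy : G.ArrowheadAt (f t) (f (t + 1)) :=
      head_of (hadjw t htm) hrespy (by omega)
    constructor
    · intro hcol
      exact horigy.1 ⟨hheadoy, hcol.2⟩
    · intro hncol
      exact horigy.2 (fun hc => hncol ⟨hz, hc.2⟩)
  refine loopII hskel hV hw hinj ht0 htm hGtrans hcoll' hnotc hLo hcy hrespy hyOk
    (t - 1) ht1 (le_refl _) ?_ hadjxy ?_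
  · intro j hj1 hj2
    have : j = t - 1 := by omega
    rw [this]
    exact ⟨hxc, rfl⟩
  · rw [show t - 1 + 1 = t from by omega]

end RegressionGraph

namespace RegressionGraph

variable {N : Type} {G G' : RegressionGraph N}

/-- From a violation of the `G'`-activeness condition at an inner node of a loose
`G`-walk, produce a smaller loose `G`-walk. -/
lemma violation_step (hskel : ∀ i k, G.Adj i k ↔ G'.Adj i k)
    (hV : ∀ i o k, G.IsCollisionV i o k ↔ G'.IsCollisionV i o k)
    {a b c : Set N} {f : ℕ → N} {m : ℕ}
    (hw : G.IsLooseWalk a b c f m)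
    (hinj : ∀ s ≤ m, ∀ u ≤ m, f s = f u → s = u)
    {t : ℕ} (ht0 : 0 < t) (htm : t < m)
    (hbad : ¬ G'.Ok c (f (t - 1)) (f t) (f (t + 1))) :
    ∃ g m', G.IsLooseWalk a b c g m' ∧ G.mu g m' < G.mu f m := by
  have hadjw := hw.2.1
  have hok := hw.2.2.2.2
  have hokG := hok t ht0 htm
  have hadjxo : G.Adj (f (t - 1)) (f t) := by
    have := hadjw (t - 1) (by omega)
    rwa [show t - 1 + 1 = t from by omega] at this
  have hne_xy : f (t - 1) ≠ f (t + 1) := by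
    intro h
    have := hinj (t - 1) (by omega) (t + 1) (by omega) h
    omega
  rcases Classical.em (G'.Coll (f (t - 1)) (f t) (f (t + 1))) with hcoll' | hcoll'
  · -- the node is a collision node in G' outside c ∪ ant' c
    have hmem' : f t ∉ c ∪ G'.antSet c := by
      intro h
      exact hbad ⟨fun _ => h, fun hnc => absurd hcoll' hnc⟩
    have hnotc : f t ∉ c := fun h => hmem' (Or.inl h)
    by_cases hGcoll : G.Coll (f (t - 1)) (f t) (f (t + 1))
    · -- type (III)
      have ho_ant : f t ∈ G.antSet c := by
        rcases hokG.1 hGcoll with h | h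
        · exact absurd h hnotc
        · exact h
      have hrespo : ¬ G.isContext (f t) := head_resp hGcoll.1
      obtain ⟨dd, r, hch⟩ := exists_chain ho_ant hrespo
      obtain ⟨hd0, hr1, hdrc, hdsteps, hdnc, hdrsp, hdstrict, hdnadj⟩ := id hch
      have hrsp1 : ¬ G.isContext (dd 1) := hdrsp 1 hr1
      have hlt1 : G.comp (dd 1) < G.comp (f t) := by
        have := hdstrict 0 1 (by omega) hr1
        rwa [hd0] at this
      have harr1 : G.arrow (dd 1) (dd 0) := hdsteps 0 (by omega)
      have hadj_od1 : G.Adj (f t) (dd 1) := by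
        rw [← hd0]
        exact adj_symm (arrow_adj harr1)
      have hrespo' : ¬ G'.isContext (f t) := head_resp hcoll'.1
      have hGF' : G'.comp (f t) ≤ G'.comp (dd 1) := by
        by_contra hlt'
        push_neg at hlt'
        have hrespd' : ¬ G'.isContext (dd 1) :=
          resp_of_edge_lt ((hskel _ _).1 (adj_symm hadj_od1)) hrespo' hlt'
        have harr' : G'.arrow (dd 1) (dd 0) := by
          rw [hd0]
          exact arrow_of ((hskel _ _).1 hadj_od1) hrespd' hlt'
        rcases chain_transfer hskel hV hch harr' with h | h
        · exact hmem' (Or.inr h)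
        · exact hmem' (Or.inl h)
      have hd1head' : G'.ArrowheadAt (dd 1) (f t) :=
        head_of ((hskel _ _).1 (adj_symm hadj_od1)) hrespo' hGF'
      -- chords from x and y to dd 1
      have hchordx : G.Adj (f (t - 1)) (dd 1) := by
        by_contra hn
        have hcompx : G.comp (f t) ≤ G.comp (f (t - 1)) := head_le hGcoll.1
        have hne : f (t - 1) ≠ dd 1 := by
          intro h
          rw [h] at hcompx
          omega
        have hGtr : ¬ G.Coll (f (t - 1)) (f t) (dd 1) := by
          intro h
          have := head_le h.2
          omega
        have htr' := trans_transfer hskel hV hadjxo hadj_od1 hne hn hGtr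
        exact htr' ⟨hcoll'.1, hd1head'⟩
      have hchordy : G.Adj (f (t + 1)) (dd 1) := by
        by_contra hn
        have hcompy : G.comp (f t) ≤ G.comp (f (t + 1)) := head_le hGcoll.2
        have hne : f (t + 1) ≠ dd 1 := by
          intro h
          rw [h] at hcompy
          omega
        have hGtr : ¬ G.Coll (f (t + 1)) (f t) (dd 1) := by
          intro h
          have := head_le h.2
          omega
        have htr' := trans_transfer hskel hV (adj_symm (hadjw t htm)) hadj_od1 hne hn hGtr
        exact htr' ⟨hcoll'.2, hd1head'⟩
      have hd1mem : dd 1 ∈ c ∪ G.antSet c := chain_mem_ant hch 1 hr1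
      have hcompx : G.comp (f t) ≤ G.comp (f (t - 1)) := head_le hGcoll.1
      rcases loopIII_right hskel hV hw hinj ht0 htm hGcoll ho_ant hch hGF'
        (m - t) (t + 1) (by omega) (le_refl _) (by omega)
        (fun j hj1 hj2 => absurd hj1 (by omega))
        (adj_symm hchordy)
        (by rw [show t + 1 - 1 = t from by omega])
        with hsm | ⟨q', hq'1, hq'2, hchq, hheadq, hOkq⟩
      · exact hsm
      · rcases Nat.eq_zero_or_pos (t - 1) with ht1 | ht1
        · apply spliceIns hw (dd 1) (show t - 1 + 2 ≤ q' from by omega) hq'2 hchordx hchq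
          · intro h; omega
          · exact ok_of_coll ⟨head_of hchordx hrsp1 (by omega), hheadq⟩ hd1mem
          · exact hOkq
          · exact ⟨t, by omega, by omega, hlt1⟩
        · by_cases hxc : f (t - 1) ∈ c
          · have horigx := coll_of_mem hw (t - 1) ht1 (by omega) hxc
            rw [show t - 1 + 1 = t from by omega] at horigx
            refine loopIII_left hskel hV hw hinj ht0 htm hGcoll ho_ant hch hGF'
              hq'1 hq'2 hchq hheadq hOkq (t - 1) ht1 (le_refl _) ?_ hchordx ?_
            · intro j hj1 hj2
              have hj : j = t - 1 := by omega
              rw [hj]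
              exact ⟨hxc, le_antisymm (head_le horigx.2) hcompx⟩
            · rw [show t - 1 + 1 = t from by omega]
          · apply spliceIns hw (dd 1) (show t - 1 + 2 ≤ q' from by omega) hq'2 hchordx hchq
            · intro h
              refine ok_of_not_coll ?_ hxc
              intro hcol
              have := head_le hcol.2
              omega
            · exact ok_of_coll ⟨head_of hchordx hrsp1 (by omega), hheadq⟩ hd1mem
            · exact hOkq
            · exact ⟨t, by omega, by omega, hlt1⟩
    · -- type (II)
      have hadjxy : G.Adj (f (t - 1)) (f (t + 1)) := by
        by_contra hnadj
        apply hGcoll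
        have hV' : ∀ i o k, G'.IsCollisionV i o k ↔ G.IsCollisionV i o k :=
          fun i o k => (hV i o k).symm
        refine coll_transfer hV' ((hskel _ _).1 hadjxo) ((hskel _ _).1 (hadjw t htm))
          hne_xy (fun h => hnadj ((hskel _ _).2 h)) hcoll'
      by_cases hX : 0 < t - 1 → G.Ok c (f (t - 1 - 1)) (f (t - 1)) (f (t + 1))
      · by_cases hY : t + 1 < m → G.Ok c (f (t - 1)) (f (t + 1)) (f (t + 1 + 1))
        · exact spliceCut hw (by omega) (by omega) hadjxy hX hY
        · -- y-side failure : reverse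
          have htm2 : t + 1 < m := by
            by_contra h
            exact hY (fun hh => absurd hh h)
          have hnokY : ¬ G.Ok c (f (t - 1)) (f (t + 1)) (f (t + 1 + 1)) :=
            fun h => hY (fun _ => h)
          have hwr : G.IsLooseWalk b a c (fun u => f (m - u)) m := loose_reverse hw
          have hinjr : ∀ s ≤ m, ∀ u ≤ m, (fun u => f (m - u)) s = (fun u => f (m - u)) u
              → s = u := by
            intro s hs u hu heq
            have := hinj (m - s) (by omega) (m - u) (by omega) heq
            omega
          have e1 : m - (m - t - 1) = t + 1 := by omega
          have e2 : m - (m - t) = t := by omega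
          have e3 : m - (m - t + 1) = t - 1 := by omega
          have e4 : m - (m - t - 1 - 1) = t + 2 := by omega
          obtain ⟨g, m', hg, hmug⟩ := violII_entry hskel hV hwr hinjr
            (t := m - t) (by omega) (by omega)
            (by show ¬ G.Coll (f (m - (m - t - 1))) (f (m - (m - t))) (f (m - (m - t + 1)))
                rw [e1, e2, e3]
                exact fun h => hGcoll ⟨h.2, h.1⟩)
            (by show G'.Coll (f (m - (m - t - 1))) (f (m - (m - t))) (f (m - (m - t + 1)))
                rw [e1, e2, e3]
                exact ⟨hcoll'.2, hcoll'.1⟩)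
            (by show f (m - (m - t)) ∉ c
                rw [e2]
                exact hnotc)
            (by show G.Adj (f (m - (m - t - 1))) (f (m - (m - t + 1)))
                rw [e1, e3]
                exact adj_symm hadjxy)
            (by intro himp
                apply hnokY
                have h2 := himp (by omega)
                have h3 : G.Ok c (f (m - (m - t - 1 - 1))) (f (m - (m - t - 1)))
                    (f (m - (m - t + 1))) := h2
                rw [e1, e3, e4] at h3
                exact ok_symm h3)
          refine ⟨fun u => g (m' - u), m', loose_reverse hg, ?_⟩
          have hmur2 : G.mu (fun u => g (m' - u)) m' = G.mu g m' := mu_reverse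
          have hmur : G.mu (fun u => f (m - u)) m = G.mu f m := mu_reverse
          omega
      · exact violII_entry hskel hV hw hinj ht0 htm hGcoll hcoll' hnotc hadjxy hX
  · -- the node is a transmitting node of G' inside c : type (I)
    have hxc : f t ∈ c := by
      by_contra h
      exact hbad (ok_of_not_coll hcoll' h)
    have hGcoll : G.Coll (f (t - 1)) (f t) (f (t + 1)) := by
      by_contra h
      exact hokG.2 h hxc
    have hrespo : ¬ G.isContext (f t) := head_resp hGcoll.1
    have hadjxy : G.Adj (f (t - 1)) (f (t + 1)) := by
      by_contra hnadj
      exact hcoll' (coll_transfer hV hadjxo (hadjw t htm) hne_xy hnadj hGcoll)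
    apply spliceCut hw (by omega) (by omega) hadjxy
    · -- x-side junction
      intro ht1
      by_cases hcolX : G.Coll (f (t - 1 - 1)) (f (t - 1)) (f (t + 1))
      · refine ok_of_coll hcolX ?_
        by_cases horig : G.Coll (f (t - 1 - 1)) (f (t - 1)) (f (t - 1 + 1))
        · exact (hok (t - 1) ht1 (by omega)).1 horig
        · have hnh : ¬ G.ArrowheadAt (f (t - 1 + 1)) (f (t - 1)) :=
            fun h => horig ⟨hcolX.1, h⟩
          rw [show t - 1 + 1 = t from by omega] at hnh
          have hrx : ¬ G.isContext (f (t - 1)) := head_resp hcolX.2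
          have hlt : G.comp (f t) < G.comp (f (t - 1)) := by
            by_contra h
            exact hnh (head_of (adj_symm hadjxo) hrx (by omega))
          have harr : G.arrow (f t) (f (t - 1)) := arrow_of hadjxo hrespo hlt
          have hnotc1 : f (t - 1) ∉ c := by
            intro hmem
            exact horig (coll_of_mem hw (t - 1) ht1 (by omega) hmem)
          right
          exact mem_antSet hnotc1 hxc
            (anterior_of_arrow_rtg (Relation.ReflTransGen.single harr))
      · refine ok_of_not_coll hcolX ?_
        intro hmem
        have horig := coll_of_mem hw (t - 1) ht1 (by omega) hmem
        rw [show t - 1 + 1 = t from by omega] at horig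
        have hnh : ¬ G.ArrowheadAt (f (t + 1)) (f (t - 1)) := fun h => hcolX ⟨horig.1, h⟩
        have hrx : ¬ G.isContext (f (t - 1)) := head_resp horig.1
        have hlty : G.comp (f (t + 1)) < G.comp (f (t - 1)) := by
          by_contra h
          exact hnh (head_of (adj_symm hadjxy) hrx (by omega))
        have h5 : G.comp (f (t - 1)) ≤ G.comp (f t) := head_le horig.2
        have h6 : G.comp (f t) ≤ G.comp (f (t + 1)) := head_le hGcoll.2
        omega
    · -- y-side junction
      intro hq1
      by_cases hcolY : G.Coll (f (t - 1)) (f (t + 1)) (f (t + 1 + 1))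
      · refine ok_of_coll hcolY ?_
        by_cases horig : G.Coll (f (t + 1 - 1)) (f (t + 1)) (f (t + 1 + 1))
        · exact (hok (t + 1) (by omega) hq1).1 horig
        · rw [show t + 1 - 1 = t from by omega] at horig
          have hnh : ¬ G.ArrowheadAt (f t) (f (t + 1)) := fun h => horig ⟨h, hcolY.2⟩
          have hry : ¬ G.isContext (f (t + 1)) := head_resp hcolY.2
          have hlt : G.comp (f t) < G.comp (f (t + 1)) := by
            by_contra h
            exact hnh (head_of (hadjw t htm) hry (by omega))
          have harr : G.arrow (f t) (f (t + 1)) :=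
            arrow_of (adj_symm (hadjw t htm)) hrespo hlt
          have hnotc1 : f (t + 1) ∉ c := by
            intro hmem
            have h5 := coll_of_mem hw (t + 1) (by omega) hq1 hmem
            rw [show t + 1 - 1 = t from by omega] at h5
            exact horig h5
          right
          exact mem_antSet hnotc1 hxc
            (anterior_of_arrow_rtg (Relation.ReflTransGen.single harr))
      · refine ok_of_not_coll hcolY ?_
        intro hmem
        have horig := coll_of_mem hw (t + 1) (by omega) hq1 hmem
        rw [show t + 1 - 1 = t from by omega] at horig
        have hnh : ¬ G.ArrowheadAt (f (t - 1)) (f (t + 1)) := fun h => hcolY ⟨h, horig.2⟩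
        have hry : ¬ G.isContext (f (t + 1)) := head_resp horig.2
        have hlty : G.comp (f (t - 1)) < G.comp (f (t + 1)) := by
          by_contra h
          exact hnh (head_of hadjxy hry (by omega))
        have h5 : G.comp (f (t + 1)) ≤ G.comp (f t) := head_le horig.1
        have h6 : G.comp (f t) ≤ G.comp (f (t - 1)) := head_le hGcoll.1
        omega

end RegressionGraph

namespace RegressionGraph

variable {N : Type} {G G' : RegressionGraph N}

lemma transfer_exists (hskel : ∀ i k, G.Adj i k ↔ G'.Adj i k)
    (hV : ∀ i o k, G.IsCollisionV i o k ↔ G'.IsCollisionV i o k)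
    {a b c : Set N} (hab : Disjoint a b)
    (h : ∃ f m, G.IsLooseWalk a b c f m) : ∃ f m, G'.IsLooseWalk a b c f m := by
  obtain ⟨f, m, hw⟩ := h
  suffices H : ∀ n (f : ℕ → N) (m : ℕ), G.mu f m ≤ n → G.IsLooseWalk a b c f m →
      ∃ g m', G'.IsLooseWalk a b c g m' from H (G.mu f m) f m (le_refl _) hw
  intro n
  induction n using Nat.strong_induction_on with
  | _ n ih =>
    intro f m hmu hw
    by_cases hrep : ∃ s u, s < u ∧ u ≤ m ∧ f s = f u
    · obtain ⟨s, u, hsu, hum, heq⟩ := hrep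
      have hne : f 0 ≠ f m := fun h =>
        (Set.disjoint_left.mp hab hw.2.2.1) (by rw [h]; exact hw.2.2.2.1)
      obtain ⟨g, m', hw', hlt⟩ := cut_repeat hw hne hsu hum heq
      exact ih (G.mu g m') (by omega) g m' (le_refl _) hw'
    · push_neg at hrep
      have hinj : ∀ s ≤ m, ∀ u ≤ m, f s = f u → s = u := by
        intro s hs u hu heq
        by_contra hne
        rcases lt_or_gt_of_ne hne with h | h
        · exact hrep s u h hu heq
        · exact hrep u s h hs heq.symm
      by_cases hok' : ∀ u, 0 < u → u < m → G'.Ok c (f (u - 1)) (f u) (f (u + 1))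
      · exact ⟨f, m, hw.1, fun u hu => (hskel _ _).1 (hw.2.1 u hu),
          hw.2.2.1, hw.2.2.2.1, hok'⟩
      · push_neg at hok'
        obtain ⟨u, h1, h2, h3⟩ := hok'
        obtain ⟨g, m', hg, hlt⟩ := violation_step hskel hV hw hinj h1 h2 h3
        exact ih (G.mu g m') (by omega) g m' (le_refl _) hg

lemma apf_transfer (hskel : ∀ i k, G.Adj i k ↔ G'.Adj i k)
    (hV : ∀ i o k, G.IsCollisionV i o k ↔ G'.IsCollisionV i o k)
    {a b c : Set N} (hab : Disjoint a b)
    (h : G.ActivePathFree a b c) : G'.ActivePathFree a b c := by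
  intro hex
  apply h
  have h1 : ∃ f m, G'.IsLooseWalk a b c f m := by
    obtain ⟨f, m, hap⟩ := hex
    exact ⟨f, m, (isActivePath_iff.1 hap).2⟩
  have hskel' : ∀ i k, G'.Adj i k ↔ G.Adj i k := fun i k => (hskel i k).symm
  have hV' : ∀ i o k, G'.IsCollisionV i o k ↔ G.IsCollisionV i o k :=
    fun i o k => (hV i o k).symm
  exact exists_active_of_loose hab (transfer_exists hskel' hV' hab h1)

end RegressionGraph

/-- **Markov equivalence of regression graphs** (Wermuth and Sadeghi, 2012).
Two regression graphs on the same finite node set having the same skeleton are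
Markov equivalent — for all disjoint subsets `a`, `b`, `c` of the node set, one
graph has no active path between `a` and `b` given `c` exactly when the other
has none — if and only if they have identical sets of collision V-configurations. -/
theorem markov_equivalent_iff_same_collision_Vs
    {N : Type} [Fintype N] (G G' : RegressionGraph N)
    (hskel : ∀ i k, G.Adj i k ↔ G'.Adj i k) :
    ((∀ a b c : Set N, Disjoint a b → Disjoint a c → Disjoint b c →
        (G.ActivePathFree a b c ↔ G'.ActivePathFree a b c)) ↔
      (∀ i o k, G.IsCollisionV i o k ↔ G'.IsCollisionV i o k)) := by
  constructor
  · intro hME i o k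
    constructor
    · exact RegressionGraph.collV_transfer_of_markov hskel hME
    · refine RegressionGraph.collV_transfer_of_markov (fun i k => (hskel i k).symm) ?_
      intro a b c d1 d2 d3
      exact (hME a b c d1 d2 d3).symm
  · intro hV a b c hab hac hbc
    constructor
    · exact RegressionGraph.apf_transfer hskel hV hab
    · exact RegressionGraph.apf_transfer (fun i k => (hskel i k).symm)
        (fun i o k => (hV i o k).symm) hab
end

section
/- Let P be a strictly positive probability distribution on {0,1} × {0,1} × {0,1} with coordinate variables A, B, C. If A ⫫ B (marginal independence) and A ⫫ B | C (conditional independence given C), then A ⫫ C or B ⫫ C. In other words, every positive distribution of three binary variables satisfies singleton transitivity. -/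
/-- Marginal probability of `A = a`. -/
noncomputable def pA (P : Fin 2 × Fin 2 × Fin 2 → ℝ) (a : Fin 2) : ℝ :=
  ∑ b, ∑ c, P (a, b, c)

/-- Marginal probability of `B = b`. -/
noncomputable def pB (P : Fin 2 × Fin 2 × Fin 2 → ℝ) (b : Fin 2) : ℝ :=
  ∑ a, ∑ c, P (a, b, c)

/-- Marginal probability of `C = c`. -/
noncomputable def pC (P : Fin 2 × Fin 2 × Fin 2 → ℝ) (c : Fin 2) : ℝ :=
  ∑ a, ∑ b, P (a, b, c)

/-- Marginal probability of `A = a, B = b`. -/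
noncomputable def pAB (P : Fin 2 × Fin 2 × Fin 2 → ℝ) (a b : Fin 2) : ℝ :=
  ∑ c, P (a, b, c)

/-- Marginal probability of `A = a, C = c`. -/
noncomputable def pAC (P : Fin 2 × Fin 2 × Fin 2 → ℝ) (a c : Fin 2) : ℝ :=
  ∑ b, P (a, b, c)

/-- Marginal probability of `B = b, C = c`. -/
noncomputable def pBC (P : Fin 2 × Fin 2 × Fin 2 → ℝ) (b c : Fin 2) : ℝ :=
  ∑ a, P (a, b, c)

lemma key_aux (x0 x1 y0 y1 c0 c1 q0 q1 : ℝ)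
    (hg0 : q0 * c0 = x0 * y0) (hg1 : q1 * c1 = x1 * y1)
    (hab : (x0 + x1) * (y0 + y1) = q0 + q1) (hc : c0 + c1 = 1) :
    (x0 - (x0 + x1) * c0) * (y0 - (y0 + y1) * c0) = 0 := by
  linear_combination (-(1 - c0)) * hg0 + (-c0) * hg1 + (c0 ^ 2 - c0) * hab + q1 * c0 * hc

/-- **Singleton transitivity of positive binary distributions** (Simpson, 1951).
Let `P` be a strictly positive probability distribution of three binary variables
`A`, `B`, `C`. If `A ⫫ B` (marginally) and `A ⫫ B | C`, then `A ⫫ C` or `B ⫫ C`.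
(Conditional independence given `C` is stated in the equivalent product form
`P(A=a,B=b,C=c)·P(C=c) = P(A=a,C=c)·P(B=b,C=c)`, valid since `P(C=c) > 0`.) -/
theorem positive_binary_singleton_transitivity
    (P : Fin 2 × Fin 2 × Fin 2 → ℝ)
    (hpos : ∀ x, 0 < P x) (hsum : (∑ x, P x) = 1)
    (hAB : ∀ a b, pAB P a b = pA P a * pB P b)
    (hABgC : ∀ a b c, P (a, b, c) * pC P c = pAC P a c * pBC P b c) :
    (∀ a c, pAC P a c = pA P a * pC P c) ∨
    (∀ b c, pBC P b c = pB P b * pC P c) := by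
  have hA0 : pA P 0 = pAC P 0 0 + pAC P 0 1 := by
    simp [pA, pAC, Fin.sum_univ_two];
    try ring
  have hA1 : pA P 1 = pAC P 1 0 + pAC P 1 1 := by
    simp [pA, pAC, Fin.sum_univ_two];
    try ring
  have hB0 : pB P 0 = pBC P 0 0 + pBC P 0 1 := by
    simp [pB, pBC, Fin.sum_univ_two];
    try ring
  have hB1 : pB P 1 = pBC P 1 0 + pBC P 1 1 := by
    simp [pB, pBC, Fin.sum_univ_two];
    try ring
  have hCA : ∀ c, pC P c = pAC P 0 c + pAC P 1 c := by
    intro c; simp [pC, pAC, Fin.sum_univ_two];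
    try ring
  have hCB : ∀ c, pC P c = pBC P 0 c + pBC P 1 c := by
    intro c; simp [pC, pBC, Fin.sum_univ_two];
    try ring
  have hc : pC P 0 + pC P 1 = 1 := by
    rw [← hsum]; simp [pC, Fintype.sum_prod_type, Fin.sum_univ_two];
    try ring
  have hA01 : pA P 0 + pA P 1 = 1 := by
    rw [← hsum]; simp [pA, Fintype.sum_prod_type, Fin.sum_univ_two];
    try ring
  have hB01 : pB P 0 + pB P 1 = 1 := by
    rw [← hsum]; simp [pB, Fintype.sum_prod_type, Fin.sum_univ_two];
    try ring
  have hAB00 : pAB P 0 0 = P (0, 0, 0) + P (0, 0, 1) := by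
    simp [pAB, Fin.sum_univ_two]
  have hab' : (pAC P 0 0 + pAC P 0 1) * (pBC P 0 0 + pBC P 0 1)
      = P (0, 0, 0) + P (0, 0, 1) := by
    rw [← hA0, ← hB0, ← hAB00, hAB 0 0]
  have key := key_aux (pAC P 0 0) (pAC P 0 1) (pBC P 0 0) (pBC P 0 1)
      (pC P 0) (pC P 1) (P (0, 0, 0)) (P (0, 0, 1))
      (hABgC 0 0 0) (hABgC 0 0 1) hab' hc
  rcases mul_eq_zero.1 key with h | h
  · left
    have e00 : pAC P 0 0 = pA P 0 * pC P 0 := by linear_combination h - pC P 0 * hA0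
    have e01 : pAC P 0 1 = pA P 0 * pC P 1 := by
      linear_combination -hA0 - e00 - pA P 0 * hc
    have e10 : pAC P 1 0 = pA P 1 * pC P 0 := by
      linear_combination -hCA 0 - e00 - pC P 0 * hA01
    have e11 : pAC P 1 1 = pA P 1 * pC P 1 := by
      linear_combination -hCA 1 - e01 - pC P 1 * hA01
    intro a c; fin_cases a <;> fin_cases c <;> assumption
  · right
    have e00 : pBC P 0 0 = pB P 0 * pC P 0 := by linear_combination h - pC P 0 * hB0
    have e01 : pBC P 0 1 = pB P 0 * pC P 1 := by
      linear_combination -hB0 - e00 - pB P 0 * hc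
    have e10 : pBC P 1 0 = pB P 1 * pC P 0 := by
      linear_combination -hCB 0 - e00 - pC P 0 * hB01
    have e11 : pBC P 1 1 = pB P 1 * pC P 1 := by
      linear_combination -hCB 1 - e01 - pC P 1 * hB01
    intro b c; fin_cases b <;> fin_cases c <;> assumption
end

section
/- Let Σ be a real symmetric positive definite matrix indexed by a finite set N. For every d ⊆ N and distinct i, k, h in N \ d, one has σ_{hh|d} > 0 and the recursion relation σ_{ik|{h}∪d} = σ_{ik|d} − σ_{ih|d} · σ_{hk|d} / σ_{hh|d} holds. -/
/-- The partial covariance `σ_{ik|d} = Σ_{ik} − Σ_{id} (Σ_{dd})⁻¹ Σ_{dk}`,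
an entry of the Schur complement of the block `Σ_{dd}` (with `σ_{ik|∅} = Σ_{ik}`). -/
noncomputable def partialCov {N : Type} [Fintype N] [DecidableEq N]
    (S : Matrix N N ℝ) (d : Finset N) (i k : N) : ℝ :=
  S i k - ∑ p : {x // x ∈ d}, ∑ q : {x // x ∈ d},
    S i p.1 * (Matrix.of fun p' q' : {x // x ∈ d} => S p'.1 q'.1)⁻¹ p q * S q.1 k

namespace PartialCovAux

open Matrix

variable {N : Type} [Fintype N] [DecidableEq N]

/-- The `d × d` block of `S`. -/
noncomputable def blockA (S : Matrix N N ℝ) (d : Finset N) :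
    Matrix {x // x ∈ d} {x // x ∈ d} ℝ :=
  Matrix.of fun p q : {x // x ∈ d} => S p.1 q.1

/-- Sums of extended-by-zero vectors reduce to sums over the subtype. -/
lemma sum_extend (d : Finset N) (x : {n // n ∈ d} → ℝ) (f : N → ℝ) :
    (∑ n, (if hn : n ∈ d then x ⟨n, hn⟩ else 0) * f n)
      = ∑ p : {n // n ∈ d}, x p * f p.1 := by
  rw [show (∑ n, (if hn : n ∈ d then x ⟨n, hn⟩ else 0) * f n)
        = ∑ n ∈ d, (if hn : n ∈ d then x ⟨n, hn⟩ else 0) * f n from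
      (Finset.sum_subset d.subset_univ (by intro n _ hn; simp [hn])).symm,
    ← Finset.sum_coe_sort]
  exact Finset.sum_congr rfl fun p _ => by simp [p.2]

lemma blockA_posDef {S : Matrix N N ℝ} (hS : S.PosDef) (d : Finset N) :
    (blockA S d).PosDef := by
  have hsymm : ∀ a b : N, S a b = S b a := fun a b => by
    simpa using (hS.1.apply a b).symm
  refine Matrix.PosDef.of_dotProduct_mulVec_pos ?_ ?_
  · ext p q
    simpa [blockA, Matrix.conjTranspose, Matrix.transpose] using hsymm q.1 p.1
  · intro x hx
    set y : N → ℝ := fun n => if hn : n ∈ d then x ⟨n, hn⟩ else 0 with hy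
    have hy0 : y ≠ 0 := by
      intro h0
      apply hx
      funext p
      have := congrFun h0 p.1
      simpa [hy, p.2] using this
    have hpos := hS.dotProduct_mulVec_pos hy0
    have hcalc : dotProduct (star y) (S *ᵥ y)
        = dotProduct (star x) (blockA S d *ᵥ x) := by
      simp only [star_trivial, dotProduct, mulVec]
      rw [show (∑ n, y n * ∑ m, S n m * y m)
            = ∑ n, y n * ∑ m, y m * S n m by
          refine Finset.sum_congr rfl fun n _ => ?_
          congr 1; exact Finset.sum_congr rfl fun m _ => mul_comm _ _,
        hy]
      rw [sum_extend d x (fun n => ∑ m, (if hm : m ∈ d then x ⟨m, hm⟩ else 0) * S n m)]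
      refine Finset.sum_congr rfl fun p _ => ?_
      rw [sum_extend d x (fun m => S p.1 m)]
      congr 1
      refine Finset.sum_congr rfl fun q _ => ?_
      simp [blockA, mul_comm]
    rw [← hcalc]
    exact hpos

lemma blockA_isUnit_det {S : Matrix N N ℝ} (hS : S.PosDef) (d : Finset N) :
    IsUnit (blockA S d).det :=
  isUnit_iff_ne_zero.mpr (blockA_posDef hS d).det_pos.ne'

/-- `partialCov` via any solution of the linear system. -/
lemma partialCov_eq {S : Matrix N N ℝ} (hS : S.PosDef) (d : Finset N) (i k : N)
    (w : {x // x ∈ d} → ℝ) (hw : blockA S d *ᵥ w = fun p => S p.1 k) :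
    partialCov S d i k = S i k - ∑ q : {x // x ∈ d}, S i q.1 * w q := by
  have hw' : w = (blockA S d)⁻¹ *ᵥ fun p => S p.1 k := by
    rw [← hw, Matrix.mulVec_mulVec, Matrix.nonsing_inv_mul _ (blockA_isUnit_det hS d),
      Matrix.one_mulVec]
  rw [hw']
  unfold partialCov
  congr 1
  simp only [mulVec, dotProduct, blockA, Finset.mul_sum]
  refine Finset.sum_congr rfl fun p _ => Finset.sum_congr rfl fun q _ => ?_
  ring

/-- The canonical solution. -/
noncomputable def sol (S : Matrix N N ℝ) (d : Finset N) (k : N) :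
    {x // x ∈ d} → ℝ :=
  (blockA S d)⁻¹ *ᵥ fun p => S p.1 k

lemma sol_spec {S : Matrix N N ℝ} (hS : S.PosDef) (d : Finset N) (k : N) :
    blockA S d *ᵥ sol S d k = fun p => S p.1 k := by
  rw [sol, Matrix.mulVec_mulVec, Matrix.mul_nonsing_inv _ (blockA_isUnit_det hS d),
    Matrix.one_mulVec]

lemma partialCov_pos {S : Matrix N N ℝ} (hS : S.PosDef) (d : Finset N) {h : N}
    (hh : h ∉ d) : 0 < partialCov S d h h := by
  have hsymm : ∀ a b : N, S a b = S b a := fun a b => by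
    simpa using (hS.1.apply a b).symm
  set u := sol S d h with hu
  have husp := sol_spec hS d h
  have hrow : ∀ p : {x // x ∈ d}, (∑ q : {x // x ∈ d}, S p.1 q.1 * u q) = S p.1 h := by
    intro p
    have := congrFun husp p
    simpa [mulVec, dotProduct, blockA] using this
  have hpc := partialCov_eq hS d h h u husp
  -- y = e_h - extension of u
  set y : N → ℝ := fun n => (if n = h then 1 else 0)
      + (if hn : n ∈ d then (-u) ⟨n, hn⟩ else 0) with hy
  have hyh : y h = 1 := by simp [hy, hh]
  have hy0 : y ≠ 0 := by
    intro h0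
    have := congrFun h0 h
    rw [hyh] at this
    norm_num at this
  have hpos := hS.dotProduct_mulVec_pos hy0
  have hcalc : dotProduct (star y) (S *ᵥ y) = partialCov S d h h := by
    simp only [star_trivial, dotProduct, mulVec, hy]
    have hinner : ∀ n : N, (∑ m, S n m * ((if m = h then 1 else 0)
        + (if hm : m ∈ d then (-u) ⟨m, hm⟩ else 0)))
        = S n h - ∑ q : {x // x ∈ d}, S n q.1 * u q := by
      intro n
      rw [show (∑ m, S n m * ((if m = h then (1:ℝ) else 0)
            + (if hm : m ∈ d then (-u) ⟨m, hm⟩ else 0)))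
          = (∑ m, (if m = h then S n m else 0))
            + ∑ m, (if hm : m ∈ d then (-u) ⟨m, hm⟩ else 0) * S n m by
          rw [← Finset.sum_add_distrib]
          refine Finset.sum_congr rfl fun m _ => ?_
          rw [mul_add, mul_boole, mul_comm (S n m)]]
      rw [Finset.sum_ite_eq' Finset.univ h (fun m => S n m)]
      rw [sum_extend d (-u) (fun m => S n m)]
      simp only [Finset.mem_univ, if_true]
      have : (∑ p : {x // x ∈ d}, (-u) p * S n p.1)
          = -∑ q : {x // x ∈ d}, S n q.1 * u q := by
        rw [← Finset.sum_neg_distrib]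
        exact Finset.sum_congr rfl fun q _ => by
          simp only [Pi.neg_apply]; ring
      rw [this]; ring
    calc (∑ n, ((if n = h then (1:ℝ) else 0)
            + (if hn : n ∈ d then (-u) ⟨n, hn⟩ else 0))
          * ∑ m, S n m * ((if m = h then 1 else 0)
            + (if hm : m ∈ d then (-u) ⟨m, hm⟩ else 0)))
        = ∑ n, ((if n = h then (1:ℝ) else 0)
            + (if hn : n ∈ d then (-u) ⟨n, hn⟩ else 0))
          * (S n h - ∑ q : {x // x ∈ d}, S n q.1 * u q) := by
          exact Finset.sum_congr rfl fun n _ => by rw [hinner n]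
      _ = (∑ n, (if n = h then 1 else 0)
            * (S n h - ∑ q : {x // x ∈ d}, S n q.1 * u q))
          + ∑ n, (if hn : n ∈ d then (-u) ⟨n, hn⟩ else 0)
            * (S n h - ∑ q : {x // x ∈ d}, S n q.1 * u q) := by
          rw [← Finset.sum_add_distrib]
          exact Finset.sum_congr rfl fun n _ => by ring
      _ = partialCov S d h h := by
          rw [show (∑ n, (if n = h then (1:ℝ) else 0)
                * (S n h - ∑ q : {x // x ∈ d}, S n q.1 * u q))
              = ∑ n, (if n = h then
                  S n h - ∑ q : {x // x ∈ d}, S n q.1 * u q else 0) from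
            Finset.sum_congr rfl fun n _ => by by_cases hnh : n = h <;> simp [hnh]]
          rw [Finset.sum_ite_eq' Finset.univ h]
          rw [sum_extend d (-u) (fun n => S n h - ∑ q : {x // x ∈ d}, S n q.1 * u q)]
          simp only [Finset.mem_univ, if_true]
          have : (∑ p : {x // x ∈ d},
              (-u) p * (S p.1 h - ∑ q : {x // x ∈ d}, S p.1 q.1 * u q)) = 0 := by
            refine Finset.sum_eq_zero fun p _ => ?_
            rw [hrow p]
            ring
          rw [this, add_zero, hpc]
  rw [← hcalc]
  exact hpos

end PartialCovAux

/-- **Recursion relation for partial covariances.** For a real symmetric positive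
definite matrix `Σ` indexed by a finite set `N`, every `d ⊆ N` and distinct
`i, k, h ∈ N \ d`: `σ_{hh|d} > 0` and
`σ_{ik|{h}∪d} = σ_{ik|d} − σ_{ih|d} · σ_{hk|d} / σ_{hh|d}`. -/
theorem partialCov_recursion {N : Type} [Fintype N] [DecidableEq N]
    (S : Matrix N N ℝ) (hS : S.PosDef) (d : Finset N) (i k h : N)
    (hi : i ∉ d) (hk : k ∉ d) (hh : h ∉ d)
    (hik : i ≠ k) (hih : i ≠ h) (hkh : k ≠ h) :
    0 < partialCov S d h h ∧
    partialCov S (insert h d) i k =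
      partialCov S d i k - partialCov S d i h * partialCov S d h k / partialCov S d h h := by
  open PartialCovAux Matrix in
  have hpos := partialCov_pos hS d hh
  refine ⟨hpos, ?_⟩
  have hne : partialCov S d h h ≠ 0 := hpos.ne'
  set w := sol S d k with hwdef
  set u := sol S d h with hudef
  have hwsp := sol_spec hS d k
  have husp := sol_spec hS d h
  have hrow_w : ∀ p : {x // x ∈ d}, (∑ q : {x // x ∈ d}, S p.1 q.1 * w q) = S p.1 k := by
    intro p
    simpa [Matrix.mulVec, dotProduct, blockA] using congrFun hwsp p
  have hrow_u : ∀ p : {x // x ∈ d}, (∑ q : {x // x ∈ d}, S p.1 q.1 * u q) = S p.1 h := by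
    intro p
    simpa [Matrix.mulVec, dotProduct, blockA] using congrFun husp p
  have hpc_ik := partialCov_eq hS d i k w hwsp
  have hpc_ih := partialCov_eq hS d i h u husp
  have hpc_hk := partialCov_eq hS d h k w hwsp
  have hpc_hh := partialCov_eq hS d h h u husp
  set t : ℝ := partialCov S d h k / partialCov S d h h with htdef
  set W : N → ℝ := fun n => if hn : n ∈ d then w ⟨n, hn⟩ - t * u ⟨n, hn⟩ else t with hW
  have hWh : W h = t := by rw [hW]; simp [hh]
  have hWd : ∀ (n : N) (hn : n ∈ d), W n = w ⟨n, hn⟩ - t * u ⟨n, hn⟩ := by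
    intro n hn; rw [hW]; simp [hn]
  have hsum : ∀ n : N, (∑ q : {x // x ∈ insert h d}, S n q.1 * W q.1)
      = S n h * t + ((∑ q : {x // x ∈ d}, S n q.1 * w q)
        - t * ∑ q : {x // x ∈ d}, S n q.1 * u q) := by
    intro n
    rw [Finset.sum_coe_sort (insert h d) (fun m => S n m * W m), Finset.sum_insert hh, hWh]
    congr 1
    rw [← Finset.sum_coe_sort d (fun m => S n m * W m)]
    rw [show (∑ q : {x // x ∈ d}, S n q.1 * W q.1)
          = ∑ q : {x // x ∈ d}, (S n q.1 * w q - t * (S n q.1 * u q)) from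
      Finset.sum_congr rfl fun q _ => by rw [hWd q.1 q.2]; ring]
    rw [Finset.sum_sub_distrib, ← Finset.mul_sum]
  have hsol : blockA S (insert h d) *ᵥ (fun p => W p.1) = fun p => S p.1 k := by
    funext p
    show (∑ q : {x // x ∈ insert h d}, blockA S (insert h d) p q * W q.1) = S p.1 k
    rw [show (∑ q : {x // x ∈ insert h d}, blockA S (insert h d) p q * W q.1)
          = ∑ q : {x // x ∈ insert h d}, S p.1 q.1 * W q.1 from
      Finset.sum_congr rfl fun q _ => by simp [blockA]]
    rw [hsum p.1]
    rcases Finset.mem_insert.mp p.2 with hp | hp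
    · rw [hp]
      have e1 : (∑ q : {x // x ∈ d}, S h q.1 * w q) = S h k - partialCov S d h k := by
        rw [hpc_hk]; ring
      have e2 : (∑ q : {x // x ∈ d}, S h q.1 * u q) = S h h - partialCov S d h h := by
        rw [hpc_hh]; ring
      rw [e1, e2, htdef]
      field_simp
      ring
    · rw [hrow_w ⟨p.1, hp⟩, hrow_u ⟨p.1, hp⟩]
      ring
  have final := partialCov_eq hS (insert h d) i k (fun p => W p.1) hsol
  have e1 : (∑ q : {x // x ∈ d}, S i q.1 * w q) = S i k - partialCov S d i k := by
    rw [hpc_ik]; ring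
  have e2 : (∑ q : {x // x ∈ d}, S i q.1 * u q) = S i h - partialCov S d i h := by
    rw [hpc_ih]; ring
  rw [final, hsum i, e1, e2, htdef]
  field_simp
  ring
end

section
/- Let Σ be a real symmetric positive definite matrix indexed by a finite set N. For every d ⊆ N and distinct i, k, h in N \ d: if σ_{ik|d} = 0 and σ_{ik|{h}∪d} = 0, then σ_{ih|d} = 0 or σ_{kh|d} = 0. In other words, every regular Gaussian distribution satisfies singleton transitivity. -/
open Finset Matrix
set_option linter.unusedSectionVars false
set_option maxHeartbeats 1000000

section Aux
variable {N : Type} [Fintype N] [DecidableEq N]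

noncomputable def extd (d : Finset N) (v : {x // x ∈ d} → ℝ) : N → ℝ :=
  fun a => if ha : a ∈ d then v ⟨a, ha⟩ else 0

lemma sum_dite_mem' (d : Finset N) (g : {x // x ∈ d} → ℝ) :
    ∑ a : N, (if ha : a ∈ d then g ⟨a, ha⟩ else 0) = ∑ p : {x // x ∈ d}, g p := by
  rw [show (∑ a : N, (if ha : a ∈ d then g ⟨a, ha⟩ else 0))
      = ∑ a ∈ d, (if ha : a ∈ d then g ⟨a, ha⟩ else 0) from
    (Finset.sum_subset (Finset.subset_univ d) (by intro a _ ha; simp [ha])).symm,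
    ← Finset.sum_attach d (fun a => if ha : a ∈ d then g ⟨a, ha⟩ else 0),
    Finset.univ_eq_attach]
  exact Finset.sum_congr rfl fun x _ => by rw [dif_pos x.2]

lemma sum_mul_extd (d : Finset N) (v : {x // x ∈ d} → ℝ) (f : N → ℝ) :
    ∑ b : N, f b * extd d v b = ∑ q : {x // x ∈ d}, f q.1 * v q := by
  rw [← sum_dite_mem' d (fun q => f q.1 * v q)]
  refine Finset.sum_congr rfl fun b _ => ?_
  unfold extd; split <;> simp

lemma sum_extd_mul (d : Finset N) (v : {x // x ∈ d} → ℝ) (f : N → ℝ) :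
    ∑ b : N, extd d v b * f b = ∑ q : {x // x ∈ d}, v q * f q.1 := by
  rw [← sum_dite_mem' d (fun q => v q * f q.1)]
  refine Finset.sum_congr rfl fun b _ => ?_
  unfold extd; split <;> simp

lemma sum_insert_split (d : Finset N) (h : N) (hh : h ∉ d)
    (g : {x // x ∈ insert h d} → ℝ) :
    ∑ z : {x // x ∈ insert h d}, g z =
      g ⟨h, Finset.mem_insert_self h d⟩ +
        ∑ p : {x // x ∈ d}, g ⟨p.1, Finset.mem_insert_of_mem p.2⟩ := by
  rw [Finset.univ_eq_attach, Finset.attach_insert, Finset.sum_insert, Finset.sum_image]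
  · rw [Finset.univ_eq_attach]
  · intro x _ y _ hxy
    exact Subtype.ext (by simpa using congrArg Subtype.val hxy)
  · simp only [Finset.mem_image, not_exists]
    intro x hx
    have : x.1 = h := by simpa using congrArg Subtype.val hx.2
    exact hh (this ▸ x.2)

noncomputable def Amat (S : Matrix N N ℝ) (d : Finset N) :
    Matrix {x // x ∈ d} {x // x ∈ d} ℝ :=
  Matrix.of fun p q => S p.1 q.1

variable (S : Matrix N N ℝ)

lemma S_symm (hS : S.PosDef) (a b : N) : S a b = S b a := by
  have := congrFun (congrFun hS.isHermitian a) b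
  simpa [Matrix.conjTranspose_apply] using this.symm

lemma Amat_posDef (hS : S.PosDef) (d : Finset N) : (Amat S d).PosDef := by
  rw [Matrix.posDef_iff_dotProduct_mulVec]
  constructor
  · ext p q
    simpa [Amat, Matrix.conjTranspose_apply] using S_symm S hS q.1 p.1
  · intro x hx
    have hy : extd d x ≠ 0 := by
      intro hy0
      apply hx
      funext p
      have := congrFun hy0 p.1
      simpa [extd, p.2] using this
    have hpos := hS.dotProduct_mulVec_pos hy
    have key : (star (extd d x)) ⬝ᵥ (S *ᵥ extd d x) = (star x) ⬝ᵥ (Amat S d *ᵥ x) := by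
      simp only [star_trivial, dotProduct, Matrix.mulVec]
      calc ∑ a : N, extd d x a * ∑ b : N, S a b * extd d x b
          = ∑ a : N, extd d x a * ∑ q : {x // x ∈ d}, S a q.1 * x q := by
            refine Finset.sum_congr rfl fun a _ => ?_
            rw [sum_mul_extd d x (fun b => S a b)]
        _ = ∑ p : {x // x ∈ d}, x p * ∑ q : {x // x ∈ d}, S p.1 q.1 * x q :=
            sum_extd_mul d x _
        _ = ∑ p : {x // x ∈ d}, x p * ∑ q : {x // x ∈ d}, Amat S d p q * x q := rfl
    rw [key] at hpos
    exact hpos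

lemma partialCov_eq (d : Finset N) (i k : N) :
    partialCov S d i k = S i k - ∑ p : {x // x ∈ d}, ∑ q : {x // x ∈ d},
      S i p.1 * (Amat S d)⁻¹ p q * S q.1 k := rfl

lemma partialCov_pos (hS : S.PosDef) (d : Finset N) (h : N) (hh : h ∉ d) :
    0 < partialCov S d h h := by
  classical
  have hApd := Amat_posDef S hS d
  have hdet : IsUnit (Amat S d).det := isUnit_iff_ne_zero.mpr hApd.det_pos.ne'
  set B := (Amat S d)⁻¹ with hBdef
  set c : {x // x ∈ d} → ℝ := fun p => S p.1 h with hc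
  set w : {x // x ∈ d} → ℝ := B *ᵥ c with hwdef
  have hwq : ∀ p : {x // x ∈ d}, w p = ∑ q : {x // x ∈ d}, B p q * S q.1 h := by
    intro p
    simp [hwdef, Matrix.mulVec, dotProduct, hc]
  have hAw : Amat S d *ᵥ w = c := by
    rw [hwdef, Matrix.mulVec_mulVec, Matrix.mul_nonsing_inv _ hdet, Matrix.one_mulVec]
  set g : N → ℝ := fun a => S a h - ∑ q : {x // x ∈ d}, S a q.1 * w q with hg
  have hsum : (∑ q : {x // x ∈ d}, S h q.1 * w q)
      = ∑ p : {x // x ∈ d}, ∑ q : {x // x ∈ d}, S h p.1 * B p q * S q.1 h := by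
    refine Finset.sum_congr rfl fun p _ => ?_
    rw [hwq p, Finset.mul_sum]
    exact Finset.sum_congr rfl fun q _ => by ring
  have hgh : g h = partialCov S d h h := by
    rw [partialCov_eq]
    show S h h - ∑ q : {x // x ∈ d}, S h q.1 * w q = _
    rw [hsum]
  have hgp : ∀ p : {x // x ∈ d}, g p.1 = 0 := by
    intro p
    have h1 : (∑ q : {x // x ∈ d}, S p.1 q.1 * w q) = c p := by
      have := congrFun hAw p
      simpa [Matrix.mulVec, dotProduct, Amat] using this
    show S p.1 h - ∑ q : {x // x ∈ d}, S p.1 q.1 * w q = 0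
    rw [h1]
    exact sub_self _
  set y : N → ℝ := fun a => (if a = h then (1:ℝ) else 0) - extd d w a with hy
  have hy0 : y ≠ 0 := by
    intro h0
    have := congrFun h0 h
    simp [hy, extd, hh] at this
  have hq := hS.dotProduct_mulVec_pos hy0
  have inner : ∀ a, (∑ b : N, S a b * y b) = g a := by
    intro a
    have e1 : ∀ b, S a b * y b = (if b = h then S a b else 0) - S a b * extd d w b := by
      intro b
      rw [hy]
      by_cases hb : b = h <;> simp [hb, mul_sub]
    rw [Finset.sum_congr rfl fun b _ => e1 b, Finset.sum_sub_distrib]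
    simp only [Finset.sum_ite_eq' Finset.univ h (fun b => S a b), Finset.mem_univ, if_true]
    rw [sum_mul_extd d w (fun b => S a b)]
  have key : star y ⬝ᵥ (S *ᵥ y) = partialCov S d h h := by
    simp only [star_trivial, dotProduct, Matrix.mulVec]
    calc ∑ a : N, y a * ∑ b : N, S a b * y b
        = ∑ a : N, y a * g a := by
          exact Finset.sum_congr rfl fun a _ => by rw [inner a]
      _ = ∑ a : N, ((if a = h then g a else 0) - extd d w a * g a) := by
          refine Finset.sum_congr rfl fun a _ => ?_
          rw [hy]
          by_cases ha : a = h <;> simp [ha, sub_mul]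
      _ = g h - ∑ p : {x // x ∈ d}, w p * g p.1 := by
          rw [Finset.sum_sub_distrib, sum_extd_mul d w g]
          simp [Finset.sum_ite_eq' Finset.univ h g]
      _ = partialCov S d h h := by
          rw [hgh]
          simp [fun p => hgp p]
  rw [key] at hq
  exact hq

lemma partialCov_symm (hS : S.PosDef) (d : Finset N) (i k : N) :
    partialCov S d i k = partialCov S d k i := by
  have hApd := Amat_posDef S hS d
  have hAsym : (Amat S d)ᵀ = Amat S d := by
    ext p q
    exact S_symm S hS q.1 p.1
  have hBsym : ∀ p q, (Amat S d)⁻¹ p q = (Amat S d)⁻¹ q p := by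
    intro p q
    have hBT : ((Amat S d)⁻¹)ᵀ = (Amat S d)⁻¹ := by
      rw [Matrix.transpose_nonsing_inv, hAsym]
    have := congrFun (congrFun hBT q) p
    simpa [Matrix.transpose_apply] using this
  rw [partialCov_eq, partialCov_eq, S_symm S hS i k]
  congr 1
  rw [Finset.sum_comm]
  refine Finset.sum_congr rfl fun p _ => Finset.sum_congr rfl fun q _ => ?_
  rw [S_symm S hS i q.1, S_symm S hS p.1 k, hBsym p q]
  ring

lemma partialCov_insert (hS : S.PosDef) (d : Finset N) (h : N) (hh : h ∉ d) (i k : N) :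
    partialCov S (insert h d) i k =
      partialCov S d i k -
        partialCov S d i h * partialCov S d h k / partialCov S d h h := by
  classical
  have hApd := Amat_posDef S hS d
  have hdet : IsUnit (Amat S d).det := isUnit_iff_ne_zero.mpr hApd.det_pos.ne'
  have hspos := partialCov_pos S hS d h hh
  have hs0 : partialCov S d h h ≠ 0 := hspos.ne'
  set s := partialCov S d h h with hsdef
  set B := (Amat S d)⁻¹ with hBdef
  have hAsym : (Amat S d)ᵀ = Amat S d := by
    ext p q
    exact S_symm S hS q.1 p.1
  have hBsym : ∀ p q, B p q = B q p := by
    intro p q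
    have hBT : Bᵀ = B := by
      rw [hBdef, Matrix.transpose_nonsing_inv, hAsym]
    have := congrFun (congrFun hBT q) p
    simpa [Matrix.transpose_apply] using this
  set c : {x // x ∈ d} → ℝ := fun p => S p.1 h with hc
  set w : {x // x ∈ d} → ℝ := B *ᵥ c with hwdef
  have hwq : ∀ p : {x // x ∈ d}, w p = ∑ q : {x // x ∈ d}, B p q * S q.1 h := by
    intro p
    simp [hwdef, Matrix.mulVec, dotProduct, hc]
  have hAw : Amat S d *ᵥ w = c := by
    rw [hwdef, Matrix.mulVec_mulVec, Matrix.mul_nonsing_inv _ hdet, Matrix.one_mulVec]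
  set g : N → ℝ := fun a => S a h - ∑ q : {x // x ∈ d}, S a q.1 * w q with hg
  have hga : ∀ a : N, g a = partialCov S d a h := by
    intro a
    have hsum : (∑ q : {x // x ∈ d}, S a q.1 * w q)
        = ∑ p : {x // x ∈ d}, ∑ q : {x // x ∈ d}, S a p.1 * B p q * S q.1 h := by
      refine Finset.sum_congr rfl fun p _ => ?_
      rw [hwq p, Finset.mul_sum]
      exact Finset.sum_congr rfl fun q _ => by ring
    rw [partialCov_eq]
    show S a h - ∑ q : {x // x ∈ d}, S a q.1 * w q = _
    rw [hsum]
  have hgp : ∀ p : {x // x ∈ d}, g p.1 = 0 := by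
    intro p
    have h1 : (∑ q : {x // x ∈ d}, S p.1 q.1 * w q) = c p := by
      have := congrFun hAw p
      simpa [Matrix.mulVec, dotProduct, Amat] using this
    show S p.1 h - ∑ q : {x // x ∈ d}, S p.1 q.1 * w q = 0
    rw [h1]
    exact sub_self _
  have hwrow : ∀ q : {x // x ∈ d}, (∑ p : {x // x ∈ d}, S h p.1 * B p q) = w q := by
    intro q
    rw [hwq q]
    refine Finset.sum_congr rfl fun p _ => ?_
    rw [hBsym q p, S_symm S hS h p.1]
    ring
  have hABapp : ∀ p q : {x // x ∈ d},
      (∑ t : {x // x ∈ d}, S p.1 t.1 * B t q) = if p = q then 1 else 0 := by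
    intro p q
    have := congrFun (congrFun (Matrix.mul_nonsing_inv _ hdet) p) q
    rw [Matrix.mul_apply] at this
    rw [show (∑ t : {x // x ∈ d}, S p.1 t.1 * B t q)
        = ∑ t : {x // x ∈ d}, Amat S d p t * B t q from rfl, this, Matrix.one_apply]
  -- the explicit inverse over `insert h d`
  set u : {x // x ∈ insert h d} → ℝ :=
    fun z => (if z.1 = h then 1 else 0) - (if hz : z.1 ∈ d then w ⟨z.1, hz⟩ else 0) with hu
  set Bh : Matrix {x // x ∈ insert h d} {x // x ∈ insert h d} ℝ :=
    Matrix.of (fun z x => if hz : z.1 ∈ d then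
      (if hx : x.1 ∈ d then B ⟨z.1, hz⟩ ⟨x.1, hx⟩ else 0) else 0) with hBh
  set F : Matrix {x // x ∈ insert h d} {x // x ∈ insert h d} ℝ :=
    Matrix.of (fun z x => u z * u x / s + Bh z x) with hF
  have hune : ∀ a : N, a ∈ d → a ≠ h := fun a ha e => hh (e ▸ ha)
  have huh : ∀ (z : {x // x ∈ insert h d}), z.1 = h → u z = 1 := by
    intro z hz
    simp [hu, hz, hh]
  have hup : ∀ (z : {x // x ∈ insert h d}) (hz : z.1 ∈ d), u z = -(w ⟨z.1, hz⟩) := by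
    intro z hz
    simp [hu, hz, hune z.1 hz]
  have hBh0 : ∀ (z x : {x // x ∈ insert h d}), z.1 = h → Bh z x = 0 := by
    intro z x hz
    simp [hBh, hz, hh]
  have hBh0' : ∀ (z x : {x // x ∈ insert h d}), x.1 = h → Bh z x = 0 := by
    intro z x hx
    simp [hBh, hx, hh]
  have hBhpq : ∀ (z x : {x // x ∈ insert h d}) (hz : z.1 ∈ d) (hx : x.1 ∈ d),
      Bh z x = B ⟨z.1, hz⟩ ⟨x.1, hx⟩ := by
    intro z x hz hx
    simp [hBh, hz, hx]
  -- row sums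
  have row1 : ∀ a : N, (∑ t : {x // x ∈ insert h d}, S a t.1 * u t) = g a := by
    intro a
    rw [sum_insert_split d h hh (fun t => S a t.1 * u t)]
    rw [huh _ rfl]
    have : ∀ p : {x // x ∈ d},
        S a p.1 * u ⟨p.1, Finset.mem_insert_of_mem p.2⟩ = -(S a p.1 * w p) := by
      intro p
      rw [hup _ p.2]
      ring
    rw [Finset.sum_congr rfl fun p _ => this p, Finset.sum_neg_distrib]
    show S a h * 1 + -(∑ p : {x // x ∈ d}, S a p.1 * w p) = g a
    rw [hg]
    ring
  have col1 : (∑ t : {x // x ∈ insert h d}, u t * S t.1 k) = partialCov S d h k := by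
    rw [sum_insert_split d h hh (fun t => u t * S t.1 k)]
    rw [huh _ rfl]
    have e1 : ∀ p : {x // x ∈ d},
        u ⟨p.1, Finset.mem_insert_of_mem p.2⟩ * S p.1 k = -(w p * S p.1 k) := by
      intro p
      rw [hup _ p.2]
      ring
    rw [Finset.sum_congr rfl fun p _ => e1 p, Finset.sum_neg_distrib]
    have e2 : (∑ p : {x // x ∈ d}, w p * S p.1 k)
        = ∑ p : {x // x ∈ d}, ∑ q : {x // x ∈ d}, S h p.1 * B p q * S q.1 k := by
      rw [Finset.sum_comm]
      refine Finset.sum_congr rfl fun q _ => ?_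
      rw [hwq q, Finset.sum_mul]
      refine Finset.sum_congr rfl fun p _ => ?_
      rw [hBsym q p, S_symm S hS p.1 h]
      ring
    rw [e2, partialCov_eq]
    ring
  have row2 : ∀ (a : N) (x : {x // x ∈ insert h d}),
      (∑ t : {x // x ∈ insert h d}, S a t.1 * Bh t x)
        = if hx : x.1 ∈ d then ∑ p : {x // x ∈ d}, S a p.1 * B p ⟨x.1, hx⟩ else 0 := by
    intro a x
    rw [sum_insert_split d h hh (fun t => S a t.1 * Bh t x)]
    rw [hBh0 _ x rfl, mul_zero, zero_add]
    by_cases hx : x.1 ∈ d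
    · rw [dif_pos hx]
      refine Finset.sum_congr rfl fun p _ => ?_
      rw [hBhpq _ x p.2 hx]
    · rw [dif_neg hx]
      have hxh : x.1 = h := by
        rcases Finset.mem_insert.mp x.2 with h1 | h1
        · exact h1
        · exact absurd h1 hx
      refine Finset.sum_eq_zero fun p _ => ?_
      rw [hBh0' _ x hxh, mul_zero]
  have hEF : Amat S (insert h d) * F = 1 := by
    ext z x
    rw [Matrix.mul_apply]
    have expand : (∑ t : {x // x ∈ insert h d}, Amat S (insert h d) z t * F t x)
        = (∑ t : {x // x ∈ insert h d}, S z.1 t.1 * u t) * (u x / s)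
          + ∑ t : {x // x ∈ insert h d}, S z.1 t.1 * Bh t x := by
      rw [Finset.sum_mul, ← Finset.sum_add_distrib]
      refine Finset.sum_congr rfl fun t _ => ?_
      show S z.1 t.1 * (u t * u x / s + Bh t x) = _
      ring
    rw [expand, row1, row2]
    rcases Finset.mem_insert.mp z.2 with hz | hz
    · rw [hz, hga h]
      rcases Finset.mem_insert.mp x.2 with hx | hx
      · have hzx : z = x := Subtype.ext (hz.trans hx.symm)
        rw [huh x hx, dif_neg (fun hc' => hh (hx ▸ hc')), hzx, Matrix.one_apply_eq]
        field_simp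
        simp [hsdef]
      · have hzx : z ≠ x := fun e => hune x.1 hx ((congrArg Subtype.val e).symm.trans hz)
        rw [hup x hx, dif_pos hx, hwrow, Matrix.one_apply_ne hzx, ← hsdef]
        field_simp
        ring
    · have hgz : partialCov S d z.1 h = 0 := by rw [← hga]; exact hgp ⟨z.1, hz⟩
      rw [hga z.1, hgz, zero_mul, zero_add]
      rcases Finset.mem_insert.mp x.2 with hx | hx
      · have hzx : z ≠ x := fun e => hune z.1 hz ((congrArg Subtype.val e).trans hx)
        rw [dif_neg (fun hc' => hh (hx ▸ hc')), Matrix.one_apply_ne hzx]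
      · rw [dif_pos hx, hABapp ⟨z.1, hz⟩ ⟨x.1, hx⟩, Matrix.one_apply]
        by_cases hzx : z = x
        · subst hzx
          simp
        · have hne : (⟨z.1, hz⟩ : {x // x ∈ d}) ≠ ⟨x.1, hx⟩ := by
            intro e
            exact hzx (Subtype.ext (by simpa using congrArg Subtype.val e))
          rw [if_neg hne, if_neg hzx]
  have hFinv : (Amat S (insert h d))⁻¹ = F := Matrix.inv_eq_right_inv hEF
  -- final computation
  rw [partialCov_eq]
  have hdsum : (∑ p : {x // x ∈ insert h d}, ∑ q : {x // x ∈ insert h d},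
      S i p.1 * (Amat S (insert h d))⁻¹ p q * S q.1 k)
      = partialCov S d i h * partialCov S d h k / s + (S i k - partialCov S d i k) := by
    rw [hFinv]
    have expand : ∀ z : {x // x ∈ insert h d},
        (∑ x : {x // x ∈ insert h d}, S i z.1 * F z x * S x.1 k)
          = (S i z.1 * u z) * (∑ x : {x // x ∈ insert h d}, u x * S x.1 k) / s
            + ∑ x : {x // x ∈ insert h d}, S i z.1 * Bh z x * S x.1 k := by
      intro z
      have e3 : ∀ x : {x // x ∈ insert h d}, S i z.1 * F z x * S x.1 k
          = (S i z.1 * u z) * (u x * S x.1 k) / s + S i z.1 * Bh z x * S x.1 k := by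
        intro x
        show S i z.1 * (u z * u x / s + Bh z x) * S x.1 k = _
        ring
      rw [Finset.sum_congr rfl fun x _ => e3 x, Finset.sum_add_distrib]
      congr 1
      rw [← Finset.sum_div, ← Finset.mul_sum]
    rw [Finset.sum_congr rfl fun z _ => expand z, Finset.sum_add_distrib]
    have part1 : (∑ z : {x // x ∈ insert h d},
        (S i z.1 * u z) * (∑ x : {x // x ∈ insert h d}, u x * S x.1 k) / s)
        = partialCov S d i h * partialCov S d h k / s := by
      rw [← Finset.sum_div, ← Finset.sum_mul, row1, hga i, col1]
    have part2 : (∑ z : {x // x ∈ insert h d},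
        ∑ x : {x // x ∈ insert h d}, S i z.1 * Bh z x * S x.1 k)
        = S i k - partialCov S d i k := by
      rw [sum_insert_split d h hh]
      have e0 : (∑ x : {x // x ∈ insert h d},
          S i (⟨h, Finset.mem_insert_self h d⟩ : {x // x ∈ insert h d}).1 *
            Bh ⟨h, Finset.mem_insert_self h d⟩ x * S x.1 k) = 0 := by
        refine Finset.sum_eq_zero fun x _ => ?_
        rw [hBh0 _ x rfl, mul_zero, zero_mul]
      rw [e0, zero_add]
      have e1 : ∀ p : {x // x ∈ d},
          (∑ x : {x // x ∈ insert h d},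
            S i p.1 * Bh ⟨p.1, Finset.mem_insert_of_mem p.2⟩ x * S x.1 k)
          = ∑ q : {x // x ∈ d}, S i p.1 * B p q * S q.1 k := by
        intro p
        rw [sum_insert_split d h hh]
        rw [hBh0' _ _ rfl, mul_zero, zero_mul, zero_add]
        refine Finset.sum_congr rfl fun q _ => ?_
        rw [hBhpq _ _ p.2 q.2]
      rw [Finset.sum_congr rfl fun p _ => e1 p, partialCov_eq]
      ring
    rw [part1, part2]
  rw [hdsum]
  ring

end Aux

/-- **Singleton transitivity of regular Gaussian distributions.** For a real symmetric
positive definite matrix `Σ` indexed by a finite set `N`, every `d ⊆ N` and distinct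
`i, k, h ∈ N \ d`: if `σ_{ik|d} = 0` and `σ_{ik|{h}∪d} = 0`, then `σ_{ih|d} = 0` or
`σ_{kh|d} = 0`. -/
theorem gaussian_singleton_transitivity {N : Type} [Fintype N] [DecidableEq N]
    (S : Matrix N N ℝ) (hS : S.PosDef) (d : Finset N) (i k h : N)
    (hi : i ∉ d) (hk : k ∉ d) (hh : h ∉ d)
    (hik : i ≠ k) (hih : i ≠ h) (hkh : k ≠ h)
    (h1 : partialCov S d i k = 0) (h2 : partialCov S (insert h d) i k = 0) :
    partialCov S d i h = 0 ∨ partialCov S d k h = 0 := by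
  have hs0 : partialCov S d h h ≠ 0 := (partialCov_pos S hS d h hh).ne'
  have hkey := partialCov_insert S hS d h hh i k
  rw [h2, h1] at hkey
  have hzero : partialCov S d i h * partialCov S d h k = 0 := by
    field_simp at hkey
    linarith
  rcases mul_eq_zero.mp hzero with h' | h'
  · exact Or.inl h'
  · right
    rw [partialCov_symm S hS d k h]
    exact h'
end

section
/- Let d ≥ 2, let B be a real d × d orthogonal matrix (B Bᵀ = I) all of whose entries are nonzero, and let ω > 1 and κ > ω + 1. Consider the 2d × 2d block matrix Σ = [[κ I, B], [Bᵀ, ω I]] indexed by u ∪ v, where u indexes the first d rows/columns and v the last d. Then: (1) Σ is symmetric positive definite; (2) the conditional covariance matrices are scalar, Σ_{uu|v} = (κ − 1/ω) I and Σ_{vv|u} = (ω − 1/κ) I, hence diagonal; (3) consequently, for every partition of v into nonempty disjoint sets a and b, one has Σ_{ab} = 0 and (Σ_{vv|u})_{ab} = 0, while σ_{ij} ≠ 0 for every i ∈ v and j ∈ u. Thus the regular Gaussian family with covariance Σ satisfies a ⫫ b and a ⫫ b | u but neither a ⫫ u nor b ⫫ u, violating set transitivity. -/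
open Matrix

lemma posDef_fromBlocks₁₁' {m n : Type*} [Fintype m] [DecidableEq m] [Fintype n]
    {A : Matrix m m ℝ} (B : Matrix m n ℝ) (D : Matrix n n ℝ)
    (hA : A.PosDef) [Invertible A] (hSchur : (D - Bᴴ * A⁻¹ * B).PosDef) :
    (Matrix.fromBlocks A B Bᴴ D).PosDef := by
  rw [posDef_iff_dotProduct_mulVec]
  constructor
  · rw [Matrix.IsHermitian.fromBlocks₁₁ B D hA.1]; exact hSchur.1
  · intro x hx
    rw [dotProduct_mulVec, ← Sum.elim_comp_inl_inr x,
      Matrix.schur_complement_eq₁₁ B D _ _ hA.1]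
    by_cases hy : x ∘ Sum.inr = 0
    · have hx1 : x ∘ Sum.inl ≠ 0 := by
        intro h
        apply hx
        ext i
        cases i with
        | inl i => exact congrFun h i
        | inr i => exact congrFun hy i
      have h2 : x ∘ Sum.inl + (A⁻¹ * B) *ᵥ (x ∘ Sum.inr) = x ∘ Sum.inl := by
        rw [hy, Matrix.mulVec_zero, add_zero]
      rw [h2, hy]
      have hpos : 0 < star (x ∘ Sum.inl) ᵥ* A ⬝ᵥ (x ∘ Sum.inl) := by
        rw [← dotProduct_mulVec]
        exact hA.dotProduct_mulVec_pos hx1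
      have hz : star (0 : n → ℝ) ᵥ* (D - Bᴴ * A⁻¹ * B) ⬝ᵥ (0 : n → ℝ) = 0 := by
        simp
      rw [hz, add_zero]
      exact hpos
    · have h1 : 0 ≤ star (x ∘ Sum.inl + (A⁻¹ * B) *ᵥ (x ∘ Sum.inr)) ᵥ* A ⬝ᵥ
          (x ∘ Sum.inl + (A⁻¹ * B) *ᵥ (x ∘ Sum.inr)) := by
        rw [← dotProduct_mulVec]
        exact hA.posSemidef.dotProduct_mulVec_nonneg _
      have h2 : 0 < star (x ∘ Sum.inr) ᵥ* (D - Bᴴ * A⁻¹ * B) ⬝ᵥ (x ∘ Sum.inr) := by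
        rw [← dotProduct_mulVec]
        exact hSchur.dotProduct_mulVec_pos hy
      linarith

/-- **A regular Gaussian family violating set transitivity.** Let `d ≥ 2`, let `B` be a
real `d × d` orthogonal matrix (`B * Bᵀ = 1`) all of whose entries are nonzero, and let
`ω > 1`, `κ > ω + 1`. For the `2d × 2d` block matrix `Σ = [[κ I, B], [Bᵀ, ω I]]` indexed
by `u ⊕ v` (with `u = Sum.inl`, `v = Sum.inr`):
(1) `Σ` is (symmetric) positive definite;
(2) the conditional covariance matrices are scalar:
`Σ_{uu|v} = κ I − B (ω I)⁻¹ Bᵀ = (κ − 1/ω) I` and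
`Σ_{vv|u} = ω I − Bᵀ (κ I)⁻¹ B = (ω − 1/κ) I`, hence diagonal;
(3) for every partition of `v` into nonempty disjoint `a`, `b`: all entries `Σ_{ab}` are
zero and all `a × b` entries of `Σ_{vv|u}` are zero (so `a ⫫ b` and `a ⫫ b | u`), while
every entry `σ_{ij}` with `i ∈ v`, `j ∈ u` is nonzero (so neither `a ⫫ u` nor `b ⫫ u`):
set transitivity is violated. -/
theorem gaussian_family_violating_set_transitivity
    (d : ℕ) (hd : 2 ≤ d) (B : Matrix (Fin d) (Fin d) ℝ)
    (hB : B * Bᵀ = 1) (hBne : ∀ i j, B i j ≠ 0)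
    (ω κ : ℝ) (hω : 1 < ω) (hκ : ω + 1 < κ)
    (S : Matrix (Fin d ⊕ Fin d) (Fin d ⊕ Fin d) ℝ)
    (hS : S = Matrix.fromBlocks (κ • 1) B Bᵀ (ω • 1)) :
    S.PosDef ∧
    (κ • (1 : Matrix (Fin d) (Fin d) ℝ) - B * (ω • (1 : Matrix (Fin d) (Fin d) ℝ))⁻¹ * Bᵀ
        = (κ - 1 / ω) • 1) ∧
    (ω • (1 : Matrix (Fin d) (Fin d) ℝ) - Bᵀ * (κ • (1 : Matrix (Fin d) (Fin d) ℝ))⁻¹ * B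
        = (ω - 1 / κ) • 1) ∧
    (∀ a b : Finset (Fin d), a.Nonempty → b.Nonempty → Disjoint a b →
      a ∪ b = Finset.univ →
      (∀ i ∈ a, ∀ j ∈ b, S (Sum.inr i) (Sum.inr j) = 0) ∧
      (∀ i ∈ a, ∀ j ∈ b,
        (ω • (1 : Matrix (Fin d) (Fin d) ℝ) - Bᵀ * (κ • (1 : Matrix (Fin d) (Fin d) ℝ))⁻¹ * B)
          i j = 0)) ∧
    (∀ i j : Fin d, S (Sum.inr i) (Sum.inl j) ≠ 0) := by
  have hω0 : (0 : ℝ) < ω := by linarith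
  have hκ0 : (0 : ℝ) < κ := by linarith
  have hBtB : Bᵀ * B = 1 := mul_eq_one_comm.mp hB
  have hBH : Bᴴ = Bᵀ := by
    ext i j
    simp [conjTranspose_apply]
  have hωinv : (ω • (1 : Matrix (Fin d) (Fin d) ℝ))⁻¹ = ω⁻¹ • 1 := by
    apply Matrix.inv_eq_right_inv
    rw [smul_mul, Matrix.mul_smul, one_mul, smul_smul, mul_inv_cancel₀ hω0.ne', one_smul]
  have hκinv : (κ • (1 : Matrix (Fin d) (Fin d) ℝ))⁻¹ = κ⁻¹ • 1 := by
    apply Matrix.inv_eq_right_inv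
    rw [smul_mul, Matrix.mul_smul, one_mul, smul_smul, mul_inv_cancel₀ hκ0.ne', one_smul]
  have heq2 : κ • (1 : Matrix (Fin d) (Fin d) ℝ)
      - B * (ω • (1 : Matrix (Fin d) (Fin d) ℝ))⁻¹ * Bᵀ = (κ - 1 / ω) • 1 := by
    rw [hωinv, Matrix.mul_smul, mul_one, smul_mul, hB, sub_smul, one_div]
  have heq3 : ω • (1 : Matrix (Fin d) (Fin d) ℝ)
      - Bᵀ * (κ • (1 : Matrix (Fin d) (Fin d) ℝ))⁻¹ * B = (ω - 1 / κ) • 1 := by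
    rw [hκinv, Matrix.mul_smul, mul_one, smul_mul, hBtB, sub_smul, one_div]
  have hsmulPD : ∀ c : ℝ, 0 < c → (c • (1 : Matrix (Fin d) (Fin d) ℝ)).PosDef := by
    intro c hc
    rw [smul_one_eq_diagonal]
    exact Matrix.posDef_diagonal_iff.mpr fun _ => hc
  have hPD : S.PosDef := by
    rw [hS, ← hBH]
    haveI : Invertible (κ • (1 : Matrix (Fin d) (Fin d) ℝ)) :=
      invertibleOfRightInverse _ (κ⁻¹ • 1)
        (by rw [smul_mul, Matrix.mul_smul, one_mul, smul_smul, mul_inv_cancel₀ hκ0.ne', one_smul])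
    apply posDef_fromBlocks₁₁' _ _ (hsmulPD κ hκ0)
    rw [hBH, heq3]
    apply hsmulPD
    have h1 : 1 / κ < 1 := by
      rw [div_lt_one hκ0]; linarith
    linarith
  refine ⟨hPD, heq2, heq3, ?_, ?_⟩
  · intro a b _ _ hab _
    constructor
    · intro i hi j hj
      have hij : i ≠ j := fun h => (Finset.disjoint_left.mp hab hi) (h ▸ hj)
      simp [hS, Matrix.fromBlocks, Matrix.one_apply, hij]
    · intro i hi j hj
      have hij : i ≠ j := fun h => (Finset.disjoint_left.mp hab hi) (h ▸ hj)
      rw [heq3]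
      simp [Matrix.one_apply, hij]
  · intro i j
    simp only [hS, Matrix.fromBlocks, Matrix.of_apply, Sum.elim_inr, Sum.elim_inl,
      Matrix.transpose_apply]
    exact hBne j i
end

section
/- Fix α > 1 and define a probability distribution on {1,2} × {1,2} × {1,2,3} for variables (A, B, C) by π_{ijk} = t_{ijk} / (4(1 + α + α²)), where t_{111} = α², t_{121} = α, t_{211} = α, t_{221} = 1; t_{112} = α, t_{122} = 1, t_{212} = α², t_{222} = α; t_{113} = 1, t_{123} = α², t_{213} = 1, t_{223} = α². Then the π_{ijk} sum to 1, and the distribution satisfies A ⫫ B | C and A ⫫ B, yet A ⋔ C and B ⋔ C. Hence this family of distributions violates singleton transitivity. -/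
/-- The table of unnormalized weights `t_{ijk}` (adapted from Birch, 1963);
indices `0, 1 : Fin 2` stand for levels `i, j = 1, 2` and `0, 1, 2 : Fin 3`
for levels `k = 1, 2, 3`. -/
noncomputable def t8 (α : ℝ) (i j : Fin 2) (k : Fin 3) : ℝ :=
  if k = 0 then
    (if i = 0 then (if j = 0 then α ^ 2 else α) else (if j = 0 then α else 1))
  else if k = 1 then
    (if i = 0 then (if j = 0 then α else 1) else (if j = 0 then α ^ 2 else α))
  else
    (if j = 0 then 1 else α ^ 2)

/-- The joint probabilities `π_{ijk} = t_{ijk} / (4 (1 + α + α²))`. -/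
noncomputable def π8 (α : ℝ) (i j : Fin 2) (k : Fin 3) : ℝ :=
  t8 α i j k / (4 * (1 + α + α ^ 2))

/-- Marginal probability of `A = i`. -/
noncomputable def pA8 (α : ℝ) (i : Fin 2) : ℝ := ∑ j, ∑ k, π8 α i j k
/-- Marginal probability of `B = j`. -/
noncomputable def pB8 (α : ℝ) (j : Fin 2) : ℝ := ∑ i, ∑ k, π8 α i j k
/-- Marginal probability of `C = k`. -/
noncomputable def pC8 (α : ℝ) (k : Fin 3) : ℝ := ∑ i, ∑ j, π8 α i j k
/-- Marginal probability of `A = i, B = j`. -/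
noncomputable def pAB8 (α : ℝ) (i j : Fin 2) : ℝ := ∑ k, π8 α i j k
/-- Marginal probability of `A = i, C = k`. -/
noncomputable def pAC8 (α : ℝ) (i : Fin 2) (k : Fin 3) : ℝ := ∑ j, π8 α i j k
/-- Marginal probability of `B = j, C = k`. -/
noncomputable def pBC8 (α : ℝ) (j : Fin 2) (k : Fin 3) : ℝ := ∑ i, π8 α i j k

set_option maxHeartbeats 2000000 in
/-- **A family of distributions violating singleton transitivity** (Table 1).
For `α > 1`, the probabilities `π_{ijk}` sum to `1` and the distribution satisfies
`A ⫫ B | C` and `A ⫫ B`, yet `A ⋔ C` and `B ⋔ C`; hence singleton transitivity fails. -/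
theorem family_violating_singleton_transitivity (α : ℝ) (hα : 1 < α) :
    ((∑ i, ∑ j, ∑ k, π8 α i j k) = 1) ∧
    (∀ i j k, π8 α i j k * pC8 α k = pAC8 α i k * pBC8 α j k) ∧
    (∀ i j, pAB8 α i j = pA8 α i * pB8 α j) ∧
    ¬ (∀ i k, pAC8 α i k = pA8 α i * pC8 α k) ∧
    ¬ (∀ j k, pBC8 α j k = pB8 α j * pC8 α k) := by

  have hD : (4 * (1 + α + α ^ 2)) ≠ 0 := by nlinarith
  have hA : pA8 α 0 = 1 / 2 := by
    simp only [pA8, π8, Fin.sum_univ_two, Fin.sum_univ_three]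
    simp [t8]; field_simp; ring
  have hB : pB8 α 0 = 1 / 2 := by
    simp only [pB8, π8, Fin.sum_univ_two, Fin.sum_univ_three]
    simp [t8]; field_simp; ring
  have hC : pC8 α 0 = (α + 1) ^ 2 / (4 * (1 + α + α ^ 2)) := by
    simp only [pC8, π8, Fin.sum_univ_two, Fin.sum_univ_three]
    simp [t8]; field_simp
  have hAC : pAC8 α 0 0 = α * (α + 1) / (4 * (1 + α + α ^ 2)) := by
    simp only [pAC8, π8, Fin.sum_univ_two, Fin.sum_univ_three]
    simp [t8]; field_simp
  have hBC : pBC8 α 0 0 = α * (α + 1) / (4 * (1 + α + α ^ 2)) := by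
    simp only [pBC8, π8, Fin.sum_univ_two, Fin.sum_univ_three]
    simp [t8]; field_simp
  refine ⟨?_, ?_, ?_, ?_, ?_⟩
  · simp only [π8, Fin.sum_univ_two, Fin.sum_univ_three]
    simp [t8]
    field_simp
    ring
  · intro i j k
    fin_cases i <;> fin_cases j <;> fin_cases k <;>
      · simp only [π8, pC8, pAC8, pBC8, Fin.sum_univ_two, Fin.sum_univ_three]
        simp [t8]
        field_simp
  · intro i j
    fin_cases i <;> fin_cases j <;>
      · simp only [π8, pAB8, pA8, pB8, Fin.sum_univ_two, Fin.sum_univ_three]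
        simp [t8]
        field_simp
        ring
  · intro h
    have h0 := h 0 0
    rw [hAC, hA, hC] at h0
    field_simp at h0
    nlinarith [sq_nonneg (α - 1), sq_nonneg (α + 1), mul_pos (sub_pos.2 hα) (by nlinarith : (0:ℝ) < α + 1)]
  · intro h
    have h0 := h 0 0
    rw [hBC, hB, hC] at h0
    field_simp at h0
    nlinarith [sq_nonneg (α - 1), sq_nonneg (α + 1), mul_pos (sub_pos.2 hα) (by nlinarith : (0:ℝ) < α + 1)]
end

section
/- Let P be a probability distribution on {0,1} × {0,1} × {0,1} with coordinate variables A, B, C. If P satisfies A ⫫ B | C and A ⫫ C | B but violates A ⫫ (B, C), then B and C are almost surely identical up to relabeling: either P(B = C) = 1 or P(B = 1 − C) = 1. That is, for three binary variables, violation of the intersection property coincides with the degenerate case of two of the variables being identical. -/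
/-- Marginal probability of `A = a`. -/
noncomputable def qA (P : Fin 2 × Fin 2 × Fin 2 → ℝ) (a : Fin 2) : ℝ :=
  ∑ b, ∑ c, P (a, b, c)
/-- Marginal probability of `B = b`. -/
noncomputable def qB (P : Fin 2 × Fin 2 × Fin 2 → ℝ) (b : Fin 2) : ℝ :=
  ∑ a, ∑ c, P (a, b, c)
/-- Marginal probability of `C = c`. -/
noncomputable def qC (P : Fin 2 × Fin 2 × Fin 2 → ℝ) (c : Fin 2) : ℝ :=
  ∑ a, ∑ b, P (a, b, c)
/-- Marginal probability of `A = a, B = b`. -/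
noncomputable def qAB (P : Fin 2 × Fin 2 × Fin 2 → ℝ) (a b : Fin 2) : ℝ :=
  ∑ c, P (a, b, c)
/-- Marginal probability of `A = a, C = c`. -/
noncomputable def qAC (P : Fin 2 × Fin 2 × Fin 2 → ℝ) (a c : Fin 2) : ℝ :=
  ∑ b, P (a, b, c)
/-- Marginal probability of `B = b, C = c`. -/
noncomputable def qBC (P : Fin 2 × Fin 2 × Fin 2 → ℝ) (b c : Fin 2) : ℝ :=
  ∑ a, P (a, b, c)

private lemma fin2_eq_of_ne_ne {x y z : Fin 2} (hx : x ≠ z) (hy : y ≠ z) : x = y := by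
  fin_cases x <;> fin_cases y <;> fin_cases z <;> simp_all

/-- **Violation of the intersection property for three binary variables is degenerate.**
Let `P` be a probability distribution of three binary variables `A`, `B`, `C`
satisfying `A ⫫ B | C` and `A ⫫ C | B` (stated in the equivalent product forms
`P(abc)·P(c) = P(ac)·P(bc)` and `P(abc)·P(b) = P(ab)·P(bc)`) but violating
`A ⫫ (B, C)`. Then `B` and `C` are almost surely identical up to relabeling:
`P(B = C) = 1` or `P(B = 1 − C) = 1`. -/
theorem binary_intersection_violation_degenerate
    (P : Fin 2 × Fin 2 × Fin 2 → ℝ)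
    (hnn : ∀ x, 0 ≤ P x) (hsum : (∑ x, P x) = 1)
    (hABgC : ∀ a b c, P (a, b, c) * qC P c = qAC P a c * qBC P b c)
    (hACgB : ∀ a b c, P (a, b, c) * qB P b = qAB P a b * qBC P b c)
    (hdep : ¬ ∀ a b c, P (a, b, c) = qA P a * qBC P b c) :
    ((∑ a, ∑ b, P (a, b, b)) = 1) ∨ ((∑ a, ∑ b, P (a, b, 1 - b)) = 1) := by
  by_contra hcon
  push_neg at hcon
  obtain ⟨hD, hO⟩ := hcon
  have hq_eq : ∀ b c, qBC P b c = P (0,b,c) + P (1,b,c) := by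
    intro b c; simp [qBC, Fin.sum_univ_two]
  have hq_nn : ∀ b c, (0:ℝ) ≤ qBC P b c := by
    intro b c; rw [hq_eq]; have := hnn (0,b,c); have := hnn (1,b,c); linarith
  have hPle : ∀ a b c, P (a,b,c) ≤ qBC P b c := by
    intro a b c; rw [hq_eq]
    fin_cases a
    · show P (0,b,c) ≤ P (0,b,c) + P (1,b,c)
      have := hnn (1,b,c); linarith
    · show P (1,b,c) ≤ P (0,b,c) + P (1,b,c)
      have := hnn (0,b,c); linarith
  have hqsum : qBC P 0 0 + qBC P 0 1 + qBC P 1 0 + qBC P 1 1 = 1 := by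
    simp only [hq_eq]
    rw [Fintype.sum_prod_type] at hsum
    simp only [Fintype.sum_prod_type, Fin.sum_univ_two] at hsum
    linarith
  have hqC : ∀ c, qC P c = qBC P 0 c + qBC P 1 c := by
    intro c; simp only [qC, hq_eq, Fin.sum_univ_two]; ring
  have hqB : ∀ b, qB P b = qBC P b 0 + qBC P b 1 := by
    intro b; simp only [qB, hq_eq, Fin.sum_univ_two]; ring
  -- translate the negated conclusion
  have hDeq : (∑ a, ∑ b, P (a, b, b)) = qBC P 0 0 + qBC P 1 1 := by
    simp only [hq_eq, Fin.sum_univ_two]; ring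
  have hOeq : (∑ a, ∑ b, P (a, b, 1 - b)) = qBC P 0 1 + qBC P 1 0 := by
    simp only [Fin.sum_univ_two]
    norm_num
    simp only [hq_eq]; ring
  rw [hDeq] at hD
  rw [hOeq] at hO
  have hOpos : 0 < qBC P 0 1 + qBC P 1 0 := by
    rcases (lt_or_eq_of_le (by have := hq_nn 0 1; have := hq_nn 1 0; linarith :
      (0:ℝ) ≤ qBC P 0 1 + qBC P 1 0)) with h | h
    · exact h
    · exfalso; exact hD (by linarith)
  have hDpos : 0 < qBC P 0 0 + qBC P 1 1 := by
    rcases (lt_or_eq_of_le (by have := hq_nn 0 0; have := hq_nn 1 1; linarith :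
      (0:ℝ) ≤ qBC P 0 0 + qBC P 1 1)) with h | h
    · exact h
    · exfalso; exact hO (by linarith)
  obtain ⟨d, hdd⟩ : ∃ d, 0 < qBC P d d := by
    by_contra h; push_neg at h
    have h0 := h 0; have h1 := h 1
    have := hq_nn 0 0; have := hq_nn 1 1; linarith
  obtain ⟨u, v, huv, huvp⟩ : ∃ u v, u ≠ v ∧ 0 < qBC P u v := by
    by_contra h; push_neg at h
    have h0 := h 0 1 (by decide); have h1 := h 1 0 (by decide)
    have := hq_nn 0 1; have := hq_nn 1 0; linarith
  -- column lemma: same c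
  have col : ∀ a b b' c, 0 < qBC P b c → 0 < qBC P b' c →
      P (a,b,c) * qBC P b' c = P (a,b',c) * qBC P b c := by
    intro a b b' c h1 h2
    have hc : 0 < qC P c := by
      have hble : qBC P b c ≤ qBC P 0 c + qBC P 1 c := by
        fin_cases b
        · show qBC P 0 c ≤ _; have := hq_nn 1 c; linarith
        · show qBC P 1 c ≤ _; have := hq_nn 0 c; linarith
      rw [hqC]; linarith
    have e : (P (a,b,c) * qBC P b' c) * qC P c = (P (a,b',c) * qBC P b c) * qC P c := by
      linear_combination qBC P b' c * (hABgC a b c) - qBC P b c * (hABgC a b' c)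
    exact mul_right_cancel₀ hc.ne' e
  -- row lemma: same b
  have row : ∀ a b c c', 0 < qBC P b c → 0 < qBC P b c' →
      P (a,b,c) * qBC P b c' = P (a,b,c') * qBC P b c := by
    intro a b c c' h1 h2
    have hb : 0 < qB P b := by
      have hble : qBC P b c ≤ qBC P b 0 + qBC P b 1 := by
        fin_cases c
        · show qBC P b 0 ≤ _; have := hq_nn b 1; linarith
        · show qBC P b 1 ≤ _; have := hq_nn b 0; linarith
      rw [hqB]; linarith
    have e : (P (a,b,c) * qBC P b c') * qB P b = (P (a,b,c') * qBC P b c) * qB P b := by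
      linear_combination qBC P b c' * (hACgB a b c) - qBC P b c * (hACgB a b c')
    exact mul_right_cancel₀ hb.ne' e
  -- main claim
  have claim : ∀ a b c, P (a,b,c) * qBC P d d = P (a,d,d) * qBC P b c := by
    intro a b c
    rcases (lt_or_eq_of_le (hq_nn b c)) with hpos | h0
    · by_cases hb : b = d
      · subst hb; exact row a b c b hpos hdd
      · by_cases hc : c = d
        · subst hc; exact col a b c c hpos hdd
        · by_cases hu : u = d
          · have hv : v = c := fin2_eq_of_ne_ne (hu ▸ huv.symm) hc
            rw [hu, hv] at huvp
            have e1 := row a d d c hdd huvp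
            have e2 := col a b d c hpos huvp
            have e3 : P (a,b,c) * qBC P d d * qBC P d c
                = P (a,d,d) * qBC P b c * qBC P d c := by
              linear_combination qBC P d d * e2 - qBC P b c * e1
            exact mul_right_cancel₀ huvp.ne' e3
          · have hu' : u = b := fin2_eq_of_ne_ne hu hb
            have hv : v = d := fin2_eq_of_ne_ne (hu' ▸ huv.symm) (Ne.symm hb)
            rw [hu', hv] at huvp
            have e1 := col a b d d huvp hdd
            have e2 := row a b c d hpos huvp
            have e3 : P (a,b,c) * qBC P d d * qBC P b d
                = P (a,d,d) * qBC P b c * qBC P b d := by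
              linear_combination qBC P d d * e2 + qBC P b c * e1
            exact mul_right_cancel₀ huvp.ne' e3
    · have hP0 : P (a,b,c) = 0 := le_antisymm (h0 ▸ hPle a b c) (hnn (a,b,c))
      rw [hP0, ← h0]; ring
  -- marginalize the claim
  have hA : ∀ a, qA P a * qBC P d d = P (a,d,d) := by
    intro a
    have hqA : qA P a = P (a,0,0) + P (a,0,1) + P (a,1,0) + P (a,1,1) := by
      simp only [qA, Fin.sum_univ_two]; ring
    rw [hqA]
    linear_combination claim a 0 0 + claim a 0 1 + claim a 1 0 + claim a 1 1
      + P (a,d,d) * hqsum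
  apply hdep
  intro a b c
  have e : P (a,b,c) * qBC P d d = (qA P a * qBC P b c) * qBC P d d := by
    linear_combination claim a b c - qBC P b c * (hA a)
  exact mul_right_cancel₀ hdd.ne' e
end

section
/- Let N be a finite set, F a binary edge matrix on N, and a ⊆ N. Then: (1) partial closure never removes edges and cannot be undone: F_{jk} = 1 implies (zer_a F)_{jk} = 1 for all j, k, and zer_a (zer_a F) = zer_a F; (2) partial closure is exchangeable with selecting a submatrix: for any s with a ⊆ s ⊆ N, the restriction of zer_a F to s × s equals zer_a applied to the restriction of F to s × s. -/
/-- The single-node partial closure operator: `(zer_i F)_{jk} = 1` iff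
`F_{jk} = 1` or (`F_{ji} = 1` and `F_{ik} = 1`). -/
def zerStep {N : Type} (i : N) (F : N → N → Bool) : N → N → Bool :=
  fun j k => F j k || (F j i && F i k)

/-- Partial closure with respect to the nodes of a list, applied in order. -/
def zerList {N : Type} (l : List N) (F : N → N → Bool) : N → N → Bool :=
  l.foldr zerStep F

/-- Partial closure `zer_a F` with respect to a finite set `a` of nodes
(applying `zer_i` for the nodes `i ∈ a` in some enumeration). -/
noncomputable def zerFinset {N : Type} (a : Finset N) (F : N → N → Bool) : N → N → Bool :=
  zerList a.toList F

lemma zerStep_comm {N : Type} (i j : N) (F : N → N → Bool) :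
    zerStep i (zerStep j F) = zerStep j (zerStep i F) := by
  funext x y
  simp only [zerStep]
  cases F x y <;> cases F x j <;> cases F j y <;> cases F x i <;> cases F i y <;>
    cases F j i <;> cases F i j <;> simp

lemma zerStep_idem {N : Type} (i : N) (F : N → N → Bool) :
    zerStep i (zerStep i F) = zerStep i F := by
  funext x y
  simp only [zerStep]
  cases F x y <;> cases F x i <;> cases F i y <;> cases F i i <;> simp

lemma zerList_cons {N : Type} (i : N) (l : List N) (F : N → N → Bool) :
    zerList (i :: l) F = zerStep i (zerList l F) := rfl

lemma zerList_zerStep {N : Type} (l : List N) (i : N) (F : N → N → Bool) :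
    zerList l (zerStep i F) = zerStep i (zerList l F) := by
  induction l with
  | nil => rfl
  | cons b l ih => rw [zerList_cons, zerList_cons, ih, zerStep_comm]

lemma zerList_mono {N : Type} (l : List N) (F : N → N → Bool) (j k : N)
    (h : F j k = true) : zerList l F j k = true := by
  induction l with
  | nil => exact h
  | cons b l ih => rw [zerList_cons]; simp [zerStep, ih]

lemma zerList_idem {N : Type} (l : List N) (F : N → N → Bool) :
    zerList l (zerList l F) = zerList l F := by
  induction l with
  | nil => rfl
  | cons b l ih =>
    rw [zerList_cons, zerList_cons, zerList_zerStep, zerStep_idem, ih]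

lemma zerList_perm {N : Type} {l₁ l₂ : List N} (h : l₁.Perm l₂) (F : N → N → Bool) :
    zerList l₁ F = zerList l₂ F := by
  induction h with
  | nil => rfl
  | cons x _ ih => rw [zerList_cons, zerList_cons, ih]
  | swap x y l => rw [zerList_cons, zerList_cons, zerList_cons, zerList_cons, zerStep_comm]
  | trans _ _ ih1 ih2 => rw [ih1, ih2]

lemma zerList_restrict {N : Type} (s : Finset N) (l : List {x // x ∈ s})
    (F : N → N → Bool) :
    (fun (j k : {x // x ∈ s}) => zerList (l.map Subtype.val) F j.1 k.1) =
      zerList l (fun j k => F j.1 k.1) := by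
  induction l with
  | nil => rfl
  | cons b l ih =>
    rw [List.map_cons, zerList_cons, zerList_cons, ← ih]
    rfl

/-- **Basic properties of partial closure** (Wermuth, Wiedenbeck and Cox, 2006).
For a binary edge matrix `F` on a finite set `N` (ones on the diagonal) and `a ⊆ N`:
(1) partial closure never removes edges, and cannot be undone:
`F_{jk} = 1` implies `(zer_a F)_{jk} = 1`, and `zer_a (zer_a F) = zer_a F`;
(2) partial closure is exchangeable with selecting a submatrix: for `a ⊆ s ⊆ N`,
the restriction of `zer_a F` to `s × s` equals `zer_a` applied to the restriction
of `F` to `s × s`. -/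
theorem zer_basic_properties {N : Type} [Fintype N] [DecidableEq N]
    (F : N → N → Bool) (hF : ∀ i, F i i = true) (a : Finset N) :
    (∀ j k, F j k = true → zerFinset a F j k = true) ∧
    (zerFinset a (zerFinset a F) = zerFinset a F) ∧
    (∀ s : Finset N, a ⊆ s →
      (fun (j k : {x // x ∈ s}) => zerFinset a F j.1 k.1) =
        zerFinset (s.attach.filter (fun x => x.1 ∈ a))
          (fun (j k : {x // x ∈ s}) => F j.1 k.1)) := by
  refine ⟨fun j k h => zerList_mono _ F j k h, zerList_idem _ F, fun s hs => ?_⟩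
  set b := s.attach.filter (fun x => x.1 ∈ a) with hb
  have hperm : a.toList.Perm (b.toList.map Subtype.val) := by
    rw [List.perm_ext_iff_of_nodup a.nodup_toList
      ((b.nodup_toList).map Subtype.val_injective)]
    intro x
    simp only [List.mem_map, Finset.mem_toList, hb, Finset.mem_filter, Finset.mem_attach,
      true_and]
    constructor
    · intro hx
      exact ⟨⟨x, hs hx⟩, hx, rfl⟩
    · rintro ⟨⟨y, hy⟩, hya, rfl⟩
      exact hya
  show (fun (j k : {x // x ∈ s}) => zerList a.toList F j.1 k.1) = _
  rw [zerList_perm hperm F]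
  exact zerList_restrict s b.toList F
end

section
/- Let N be a finite set, F a binary edge matrix on N, and a ⊆ N. For all i, k in N, the entry (zer_a F)_{ik} equals 1 if and only if there exist m ≥ 1 and nodes i = j_0, j_1, ..., j_m = k with all inner nodes j_1, ..., j_{m−1} belonging to a and F_{j_{t−1} j_t} = 1 for every t = 1, ..., m. That is, partial closure with respect to a closes exactly the a-line paths of the graph represented by F. -/
lemma zerList_iff {N : Type} (F : N → N → Bool)
    (l : List N) (j k : N) : zerList l F j k = true ↔
      ∃ p : List N, (∀ x ∈ p, x ∈ l) ∧
        List.Chain (fun x y => F x y = true) j (p ++ [k]) := by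
  induction l generalizing j k with
  | nil =>
    constructor
    · intro h
      exact ⟨[], by simp, List.chain_cons.mpr ⟨h, List.isChain_singleton _⟩⟩
    · rintro ⟨p, hp, hc⟩
      have hpnil : p = [] := List.eq_nil_iff_forall_not_mem.mpr (by simpa using hp)
      subst hpnil
      exact (List.chain_cons.mp hc).1
  | cons i l IH =>
    have edge : ∀ j k, F j k = true → zerList l F j k = true := by
      intro j k h
      exact (IH j k).mpr ⟨[], by simp, List.chain_cons.mpr ⟨h, List.isChain_singleton _⟩⟩
    have prepend : ∀ x j k, x ∈ l → F j x = true → zerList l F x k = true →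
        zerList l F j k = true := by
      intro x j k hx hjx hxk
      obtain ⟨p, hp, hc⟩ := (IH x k).mp hxk
      refine (IH j k).mpr ⟨x :: p, ?_, ?_⟩
      · intro y hy
        rcases List.mem_cons.mp hy with rfl | h
        · exact hx
        · exact hp _ h
      · exact List.chain_cons.mpr ⟨hjx, hc⟩
    have hstep : zerList (i :: l) F j k = zerStep i (zerList l F) j k := rfl
    rw [hstep]
    constructor
    · intro h
      simp only [zerStep, Bool.or_eq_true, Bool.and_eq_true] at h
      rcases h with h | ⟨h1, h2⟩
      · obtain ⟨p, hp, hc⟩ := (IH j k).mp h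
        exact ⟨p, fun x hx => List.mem_cons.mpr (Or.inr (hp x hx)), hc⟩
      · obtain ⟨p1, hp1, hc1⟩ := (IH j i).mp h1
        obtain ⟨p2, hp2, hc2⟩ := (IH i k).mp h2
        refine ⟨p1 ++ i :: p2, ?_, ?_⟩
        · intro x hx
          rcases List.mem_append.mp hx with h | h
          · exact List.mem_cons.mpr (Or.inr (hp1 x h))
          · rcases List.mem_cons.mp h with rfl | h
            · exact List.mem_cons_self
            · exact List.mem_cons.mpr (Or.inr (hp2 x h))
        · have : (p1 ++ i :: p2) ++ [k] = p1 ++ i :: (p2 ++ [k]) := by simp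
          rw [this]
          exact List.isChain_cons_split.mpr ⟨hc1, hc2⟩
    · rintro ⟨p, hp, hc⟩
      -- auxiliary induction on p
      clear hstep
      induction p generalizing j with
      | nil =>
        have hjk : F j k = true := (List.chain_cons.mp hc).1
        simp [zerStep, edge j k hjk]
      | cons x p ihp =>
        have hjx : F j x = true := (List.chain_cons.mp hc).1
        have hc' : List.Chain (fun x y => F x y = true) x (p ++ [k]) :=
          (List.chain_cons.mp hc).2
        have hp' : ∀ y ∈ p, y ∈ i :: l := fun y hy => hp y (List.mem_cons.mpr (Or.inr hy))
        have hrec := ihp x hp' hc'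
        simp only [zerStep, Bool.or_eq_true, Bool.and_eq_true] at hrec ⊢
        rcases List.mem_cons.mp (hp x (List.mem_cons_self)) with rfl | hxl
        · -- x = i
          have hji : zerList l F j x = true := edge j x hjx
          rcases hrec with h | ⟨_, h2⟩
          · exact Or.inr ⟨hji, h⟩
          · exact Or.inr ⟨hji, h2⟩
        · rcases hrec with h | ⟨h1, h2⟩
          · exact Or.inl (prepend x j k hxl hjx h)
          · exact Or.inr ⟨prepend x j i hxl hjx h1, h2⟩

/-- **Partial closure closes exactly the `a`-line paths.** For a binary edge matrix `F`
on a finite set `N` (ones on the diagonal), `a ⊆ N` and `i, k ∈ N`: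
`(zer_a F)_{ik} = 1` iff there are `m ≥ 1` and nodes `i = j₀, j₁, ..., jₘ = k` with all
inner nodes `j₁, ..., j_{m−1}` in `a` and `F_{j_{t−1} j_t} = 1` for `t = 1, ..., m`
(here the inner nodes are the entries of the list `l`). -/
theorem zer_closes_a_line_paths {N : Type} [Fintype N] [DecidableEq N]
    (F : N → N → Bool) (hF : ∀ i, F i i = true) (a : Finset N) (i k : N) :
    zerFinset a F i k = true ↔
      ∃ l : List N, (∀ x ∈ l, x ∈ a) ∧
        List.Chain (fun x y => F x y = true) i (l ++ [k]) := by
  have := zerList_iff F a.toList i k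
  simpa [zerFinset, Finset.mem_toList] using this
end

section
/- Let the finite index set N be partitioned into disjoint sets a and b. Let H be an N × N real matrix that is block upper-triangular with respect to (a, b) (H_{ba} = 0) with H_{aa} and H_{bb} invertible, and let W be an N × N real symmetric positive definite matrix. Define Σ := H^{-1} W H^{-T}, and set K_{aa} := H_{aa}^{-1}, K_{ab} := −H_{aa}^{-1} H_{ab}, Q_{aa} := W_{aa} − W_{ab} W_{bb}^{-1} W_{ba}, Q_{ab} := W_{ab} W_{bb}^{-1}, Q_{bb} := W_{bb}^{-1}. Then the following three matrix identities hold: (1) Σ_{ab} (Σ_{bb})^{-1} = K_{ab} + K_{aa} Q_{ab} H_{bb}; (2) Σ_{aa} − Σ_{ab} (Σ_{bb})^{-1} Σ_{ba} = K_{aa} Q_{aa} K_{aa}^{T}; (3) (Σ_{bb})^{-1} = H_{bb}^{T} Q_{bb} H_{bb}. (In the Gaussian interpretation with H Y = η and cov(η) = W, these give respectively the regression coefficient matrix Π_{a|b} of Y_a on Y_b, the conditional covariance matrix Σ_{aa|b}, and the marginal concentration matrix Σ^{bb.a} of Y_b.) -/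
open Matrix

lemma posdef_toBlocks₂₂ {a b : Type} [Fintype a] [Fintype b]
    {W : Matrix (a ⊕ b) (a ⊕ b) ℝ} (hW : W.PosDef) : W.toBlocks₂₂.PosDef := by
  rw [posDef_iff_dotProduct_mulVec]
  constructor
  · ext i j
    simpa [toBlocks₂₂] using congrFun (congrFun hW.1 (Sum.inr i)) (Sum.inr j)
  · intro x hx
    have hy : (Sum.elim 0 x : a ⊕ b → ℝ) ≠ 0 := by
      intro h
      apply hx
      ext j
      simpa using congrFun h (Sum.inr j)
    have := hW.dotProduct_mulVec_pos hy
    simpa [dotProduct, mulVec, Fintype.sum_sum_type, toBlocks₂₂] using this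

/-- **Orthogonalised linear equations** (Wermuth and Cox, 2004, Thm 1).
Let the index set be partitioned into `a ⊕ b`, let `H` be block upper-triangular
(`H_{ba} = 0`) with invertible diagonal blocks, `W` symmetric positive definite, and
`Σ := H⁻¹ W H⁻ᵀ`. With `K_{aa} := H_{aa}⁻¹`, `K_{ab} := −H_{aa}⁻¹ H_{ab}`,
`Q_{aa} := W_{aa} − W_{ab} W_{bb}⁻¹ W_{ba}`, `Q_{ab} := W_{ab} W_{bb}⁻¹`,
`Q_{bb} := W_{bb}⁻¹`, the following identities hold:
(1) the regression coefficient matrix `Π_{a|b} = Σ_{ab} Σ_{bb}⁻¹ = K_{ab} + K_{aa} Q_{ab} H_{bb}`;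
(2) the conditional covariance matrix
`Σ_{aa|b} = Σ_{aa} − Σ_{ab} Σ_{bb}⁻¹ Σ_{ba} = K_{aa} Q_{aa} K_{aa}ᵀ`;
(3) the marginal concentration matrix `Σ^{bb.a} = Σ_{bb}⁻¹ = H_{bb}ᵀ Q_{bb} H_{bb}`. -/
theorem orthogonalised_linear_equations
    {a b : Type} [Fintype a] [Fintype b] [DecidableEq a] [DecidableEq b]
    (H W S : Matrix (a ⊕ b) (a ⊕ b) ℝ)
    (hH21 : H.toBlocks₂₁ = 0)
    (h11 : IsUnit (H.toBlocks₁₁).det)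
    (h22 : IsUnit (H.toBlocks₂₂).det)
    (hW : W.PosDef)
    (hS : S = H⁻¹ * W * (H⁻¹)ᵀ)
    (Kaa : Matrix a a ℝ) (Kab : Matrix a b ℝ)
    (Qaa : Matrix a a ℝ) (Qab : Matrix a b ℝ) (Qbb : Matrix b b ℝ)
    (hKaa : Kaa = (H.toBlocks₁₁)⁻¹)
    (hKab : Kab = -((H.toBlocks₁₁)⁻¹ * H.toBlocks₁₂))
    (hQaa : Qaa = W.toBlocks₁₁ - W.toBlocks₁₂ * (W.toBlocks₂₂)⁻¹ * W.toBlocks₂₁)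
    (hQab : Qab = W.toBlocks₁₂ * (W.toBlocks₂₂)⁻¹)
    (hQbb : Qbb = (W.toBlocks₂₂)⁻¹) :
    S.toBlocks₁₂ * (S.toBlocks₂₂)⁻¹ = Kab + Kaa * Qab * H.toBlocks₂₂ ∧
    S.toBlocks₁₁ - S.toBlocks₁₂ * (S.toBlocks₂₂)⁻¹ * S.toBlocks₂₁ = Kaa * Qaa * Kaaᵀ ∧
    (S.toBlocks₂₂)⁻¹ = (H.toBlocks₂₂)ᵀ * Qbb * H.toBlocks₂₂ := by
  set A := H.toBlocks₁₁ with hA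
  set B := H.toBlocks₁₂ with hB
  set D := H.toBlocks₂₂ with hD
  set P := W.toBlocks₁₁ with hP
  set Q := W.toBlocks₁₂ with hQ
  set R := W.toBlocks₂₁ with hR
  set Sd := W.toBlocks₂₂ with hSd
  have hSdpd : Sd.PosDef := posdef_toBlocks₂₂ hW
  have hSdu : IsUnit Sd.det := hSdpd.det_pos.ne'.isUnit
  have hDTu : IsUnit Dᵀ.det := by rwa [det_transpose]
  have hHblocks : H = fromBlocks A B 0 D := by
    rw [← hH21]; exact (fromBlocks_toBlocks H).symm
  have hWblocks : W = fromBlocks P Q R Sd := (fromBlocks_toBlocks W).symm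
  have hHinv : H⁻¹ = fromBlocks A⁻¹ (-(A⁻¹ * B * D⁻¹)) 0 D⁻¹ := by
    rw [hHblocks]
    exact inv_fromBlocks_zero₂₁_of_isUnit_iff A B D
      (by simp [← isUnit_iff_isUnit_det, h11, h22,
        (isUnit_iff_isUnit_det A).mpr h11, (isUnit_iff_isUnit_det D).mpr h22])
  set E := A⁻¹ with hE
  set F := -(A⁻¹ * B * D⁻¹) with hF
  have hSblocks : S = fromBlocks
      ((E * P + F * R) * Eᵀ + (E * Q + F * Sd) * Fᵀ)
      ((E * Q + F * Sd) * (Dᵀ)⁻¹)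
      ((D⁻¹ * R) * Eᵀ + (D⁻¹ * Sd) * Fᵀ)
      ((D⁻¹ * Sd) * (Dᵀ)⁻¹) := by
    rw [hS, hHinv, hWblocks, fromBlocks_transpose, fromBlocks_multiply, fromBlocks_multiply]
    simp [transpose_nonsing_inv, Matrix.add_mul]
  have hS11 : S.toBlocks₁₁ = (E * P + F * R) * Eᵀ + (E * Q + F * Sd) * Fᵀ := by
    rw [hSblocks]; rfl
  have hS12 : S.toBlocks₁₂ = (E * Q + F * Sd) * (Dᵀ)⁻¹ := by rw [hSblocks]; rfl
  have hS21 : S.toBlocks₂₁ = (D⁻¹ * R) * Eᵀ + (D⁻¹ * Sd) * Fᵀ := by rw [hSblocks]; rfl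
  have hS22 : S.toBlocks₂₂ = (D⁻¹ * Sd) * (Dᵀ)⁻¹ := by rw [hSblocks]; rfl
  have hS22inv : (S.toBlocks₂₂)⁻¹ = Dᵀ * Sd⁻¹ * D := by
    rw [hS22, Matrix.mul_inv_rev, Matrix.mul_inv_rev,
      nonsing_inv_nonsing_inv _ hDTu, nonsing_inv_nonsing_inv _ h22, Matrix.mul_assoc]
  have hPi : S.toBlocks₁₂ * (S.toBlocks₂₂)⁻¹ = Kab + Kaa * Qab * D := by
    rw [hS12, hS22inv, hKab, hKaa, hQab]
    simp only [Matrix.add_mul, Matrix.mul_add, Matrix.neg_mul, Matrix.mul_neg,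
      Matrix.mul_assoc, nonsing_inv_mul_cancel_left _ _ hDTu,
      mul_nonsing_inv_cancel_left _ _ hSdu, nonsing_inv_mul_cancel_left _ _ h22,
      mul_nonsing_inv _ h22, nonsing_inv_mul _ h22, Matrix.mul_one, Matrix.one_mul, hF, ← hE]
    abel
  refine ⟨hPi, ?_, by rw [hS22inv, hQbb]⟩
  rw [hPi, hS11, hS21, hKaa, hKab, hQaa, hQab]
  simp only [Matrix.add_mul, Matrix.mul_add, Matrix.sub_mul, Matrix.mul_sub,
    Matrix.neg_mul, Matrix.mul_neg, Matrix.mul_assoc,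
    mul_nonsing_inv_cancel_left _ _ hSdu, nonsing_inv_mul_cancel_left _ _ hSdu,
    mul_nonsing_inv_cancel_left _ _ h22, nonsing_inv_mul_cancel_left _ _ h22,
    mul_nonsing_inv _ h22, nonsing_inv_mul _ h22, Matrix.mul_one, Matrix.one_mul, hF, ← hE]
  abel
end
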